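/- arXiv:2308.16366 — 6 statements merged into one kernel-verified Lean document; each statement's English description precedes it below -/
import Mathlib

section
/- For every integer m ≥ 1, the group presented by generators r, f, z and relations r^m = z, z^2 = 1, f^2 = 1, (r f)^2 = 1, z r = r z, z f = f z is isomorphic to the dihedral group of order 4m (Mathlib's DihedralGroup (2*m)). In other words, the positive double cover of the dihedral group of order 2m has the structure of a dihedral group of order 4m. -/
namespace Stmt0

/-- Generators of the presented group: a rotation `r`, a flip `f`
and the central element `z`. -/
inductive Gen | r | f | z

open FreeGroup in
/-- The relations `r^m = z`, `z^2 = 1`, `f^2 = 1`, `(r f)^2 = 1`,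
`z r = r z`, `z f = f z`. -/
def rels (m : ℕ) : Set (FreeGroup Gen) :=
  { of Gen.r ^ m * (of Gen.z)⁻¹,
    of Gen.z ^ 2,
    of Gen.f ^ 2,
    (of Gen.r * of Gen.f) ^ 2,
    of Gen.z * of Gen.r * (of Gen.r * of Gen.z)⁻¹,
    of Gen.z * of Gen.f * (of Gen.f * of Gen.z)⁻¹ }

section Aux

variable {m : ℕ}

lemma mem1 : FreeGroup.of Gen.r ^ m * (FreeGroup.of Gen.z)⁻¹ ∈ rels m :=
  Set.mem_insert _ _
lemma mem2 : FreeGroup.of Gen.z ^ 2 ∈ rels m :=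
  Set.mem_insert_of_mem _ (Set.mem_insert _ _)
lemma mem3 : FreeGroup.of Gen.f ^ 2 ∈ rels m :=
  Set.mem_insert_of_mem _ (Set.mem_insert_of_mem _ (Set.mem_insert _ _))
lemma mem4 : (FreeGroup.of Gen.r * FreeGroup.of Gen.f) ^ 2 ∈ rels m :=
  Set.mem_insert_of_mem _ (Set.mem_insert_of_mem _ (Set.mem_insert_of_mem _
    (Set.mem_insert _ _)))
lemma mem5 : FreeGroup.of Gen.z * FreeGroup.of Gen.r *
    (FreeGroup.of Gen.r * FreeGroup.of Gen.z)⁻¹ ∈ rels m :=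
  Set.mem_insert_of_mem _ (Set.mem_insert_of_mem _ (Set.mem_insert_of_mem _
    (Set.mem_insert_of_mem _ (Set.mem_insert _ _))))
lemma mem6 : FreeGroup.of Gen.z * FreeGroup.of Gen.f *
    (FreeGroup.of Gen.f * FreeGroup.of Gen.z)⁻¹ ∈ rels m :=
  Set.mem_insert_of_mem _ (Set.mem_insert_of_mem _ (Set.mem_insert_of_mem _
    (Set.mem_insert_of_mem _ (Set.mem_insert_of_mem _ rfl))))

lemma mk_rels_eq_one {w : FreeGroup Gen} (h : w ∈ rels m) :
    PresentedGroup.mk (rels m) w = 1 := by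
  change (QuotientGroup.mk w : PresentedGroup (rels m)) = 1
  rw [QuotientGroup.eq_one_iff]
  exact Subgroup.subset_normalClosure h

local notation "R" => (PresentedGroup.of (rels := rels m) Gen.r)
local notation "F" => (PresentedGroup.of (rels := rels m) Gen.f)
local notation "Z" => (PresentedGroup.of (rels := rels m) Gen.z)

lemma rel1 : R ^ m = Z := by
  have h := mk_rels_eq_one (m := m) mem1
  rw [map_mul, map_pow, map_inv, mul_inv_eq_one] at h
  exact h

lemma rel2 : Z * Z = 1 := by
  have h := mk_rels_eq_one (m := m) mem2
  rw [map_pow, pow_two] at h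
  exact h

lemma rel3 : F * F = 1 := by
  have h := mk_rels_eq_one (m := m) mem3
  rw [map_pow, pow_two] at h
  exact h

lemma rel4 : (R * F) * (R * F) = 1 := by
  have h := mk_rels_eq_one (m := m) mem4
  rw [map_pow, pow_two, map_mul] at h
  exact h

lemma relR2m : R ^ (2 * m) = 1 := by
  rw [two_mul, pow_add, rel1, rel2]

lemma FR : F * R = R⁻¹ * F := by
  have hinv : F⁻¹ = F := inv_eq_of_mul_eq_one_right rel3
  have h4 : (R * F)⁻¹ = R * F := inv_eq_of_mul_eq_one_right rel4
  have key : F * R⁻¹ = R * F := by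
    rw [← h4, mul_inv_rev, hinv]
  have h2 := congrArg (fun x => R⁻¹ * x * R) key
  simpa [mul_assoc, eq_comm] using h2

/-- the rotation part, as a function of `ZMod (2*m)`. -/
def rho (i : ZMod (2 * m)) : PresentedGroup (rels m) := R ^ i.val

lemma rho_add (hm : 1 ≤ m) (i j : ZMod (2 * m)) :
    rho (i + j) = rho i * rho j := by
  have : NeZero (2 * m) := ⟨by omega⟩
  unfold rho
  rw [ZMod.val_add, ← pow_eq_pow_mod _ relR2m, pow_add]

lemma rho_zero : rho (m := m) 0 = 1 := by
  simp [rho]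

lemma rho_neg (hm : 1 ≤ m) (i : ZMod (2 * m)) : rho (-i) = (rho i)⁻¹ := by
  have h : rho (m := m) (-i) * rho i = 1 := by
    rw [← rho_add hm, neg_add_cancel, rho_zero]
  exact eq_inv_of_mul_eq_one_left h

lemma F_rho (hm : 1 ≤ m) (i : ZMod (2 * m)) : F * rho i = rho (-i) * F := by
  rw [rho_neg hm]
  show F * R ^ i.val = (R ^ i.val)⁻¹ * F
  induction i.val with
  | zero => simp
  | succ k ih =>
      calc F * R ^ (k + 1) = (F * R ^ k) * R := by rw [pow_succ, mul_assoc]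
      _ = (R ^ k)⁻¹ * (F * R) := by rw [ih, mul_assoc]
      _ = (R ^ k)⁻¹ * (R⁻¹ * F) := by rw [FR]
      _ = (R ^ (k + 1))⁻¹ * F := by
            rw [← mul_assoc, ← mul_inv_rev, ← pow_succ']

lemma rho_F (hm : 1 ≤ m) (i : ZMod (2 * m)) : rho i * F = F * rho (-i) := by
  rw [F_rho hm, neg_neg]

/-- the inverse map. -/
def psiFun : DihedralGroup (2 * m) → PresentedGroup (rels m)
  | DihedralGroup.r i => rho i
  | DihedralGroup.sr i => F * rho i

lemma psiFun_r (i : ZMod (2 * m)) : psiFun (DihedralGroup.r i) = rho i := rfl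
lemma psiFun_sr (i : ZMod (2 * m)) : psiFun (DihedralGroup.sr i) = F * rho i :=
  rfl

lemma psiFun_mul (hm : 1 ≤ m) (a b : DihedralGroup (2 * m)) :
    psiFun (a * b) = psiFun a * psiFun b := by
  cases a with
  | r i =>
      cases b with
      | r j =>
          rw [DihedralGroup.r_mul_r, psiFun_r, psiFun_r, psiFun_r, rho_add hm]
      | sr j =>
          rw [DihedralGroup.r_mul_sr, psiFun_sr, psiFun_r, psiFun_sr,
            sub_eq_neg_add, rho_add hm, ← mul_assoc, ← rho_F hm, mul_assoc]
  | sr i =>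
      cases b with
      | r j =>
          rw [DihedralGroup.sr_mul_r, psiFun_sr, psiFun_sr, psiFun_r,
            rho_add hm, mul_assoc]
      | sr j =>
          rw [DihedralGroup.sr_mul_sr, psiFun_r, psiFun_sr, psiFun_sr,
            sub_eq_neg_add, rho_add hm, mul_assoc, ← mul_assoc (rho i),
            rho_F hm, ← mul_assoc, ← mul_assoc, rel3, one_mul]

end Aux

/-- For every `m ≥ 1`, the group presented by generators `r, f, z` and relations
`r^m = z`, `z^2 = 1`, `f^2 = 1`, `(r f)^2 = 1`, `z r = r z`, `z f = f z`
is isomorphic to the dihedral group of order `4 m`. -/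
theorem presented_double_cover_iso_dihedral (m : ℕ) (hm : 1 ≤ m) :
    Nonempty (PresentedGroup (rels m) ≃* DihedralGroup (2 * m)) := by
  have hm2 : 1 < 2 * m := by omega
  have : NeZero (2 * m) := ⟨by omega⟩
  have hmm : (m : ZMod (2 * m)) + (m : ZMod (2 * m)) = 0 := by
    rw [← Nat.cast_add, ← two_mul, ZMod.natCast_self]
  -- the forward map
  set g : Gen → DihedralGroup (2 * m) := fun x =>
    match x with
    | Gen.r => DihedralGroup.r 1
    | Gen.f => DihedralGroup.sr 0
    | Gen.z => DihedralGroup.r (m : ZMod (2 * m)) with hg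
  have hrels : ∀ w ∈ rels m, FreeGroup.lift g w = 1 := by
    intro w hw
    rcases hw with h | h | h | h | h | h <;> subst h <;>
        simp only [map_mul, map_pow, map_inv, FreeGroup.lift_apply_of, hg]
    · show DihedralGroup.r 1 ^ m * (DihedralGroup.r (m : ZMod (2 * m)))⁻¹ = 1
      rw [DihedralGroup.r_one_pow, mul_inv_cancel]
    · show DihedralGroup.r (m : ZMod (2 * m)) ^ 2 = 1
      rw [pow_two, DihedralGroup.r_mul_r, hmm]
      exact DihedralGroup.one_def.symm
    · show DihedralGroup.sr 0 ^ 2 = 1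
      rw [pow_two, DihedralGroup.sr_mul_self]
    · show (DihedralGroup.r 1 * DihedralGroup.sr 0) ^ 2 = 1
      rw [DihedralGroup.r_mul_sr, pow_two, DihedralGroup.sr_mul_self]
    · show DihedralGroup.r (m : ZMod (2 * m)) * DihedralGroup.r 1 *
        (DihedralGroup.r 1 * DihedralGroup.r (m : ZMod (2 * m)))⁻¹ = 1
      rw [DihedralGroup.r_mul_r, DihedralGroup.r_mul_r, add_comm,
        mul_inv_cancel]
    · show DihedralGroup.r (m : ZMod (2 * m)) * DihedralGroup.sr 0 *
        (DihedralGroup.sr 0 * DihedralGroup.r (m : ZMod (2 * m)))⁻¹ = 1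
      rw [DihedralGroup.r_mul_sr, DihedralGroup.sr_mul_r, zero_sub, zero_add,
        mul_inv_eq_one]
      congr 1
      exact neg_eq_of_add_eq_zero_left hmm
  set φ : PresentedGroup (rels m) →* DihedralGroup (2 * m) :=
    PresentedGroup.toGroup hrels with hφ
  set ψ : DihedralGroup (2 * m) →* PresentedGroup (rels m) :=
    MonoidHom.mk' psiFun (psiFun_mul hm) with hψ
  have hval1 : (1 : ZMod (2 * m)).val = 1 := by
    rw [ZMod.val_one_eq_one_mod]
    exact Nat.mod_eq_of_lt hm2
  have left : ∀ x : PresentedGroup (rels m), ψ (φ x) = x := by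
    have hcomp : (ψ.comp φ) = MonoidHom.id _ := by
      apply PresentedGroup.ext
      intro x
      cases x with
      | r =>
          show ψ (φ (PresentedGroup.of Gen.r)) = PresentedGroup.of Gen.r
          rw [hφ, PresentedGroup.toGroup.of]
          show psiFun (DihedralGroup.r 1) = _
          rw [psiFun_r, rho, hval1, pow_one]
      | f =>
          show ψ (φ (PresentedGroup.of Gen.f)) = PresentedGroup.of Gen.f
          rw [hφ, PresentedGroup.toGroup.of]
          show psiFun (DihedralGroup.sr 0) = _
          rw [psiFun_sr, rho_zero, mul_one]
      | z =>
          show ψ (φ (PresentedGroup.of Gen.z)) = PresentedGroup.of Gen.z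
          rw [hφ, PresentedGroup.toGroup.of]
          show psiFun (DihedralGroup.r (m : ZMod (2 * m))) = _
          rw [psiFun_r, rho, ZMod.val_natCast, Nat.mod_eq_of_lt (by omega),
            rel1]
    intro x
    exact DFunLike.congr_fun hcomp x
  have hφR : φ (PresentedGroup.of Gen.r) = DihedralGroup.r 1 :=
    PresentedGroup.toGroup.of hrels
  have hφF : φ (PresentedGroup.of Gen.f) = DihedralGroup.sr 0 :=
    PresentedGroup.toGroup.of hrels
  have hφrho : ∀ i : ZMod (2 * m), φ (rho i) = DihedralGroup.r i := by
    intro i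
    rw [rho, map_pow, hφR, DihedralGroup.r_one_pow, ZMod.natCast_val,
      ZMod.cast_id]
  have right : ∀ y : DihedralGroup (2 * m), φ (ψ y) = y := by
    intro y
    cases y with
    | r i =>
        show φ (psiFun (DihedralGroup.r i)) = _
        rw [psiFun_r, hφrho]
    | sr i =>
        show φ (psiFun (DihedralGroup.sr i)) = _
        rw [psiFun_sr, map_mul, hφF, hφrho, DihedralGroup.sr_mul_r, zero_add]
  exact ⟨MulEquiv.mk' ⟨φ, ψ, left, right⟩ (map_mul φ)⟩

end Stmt0
end

section
/- Let W̃ = W̃(m1,m2). There is a surjective group homomorphism π : W̃ → DihedralGroup m1 × DihedralGroup m2 sending r1 to (rotation generator, 1), f1 to (a reflection, 1), r2 to (1, rotation generator), f2 to (1, a reflection), and z to the identity; the kernel of π is the subgroup {1, z}, which has exactly 2 elements (in particular z ≠ 1 in W̃). Thus W̃ is a double cover of D_{2m1} × D_{2m2} with central kernel generated by z. -/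
namespace Stmt1

/-- Generators of the double cover `W̃(m1, m2)`. -/
inductive Gen | z | r1 | f1 | r2 | f2

open FreeGroup in
/-- Defining relations of `W̃(m1, m2)`:
`r1^{m1} = z`, `r2^{m2} = z`, `f1^2 = 1`, `f2^2 = 1`, `(r1 f1)^2 = 1`, `(r2 f2)^2 = 1`,
`r1 r2 = r2 r1`, `r1 f2 = f2 r1`, `r2 f1 = f1 r2`, `(f1 f2)^2 = z`, `z^2 = 1`. -/
def rels (m1 m2 : ℕ) : Set (FreeGroup Gen) :=
  { of Gen.r1 ^ m1 * (of Gen.z)⁻¹,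
    of Gen.r2 ^ m2 * (of Gen.z)⁻¹,
    of Gen.f1 ^ 2,
    of Gen.f2 ^ 2,
    (of Gen.r1 * of Gen.f1) ^ 2,
    (of Gen.r2 * of Gen.f2) ^ 2,
    of Gen.r1 * of Gen.r2 * (of Gen.r2 * of Gen.r1)⁻¹,
    of Gen.r1 * of Gen.f2 * (of Gen.f2 * of Gen.r1)⁻¹,
    of Gen.r2 * of Gen.f1 * (of Gen.f1 * of Gen.r2)⁻¹,
    (of Gen.f1 * of Gen.f2) ^ 2 * (of Gen.z)⁻¹,
    of Gen.z ^ 2 }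

/-- The double cover `W̃(m1, m2)` of `D_{2m1} × D_{2m2}`, as a presented group. -/
abbrev Wt (m1 m2 : ℕ) := PresentedGroup (rels m1 m2)

def wz (m1 m2 : ℕ) : Wt m1 m2 := PresentedGroup.of Gen.z
def wr1 (m1 m2 : ℕ) : Wt m1 m2 := PresentedGroup.of Gen.r1
def wf1 (m1 m2 : ℕ) : Wt m1 m2 := PresentedGroup.of Gen.f1
def wr2 (m1 m2 : ℕ) : Wt m1 m2 := PresentedGroup.of Gen.r2
def wf2 (m1 m2 : ℕ) : Wt m1 m2 := PresentedGroup.of Gen.f2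

section Rho

private abbrev M2 := Matrix (Fin 2) (Fin 2) ℂ
private abbrev G0 := M2ˣ

private lemma one_M2 : (1 : M2) = !![1, 0; 0, 1] := Matrix.one_fin_two

private lemma neg_one_M2 : (-1 : M2) = !![-1, 0; 0, -1] := by
  rw [one_M2]; norm_num [← Matrix.ext_iff, Fin.forall_fin_two]

private lemma mx_sx : (!![0, 1; 1, 0] : M2) * !![0, 1; 1, 0] = 1 := by
  rw [Matrix.mul_fin_two, one_M2]; norm_num

private lemma mx_sz : (!![1, 0; 0, -1] : M2) * !![1, 0; 0, -1] = 1 := by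
  rw [Matrix.mul_fin_two, one_M2]; norm_num

private lemma mx_d {ζ : ℂ} (hζ : ζ ≠ 0) :
    (!![ζ, 0; 0, ζ⁻¹] : M2) * !![ζ⁻¹, 0; 0, ζ] = 1 := by
  rw [Matrix.mul_fin_two, one_M2]
  norm_num [mul_inv_cancel₀ hζ, inv_mul_cancel₀ hζ]

private lemma mx_d' {ζ : ℂ} (hζ : ζ ≠ 0) :
    (!![ζ⁻¹, 0; 0, ζ] : M2) * !![ζ, 0; 0, ζ⁻¹] = 1 := by
  rw [Matrix.mul_fin_two, one_M2]
  norm_num [mul_inv_cancel₀ hζ, inv_mul_cancel₀ hζ]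

private noncomputable def sx : G0 := ⟨!![0, 1; 1, 0], !![0, 1; 1, 0], mx_sx, mx_sx⟩

private noncomputable def szm : G0 := ⟨!![1, 0; 0, -1], !![1, 0; 0, -1], mx_sz, mx_sz⟩

private noncomputable def dm (ζ : ℂ) (hζ : ζ ≠ 0) : G0 :=
  ⟨!![ζ, 0; 0, ζ⁻¹], !![ζ⁻¹, 0; 0, ζ], mx_d hζ, mx_d' hζ⟩

private lemma diag_pow (a b : ℂ) (n : ℕ) :
    (!![a, 0; 0, b] : M2) ^ n = !![a ^ n, 0; 0, b ^ n] := by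
  induction n with
  | zero => simp [one_M2]
  | succ k ih => rw [pow_succ, ih, Matrix.mul_fin_two]; norm_num [pow_succ]

private lemma dm_pow_eq_neg_one {ζ : ℂ} (hζ : ζ ≠ 0) {m : ℕ} (hm : ζ ^ m = -1) :
    dm ζ hζ ^ m = -1 := by
  apply Units.ext
  rw [Units.val_pow_eq_pow_val, Units.val_neg, Units.val_one]
  show (!![ζ, 0; 0, ζ⁻¹] : M2) ^ m = -1
  rw [diag_pow, neg_one_M2, inv_pow, hm]
  norm_num

private lemma sx_mul_sx : sx * sx = 1 := by
  apply Units.ext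
  rw [Units.val_mul, Units.val_one]
  exact mx_sx

private lemma szm_mul_szm : szm * szm = 1 := by
  apply Units.ext
  rw [Units.val_mul, Units.val_one]
  exact mx_sz

private lemma dm_sx_sq {ζ : ℂ} (hζ : ζ ≠ 0) : dm ζ hζ * sx * (dm ζ hζ * sx) = 1 := by
  apply Units.ext
  simp only [Units.val_mul, Units.val_one]
  show (!![ζ, 0; 0, ζ⁻¹] : M2) * !![0, 1; 1, 0] * ((!![ζ, 0; 0, ζ⁻¹] : M2) * !![0, 1; 1, 0]) = 1
  rw [Matrix.mul_fin_two, Matrix.mul_fin_two, one_M2]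
  norm_num [mul_inv_cancel₀ hζ, inv_mul_cancel₀ hζ]

private lemma dm_szm_comm {ζ : ℂ} (hζ : ζ ≠ 0) : dm ζ hζ * szm = szm * dm ζ hζ := by
  apply Units.ext
  rw [Units.val_mul, Units.val_mul]
  show (!![ζ, 0; 0, ζ⁻¹] : M2) * !![1, 0; 0, -1] = !![1, 0; 0, -1] * (!![ζ, 0; 0, ζ⁻¹] : M2)
  rw [Matrix.mul_fin_two, Matrix.mul_fin_two]
  norm_num

private lemma sx_szm_sq : sx * szm * (sx * szm) = -1 := by
  apply Units.ext
  simp only [Units.val_mul, Units.val_neg, Units.val_one]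
  show (!![0, 1; 1, 0] : M2) * !![1, 0; 0, -1] * ((!![0, 1; 1, 0] : M2) * !![1, 0; 0, -1]) = -1
  rw [Matrix.mul_fin_two, Matrix.mul_fin_two, neg_one_M2]
  norm_num

private lemma neg_one_ne_one_G0 : (-1 : G0) ≠ 1 := by
  intro h
  have h2 : ((-1 : G0) : M2) = ((1 : G0) : M2) := by rw [h]
  rw [Units.val_neg, Units.val_one] at h2
  have := congrFun (congrFun h2 0) 0
  rw [neg_one_M2, one_M2] at this
  norm_num at this

private lemma neg_one_central (u : G0) : Commute u ((-1 : G0)) := by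
  rw [commute_iff_eq]
  apply Units.ext
  rw [Units.val_mul, Units.val_mul, Units.val_neg, Units.val_one, mul_neg_one, neg_one_mul]

private noncomputable def NN : Subgroup (G0 × G0) := Subgroup.zpowers ((-1, -1) : G0 × G0)

private instance : NN.Normal := by
  constructor
  intro n hn g
  obtain ⟨k, rfl⟩ := Subgroup.mem_zpowers_iff.1 hn
  have hc : Commute g (((-1, -1) : G0 × G0) ^ k) := by
    refine Commute.zpow_right ?_ k
    rw [commute_iff_eq]
    exact Prod.ext (neg_one_central g.1).eq (neg_one_central g.2).eq
  rw [hc.eq, mul_inv_cancel_right]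
  exact Subgroup.zpow_mem _ (Subgroup.mem_zpowers _) k

private lemma prod_pow (a b : G0) (n : ℕ) : ((a, b) : G0 × G0) ^ n = (a ^ n, b ^ n) := rfl

private noncomputable def F0 (d1 d2 : G0) : Gen → G0 × G0 := fun g =>
  match g with
  | Gen.z => (-1, 1)
  | Gen.r1 => (d1, 1)
  | Gen.f1 => (sx, 1)
  | Gen.r2 => (1, d2)
  | Gen.f2 => (szm, sx)

private lemma F0_rels {m1 m2 : ℕ} (d1 d2 : G0)
    (hd1 : d1 ^ m1 = -1) (hd2 : d2 ^ m2 = -1)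
    (hc1 : d1 * sx * (d1 * sx) = 1) (hc2 : d2 * sx * (d2 * sx) = 1)
    (hz1 : d1 * szm = szm * d1) :
    ∀ r ∈ rels m1 m2,
      FreeGroup.lift (fun g => (QuotientGroup.mk' NN) (F0 d1 d2 g)) r = 1 := by
  intro r hr
  have hlift :
      FreeGroup.lift (fun g => (QuotientGroup.mk' NN) (F0 d1 d2 g))
        = (QuotientGroup.mk' NN).comp (FreeGroup.lift (F0 d1 d2)) := by
    apply FreeGroup.ext_hom
    intro a
    simp
  rw [hlift, MonoidHom.comp_apply, QuotientGroup.mk'_apply, QuotientGroup.eq_one_iff]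
  simp only [rels, Set.mem_insert_iff, Set.mem_singleton_iff] at hr
  have fst_pow : ∀ (p : G0 × G0) (n : ℕ), (p ^ n).1 = p.1 ^ n := fun _ _ => rfl
  have snd_pow : ∀ (p : G0 × G0) (n : ℕ), (p ^ n).2 = p.2 ^ n := fun _ _ => rfl
  rcases hr with rfl | rfl | rfl | rfl | rfl | rfl | rfl | rfl | rfl | rfl | rfl <;>
    simp only [map_mul, map_pow, map_inv, FreeGroup.lift_apply_of, F0]
  · suffices h : ((d1, (1 : G0)) : G0 × G0) ^ m1 * ((-1 : G0), (1 : G0))⁻¹ = 1 by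
      rw [h]; exact one_mem NN
    rw [Prod.ext_iff]
    constructor <;>
      simp [fst_pow, snd_pow, hd1]
  · suffices h : (((1 : G0), d2) : G0 × G0) ^ m2 * ((-1 : G0), (1 : G0))⁻¹
        = ((-1, -1) : G0 × G0) by
      rw [h]; exact Subgroup.mem_zpowers _
    rw [Prod.ext_iff]
    constructor <;>
      simp [fst_pow, snd_pow, hd2]
  · suffices h : ((sx, (1 : G0)) : G0 × G0) ^ 2 = 1 by
      rw [h]; exact one_mem NN
    rw [Prod.ext_iff]
    constructor <;>
      simp [fst_pow, snd_pow, pow_two, sx_mul_sx]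
  · suffices h : ((szm, sx) : G0 × G0) ^ 2 = 1 by
      rw [h]; exact one_mem NN
    rw [Prod.ext_iff]
    constructor <;>
      simp [fst_pow, snd_pow, pow_two, sx_mul_sx, szm_mul_szm]
  · suffices h : (((d1, (1 : G0)) : G0 × G0) * (sx, 1)) ^ 2 = 1 by
      rw [h]; exact one_mem NN
    rw [Prod.ext_iff]
    constructor <;>
      simp [fst_pow, snd_pow, pow_two, ← mul_assoc, hc1]
  · suffices h : ((((1 : G0), d2) : G0 × G0) * (szm, sx)) ^ 2 = 1 by
      rw [h]; exact one_mem NN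
    rw [Prod.ext_iff]
    constructor <;>
      simp [fst_pow, snd_pow, pow_two, ← mul_assoc, hc2, szm_mul_szm]
  · suffices h : ((d1, (1 : G0)) : G0 × G0) * (1, d2) * ((1, d2) * (d1, 1))⁻¹ = 1 by
      rw [h]; exact one_mem NN
    rw [Prod.ext_iff]
    constructor <;>
      simp
  · suffices h : ((d1, (1 : G0)) : G0 × G0) * (szm, sx) * ((szm, sx) * (d1, 1))⁻¹ = 1 by
      rw [h]; exact one_mem NN
    rw [Prod.ext_iff]
    constructor <;>
      simp [Prod.fst_mul, Prod.snd_mul, Prod.fst_inv, Prod.snd_inv, mul_inv_eq_one]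
    · rw [← mul_inv_rev, hz1]
      group
  · suffices h : (((1 : G0), d2) : G0 × G0) * (sx, 1) * ((sx, 1) * (1, d2))⁻¹ = 1 by
      rw [h]; exact one_mem NN
    rw [Prod.ext_iff]
    constructor <;>
      simp
  · suffices h : (((sx, (1 : G0)) : G0 × G0) * (szm, sx)) ^ 2 * ((-1 : G0), (1 : G0))⁻¹ = 1 by
      rw [h]; exact one_mem NN
    rw [Prod.ext_iff]
    constructor <;>
      simp [fst_pow, snd_pow, pow_two, ← mul_assoc, sx_mul_sx]
    · rw [show sx * szm * sx * szm = sx * szm * (sx * szm) from by group, sx_szm_sq]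
      simp
  · suffices h : (((-1 : G0), (1 : G0)) : G0 × G0) ^ 2 = 1 by
      rw [h]; exact one_mem NN
    rw [Prod.ext_iff]
    constructor <;>
      simp [fst_pow, snd_pow]

theorem wz_ne_one (m1 m2 : ℕ) (h1 : 1 ≤ m1) (h2 : 1 ≤ m2) : wz m1 m2 ≠ 1 := by
  have hm1 : (m1 : ℂ) ≠ 0 := Nat.cast_ne_zero.2 (by omega)
  have hm2 : (m2 : ℂ) ≠ 0 := Nat.cast_ne_zero.2 (by omega)
  have hζ1 : Complex.exp (Real.pi * Complex.I / m1) ≠ 0 := Complex.exp_ne_zero _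
  have hζ2 : Complex.exp (Real.pi * Complex.I / m2) ≠ 0 := Complex.exp_ne_zero _
  have hζ1m : Complex.exp (Real.pi * Complex.I / m1) ^ m1 = -1 := by
    rw [← Complex.exp_nat_mul,
      show (m1 : ℂ) * (Real.pi * Complex.I / m1) = Real.pi * Complex.I by field_simp]
    exact Complex.exp_pi_mul_I
  have hζ2m : Complex.exp (Real.pi * Complex.I / m2) ^ m2 = -1 := by
    rw [← Complex.exp_nat_mul,
      show (m2 : ℂ) * (Real.pi * Complex.I / m2) = Real.pi * Complex.I by field_simp]
    exact Complex.exp_pi_mul_I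
  have hrels := F0_rels (m1 := m1) (m2 := m2) (dm _ hζ1) (dm _ hζ2)
    (dm_pow_eq_neg_one hζ1 hζ1m) (dm_pow_eq_neg_one hζ2 hζ2m)
    (dm_sx_sq hζ1) (dm_sx_sq hζ2) (dm_szm_comm hζ1)
  intro hwz
  have hρz := PresentedGroup.toGroup.of hrels (x := Gen.z)
  rw [show (PresentedGroup.of Gen.z : Wt m1 m2) = wz m1 m2 from rfl, hwz, map_one] at hρz
  have hmem : (((-1 : G0), (1 : G0)) : G0 × G0) ∈ NN := by
    rw [← QuotientGroup.eq_one_iff]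
    have h' := hρz.symm
    simpa [F0, QuotientGroup.mk'_apply] using h'
  obtain ⟨k, hk⟩ := Subgroup.mem_zpowers_iff.1 hmem
  have hfst : ((-1 : G0)) ^ k = -1 := congrArg Prod.fst hk
  have hsnd : ((-1 : G0)) ^ k = 1 := congrArg Prod.snd hk
  exact neg_one_ne_one_G0 (hsnd ▸ hfst).symm

end Rho

/-! ### Lifting dihedral groups -/

section DihedralLift

variable {G : Type*} [Group G] {m : ℕ} [NeZero m]

private lemma pow_val_add (R : G) (hR : R ^ m = 1) (i j : ZMod m) :
    R ^ (i + j).val = R ^ i.val * R ^ j.val := by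
  rw [ZMod.val_add, ← pow_eq_pow_mod _ hR, pow_add]

private lemma pow_val_neg (R : G) (hR : R ^ m = 1) (i : ZMod m) :
    R ^ (-i).val = (R ^ i.val)⁻¹ := by
  refine eq_inv_of_mul_eq_one_left ?_
  rw [← pow_val_add R hR, neg_add_cancel]
  simp

private lemma pow_val_sub (R : G) (hR : R ^ m = 1) (i j : ZMod m) :
    R ^ (j - i).val = (R ^ i.val)⁻¹ * R ^ j.val := by
  rw [← neg_add_eq_sub, pow_val_add R hR, pow_val_neg R hR]

private def dihedralLift (R F : G) (hR : R ^ m = 1) (hF : F * F = 1)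
    (hRF : F * R * F = R⁻¹) : DihedralGroup m →* G where
  toFun x := match x with
    | DihedralGroup.r i => R ^ i.val
    | DihedralGroup.sr i => F * R ^ i.val
  map_one' := by
    show R ^ (0 : ZMod m).val = 1
    simp
  map_mul' := by
    have hFinv : F⁻¹ = F := inv_eq_of_mul_eq_one_right hF
    have hFR1 : F * R = R⁻¹ * F := by
      have := eq_mul_inv_of_mul_eq hRF
      rwa [hFinv] at this
    have key : ∀ n : ℕ, F * R ^ n = (R ^ n)⁻¹ * F := by
      intro n
      induction n with
      | zero => simp
      | succ k ih =>
        calc F * R ^ (k + 1) = (F * R ^ k) * R := by rw [pow_succ, mul_assoc]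
        _ = (R ^ k)⁻¹ * (F * R) := by rw [ih, mul_assoc]
        _ = (R ^ k)⁻¹ * (R⁻¹ * F) := by rw [hFR1]
        _ = (R ^ (k + 1))⁻¹ * F := by group
    have key' : ∀ n : ℕ, R ^ n * F = F * (R ^ n)⁻¹ := by
      intro n
      calc R ^ n * F = R ^ n * (F * R ^ n) * (R ^ n)⁻¹ := by group
      _ = R ^ n * ((R ^ n)⁻¹ * F) * (R ^ n)⁻¹ := by rw [key n]
      _ = F * (R ^ n)⁻¹ := by group
    rintro (i | i) (j | j)
    · show R ^ (i + j).val = R ^ i.val * R ^ j.val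
      exact pow_val_add R hR i j
    · show F * R ^ (j - i).val = R ^ i.val * (F * R ^ j.val)
      rw [pow_val_sub R hR, ← mul_assoc, ← mul_assoc, ← key']
    · show F * R ^ (i + j).val = (F * R ^ i.val) * R ^ j.val
      rw [pow_val_add R hR, mul_assoc]
    · show R ^ (j - i).val = (F * R ^ i.val) * (F * R ^ j.val)
      rw [pow_val_sub R hR, key i.val, mul_assoc, ← mul_assoc F F, hF, one_mul]

private lemma dihedralLift_r (R F : G) (hR : R ^ m = 1) (hF : F * F = 1)
    (hRF : F * R * F = R⁻¹) (i : ZMod m) :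
    dihedralLift R F hR hF hRF (DihedralGroup.r i) = R ^ i.val := rfl

private lemma dihedralLift_sr (R F : G) (hR : R ^ m = 1) (hF : F * F = 1)
    (hRF : F * R * F = R⁻¹) (i : ZMod m) :
    dihedralLift R F hR hF hRF (DihedralGroup.sr i) = F * R ^ i.val := rfl

end DihedralLift

/-! ### Relations in `Wt` -/

section Rels

variable {m1 m2 : ℕ}

private lemma mk_rel_one {r : FreeGroup Gen} (hr : r ∈ rels m1 m2) :
    PresentedGroup.mk (rels m1 m2) r = 1 :=
  (QuotientGroup.eq_one_iff _).2 (Subgroup.subset_normalClosure hr)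

private lemma e1 : wr1 m1 m2 ^ m1 = wz m1 m2 := by
  have h := mk_rel_one (m1 := m1) (m2 := m2) (Set.mem_insert _ _)
  rw [map_mul, map_pow, map_inv, mul_inv_eq_one] at h
  exact h

private lemma e2 : wr2 m1 m2 ^ m2 = wz m1 m2 := by
  have h := mk_rel_one (m1 := m1) (m2 := m2)
    (Set.mem_insert_of_mem _ (Set.mem_insert _ _))
  rw [map_mul, map_pow, map_inv, mul_inv_eq_one] at h
  exact h

private lemma e3 : wf1 m1 m2 * wf1 m1 m2 = 1 := by
  have h := mk_rel_one (m1 := m1) (m2 := m2)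
    (Set.mem_insert_of_mem _ (Set.mem_insert_of_mem _ (Set.mem_insert _ _)))
  rw [map_pow, pow_two] at h
  exact h

private lemma e4 : wf2 m1 m2 * wf2 m1 m2 = 1 := by
  have h := mk_rel_one (m1 := m1) (m2 := m2)
    (Set.mem_insert_of_mem _ (Set.mem_insert_of_mem _ (Set.mem_insert_of_mem _
      (Set.mem_insert _ _))))
  rw [map_pow, pow_two] at h
  exact h

private lemma e5 : wf1 m1 m2 * wr1 m1 m2 * wf1 m1 m2 = (wr1 m1 m2)⁻¹ := by
  have h := mk_rel_one (m1 := m1) (m2 := m2)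
    (Set.mem_insert_of_mem _ (Set.mem_insert_of_mem _ (Set.mem_insert_of_mem _
      (Set.mem_insert_of_mem _ (Set.mem_insert _ _)))))
  rw [map_pow, map_mul, pow_two] at h
  have hmul : wr1 m1 m2 * (wf1 m1 m2 * wr1 m1 m2 * wf1 m1 m2) = 1 := by
    calc wr1 m1 m2 * (wf1 m1 m2 * wr1 m1 m2 * wf1 m1 m2)
        = wr1 m1 m2 * wf1 m1 m2 * (wr1 m1 m2 * wf1 m1 m2) := by group
    _ = 1 := h
  exact eq_inv_of_mul_eq_one_right hmul

private lemma e6 : wf2 m1 m2 * wr2 m1 m2 * wf2 m1 m2 = (wr2 m1 m2)⁻¹ := by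
  have h := mk_rel_one (m1 := m1) (m2 := m2)
    (Set.mem_insert_of_mem _ (Set.mem_insert_of_mem _ (Set.mem_insert_of_mem _
      (Set.mem_insert_of_mem _ (Set.mem_insert_of_mem _ (Set.mem_insert _ _))))))
  rw [map_pow, map_mul, pow_two] at h
  have hmul : wr2 m1 m2 * (wf2 m1 m2 * wr2 m1 m2 * wf2 m1 m2) = 1 := by
    calc wr2 m1 m2 * (wf2 m1 m2 * wr2 m1 m2 * wf2 m1 m2)
        = wr2 m1 m2 * wf2 m1 m2 * (wr2 m1 m2 * wf2 m1 m2) := by group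
    _ = 1 := h
  exact eq_inv_of_mul_eq_one_right hmul

private lemma e7 : wr1 m1 m2 * wr2 m1 m2 = wr2 m1 m2 * wr1 m1 m2 := by
  have h := mk_rel_one (m1 := m1) (m2 := m2)
    (Set.mem_insert_of_mem _ (Set.mem_insert_of_mem _ (Set.mem_insert_of_mem _
      (Set.mem_insert_of_mem _ (Set.mem_insert_of_mem _ (Set.mem_insert_of_mem _
        (Set.mem_insert _ _)))))))
  rw [map_mul, map_mul, map_inv, map_mul, mul_inv_eq_one] at h
  exact h

private lemma e8 : wr1 m1 m2 * wf2 m1 m2 = wf2 m1 m2 * wr1 m1 m2 := by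
  have h := mk_rel_one (m1 := m1) (m2 := m2)
    (Set.mem_insert_of_mem _ (Set.mem_insert_of_mem _ (Set.mem_insert_of_mem _
      (Set.mem_insert_of_mem _ (Set.mem_insert_of_mem _ (Set.mem_insert_of_mem _
        (Set.mem_insert_of_mem _ (Set.mem_insert _ _))))))))
  rw [map_mul, map_mul, map_inv, map_mul, mul_inv_eq_one] at h
  exact h

private lemma e9 : wr2 m1 m2 * wf1 m1 m2 = wf1 m1 m2 * wr2 m1 m2 := by
  have h := mk_rel_one (m1 := m1) (m2 := m2)
    (Set.mem_insert_of_mem _ (Set.mem_insert_of_mem _ (Set.mem_insert_of_mem _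
      (Set.mem_insert_of_mem _ (Set.mem_insert_of_mem _ (Set.mem_insert_of_mem _
        (Set.mem_insert_of_mem _ (Set.mem_insert_of_mem _ (Set.mem_insert _ _)))))))))
  rw [map_mul, map_mul, map_inv, map_mul, mul_inv_eq_one] at h
  exact h

private lemma e10 : (wf1 m1 m2 * wf2 m1 m2) ^ 2 = wz m1 m2 := by
  have h := mk_rel_one (m1 := m1) (m2 := m2)
    (Set.mem_insert_of_mem _ (Set.mem_insert_of_mem _ (Set.mem_insert_of_mem _
      (Set.mem_insert_of_mem _ (Set.mem_insert_of_mem _ (Set.mem_insert_of_mem _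
        (Set.mem_insert_of_mem _ (Set.mem_insert_of_mem _ (Set.mem_insert_of_mem _
          (Set.mem_insert _ _))))))))))
  rw [map_mul, map_pow, map_mul, map_inv, mul_inv_eq_one] at h
  exact h

private lemma e11 : wz m1 m2 * wz m1 m2 = 1 := by
  have h := mk_rel_one (m1 := m1) (m2 := m2)
    (Set.mem_insert_of_mem _ (Set.mem_insert_of_mem _ (Set.mem_insert_of_mem _
      (Set.mem_insert_of_mem _ (Set.mem_insert_of_mem _ (Set.mem_insert_of_mem _
        (Set.mem_insert_of_mem _ (Set.mem_insert_of_mem _ (Set.mem_insert_of_mem _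
          (Set.mem_insert_of_mem _ (Set.mem_singleton _)))))))))))
  rw [map_pow, pow_two] at h
  exact h

private lemma wz_central (x : Wt m1 m2) : Commute x (wz m1 m2) := by
  induction x using QuotientGroup.induction_on with
  | _ w =>
    induction w using FreeGroup.induction_on with
    | C1 => exact Commute.one_left _
    | of g =>
      show Commute (PresentedGroup.of g : Wt m1 m2) (wz m1 m2)
      cases g with
      | z => exact Commute.refl _
      | r1 => exact e1 (m1 := m1) (m2 := m2) ▸ (Commute.refl (wr1 m1 m2)).pow_right m1
      | f1 =>
        have hc : Commute (wf1 m1 m2) (wr2 m1 m2) := by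
          rw [commute_iff_eq]; exact e9.symm
        exact e2 (m1 := m1) (m2 := m2) ▸ hc.pow_right m2
      | r2 => exact e2 (m1 := m1) (m2 := m2) ▸ (Commute.refl (wr2 m1 m2)).pow_right m2
      | f2 =>
        have hc : Commute (wf2 m1 m2) (wr1 m1 m2) := by
          rw [commute_iff_eq]; exact e8.symm
        exact e1 (m1 := m1) (m2 := m2) ▸ hc.pow_right m1
    | inv_of g hg =>
      have h1 : Commute ((PresentedGroup.mk (rels m1 m2)) (FreeGroup.of g)) (wz m1 m2) := hg
      have h2 := h1.inv_left
      rw [← map_inv] at h2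
      exact h2
    | mul a b ha hb =>
      have ha' : Commute ((PresentedGroup.mk (rels m1 m2)) a) (wz m1 m2) := ha
      have hb' : Commute ((PresentedGroup.mk (rels m1 m2)) b) (wz m1 m2) := hb
      have h2 := ha'.mul_left hb'
      rw [← map_mul] at h2
      exact h2

private lemma zpowers_wz_normal : (Subgroup.zpowers (wz m1 m2)).Normal := by
  constructor
  intro n hn g
  obtain ⟨k, rfl⟩ := Subgroup.mem_zpowers_iff.1 hn
  have hc : Commute g (wz m1 m2 ^ k) := (wz_central g).zpow_right k
  rw [hc.eq, mul_inv_cancel_right]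
  exact Subgroup.zpow_mem _ (Subgroup.mem_zpowers _) k

end Rels

/-! ### The projection -/

section Pi

variable (m1 m2 : ℕ)

private def fgen : Gen → DihedralGroup m1 × DihedralGroup m2 := fun g =>
  match g with
  | Gen.z => 1
  | Gen.r1 => (DihedralGroup.r 1, 1)
  | Gen.f1 => (DihedralGroup.sr 0, 1)
  | Gen.r2 => (1, DihedralGroup.r 1)
  | Gen.f2 => (1, DihedralGroup.sr 0)

private lemma fgen_rels : ∀ r ∈ rels m1 m2, FreeGroup.lift (fgen m1 m2) r = 1 := by
  intro r hr
  simp only [rels, Set.mem_insert_iff, Set.mem_singleton_iff] at hr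
  rcases hr with rfl | rfl | rfl | rfl | rfl | rfl | rfl | rfl | rfl | rfl | rfl <;>
    simp only [map_mul, map_pow, map_inv, FreeGroup.lift_apply_of, fgen] <;>
    rw [Prod.ext_iff] <;>
    constructor <;>
    simp [DihedralGroup.r_one_pow, ← DihedralGroup.one_def, DihedralGroup.r_mul_r,
      DihedralGroup.r_mul_sr, DihedralGroup.sr_mul_r, DihedralGroup.sr_mul_sr,
      pow_two, ZMod.natCast_self, mul_inv_eq_one,
      (fun (p : DihedralGroup m1 × DihedralGroup m2) (n : ℕ) =>
        (rfl : (p ^ n).1 = p.1 ^ n)),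
      (fun (p : DihedralGroup m1 × DihedralGroup m2) (n : ℕ) =>
        (rfl : (p ^ n).2 = p.2 ^ n))]

private def piHom : Wt m1 m2 →* DihedralGroup m1 × DihedralGroup m2 :=
  PresentedGroup.toGroup (fgen_rels m1 m2)

private lemma piHom_r1 : piHom m1 m2 (wr1 m1 m2) = (DihedralGroup.r 1, 1) :=
  PresentedGroup.toGroup.of _
private lemma piHom_f1 : piHom m1 m2 (wf1 m1 m2) = (DihedralGroup.sr 0, 1) :=
  PresentedGroup.toGroup.of _
private lemma piHom_r2 : piHom m1 m2 (wr2 m1 m2) = (1, DihedralGroup.r 1) :=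
  PresentedGroup.toGroup.of _
private lemma piHom_f2 : piHom m1 m2 (wf2 m1 m2) = (1, DihedralGroup.sr 0) :=
  PresentedGroup.toGroup.of _
private lemma piHom_z : piHom m1 m2 (wz m1 m2) = 1 :=
  PresentedGroup.toGroup.of _

end Pi

/-- `W̃(m1,m2)` is a double cover of `D_{2m1} × D_{2m2}`: there is a surjective
homomorphism `π` onto `DihedralGroup m1 × DihedralGroup m2` sending `r1` to a rotation
generator in the first factor, `f1` to a reflection in the first factor, `r2`, `f2`
likewise in the second factor, and `z` to the identity; its kernel is `{1, z}`,
which has exactly 2 elements (in particular `z ≠ 1`). -/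
theorem double_cover_of_product_of_dihedral (m1 m2 : ℕ) (h1 : 1 ≤ m1) (h2 : 1 ≤ m2) :
    ∃ π : Wt m1 m2 →* DihedralGroup m1 × DihedralGroup m2,
      Function.Surjective π ∧
      π (wr1 m1 m2) = (DihedralGroup.r 1, 1) ∧
      (∃ i : ZMod m1, π (wf1 m1 m2) = (DihedralGroup.sr i, 1)) ∧
      π (wr2 m1 m2) = (1, DihedralGroup.r 1) ∧
      (∃ j : ZMod m2, π (wf2 m1 m2) = (1, DihedralGroup.sr j)) ∧
      π (wz m1 m2) = 1 ∧
      (∀ w : Wt m1 m2, π w = 1 ↔ w = 1 ∨ w = wz m1 m2) ∧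
      wz m1 m2 ≠ 1 ∧
      Nat.card π.ker = 2 := by
  haveI : NeZero m1 := ⟨by omega⟩
  haveI : NeZero m2 := ⟨by omega⟩
  have hzne : wz m1 m2 ≠ 1 := wz_ne_one m1 m2 h1 h2
  -- surjectivity
  have hsurj : Function.Surjective (piHom m1 m2) := by
    rintro ⟨g1, g2⟩
    have p1 : ∀ g : DihedralGroup m1, ∃ w : Wt m1 m2, piHom m1 m2 w = (g, 1) := by
      rintro (i | i)
      · refine ⟨wr1 m1 m2 ^ i.val, ?_⟩
        rw [map_pow, piHom_r1,
          show ((DihedralGroup.r 1, (1 : DihedralGroup m2))) ^ i.val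
            = ((DihedralGroup.r 1 : DihedralGroup m1) ^ i.val,
               (1 : DihedralGroup m2) ^ i.val) from rfl,
          DihedralGroup.r_one_pow, one_pow, ZMod.natCast_rightInverse i]
      · refine ⟨wf1 m1 m2 * wr1 m1 m2 ^ i.val, ?_⟩
        rw [map_mul, map_pow, piHom_f1, piHom_r1,
          show ((DihedralGroup.r 1, (1 : DihedralGroup m2))) ^ i.val
            = ((DihedralGroup.r 1 : DihedralGroup m1) ^ i.val,
               (1 : DihedralGroup m2) ^ i.val) from rfl,
          DihedralGroup.r_one_pow, one_pow, ZMod.natCast_rightInverse i,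
          Prod.mk_mul_mk, DihedralGroup.sr_mul_r, zero_add, one_mul]
    have p2 : ∀ g : DihedralGroup m2, ∃ w : Wt m1 m2, piHom m1 m2 w = (1, g) := by
      rintro (i | i)
      · refine ⟨wr2 m1 m2 ^ i.val, ?_⟩
        rw [map_pow, piHom_r2,
          show (((1 : DihedralGroup m1), DihedralGroup.r 1)) ^ i.val
            = ((1 : DihedralGroup m1) ^ i.val,
               (DihedralGroup.r 1 : DihedralGroup m2) ^ i.val) from rfl,
          DihedralGroup.r_one_pow, one_pow, ZMod.natCast_rightInverse i]
      · refine ⟨wf2 m1 m2 * wr2 m1 m2 ^ i.val, ?_⟩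
        rw [map_mul, map_pow, piHom_f2, piHom_r2,
          show (((1 : DihedralGroup m1), DihedralGroup.r 1)) ^ i.val
            = ((1 : DihedralGroup m1) ^ i.val,
               (DihedralGroup.r 1 : DihedralGroup m2) ^ i.val) from rfl,
          DihedralGroup.r_one_pow, one_pow, ZMod.natCast_rightInverse i,
          Prod.mk_mul_mk, DihedralGroup.sr_mul_r, zero_add, one_mul]
    obtain ⟨w1, hw1⟩ := p1 g1
    obtain ⟨w2, hw2⟩ := p2 g2
    exact ⟨w1 * w2, by rw [map_mul, hw1, hw2, Prod.mk_mul_mk, mul_one, one_mul]⟩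
  -- the quotient by ⟨z⟩
  haveI hN : (Subgroup.zpowers (wz m1 m2)).Normal := zpowers_wz_normal
  set mkZ : Wt m1 m2 →* Wt m1 m2 ⧸ Subgroup.zpowers (wz m1 m2) :=
    QuotientGroup.mk' (Subgroup.zpowers (wz m1 m2)) with hmkZdef
  have hz1 : mkZ (wz m1 m2) = 1 := (QuotientGroup.eq_one_iff _).2 (Subgroup.mem_zpowers _)
  have hR1 : mkZ (wr1 m1 m2) ^ m1 = 1 := by rw [← map_pow, e1, hz1]
  have hF1 : mkZ (wf1 m1 m2) * mkZ (wf1 m1 m2) = 1 := by rw [← map_mul, e3, map_one]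
  have hRF1 : mkZ (wf1 m1 m2) * mkZ (wr1 m1 m2) * mkZ (wf1 m1 m2) = (mkZ (wr1 m1 m2))⁻¹ := by
    rw [← map_mul, ← map_mul, ← map_inv, e5]
  have hR2 : mkZ (wr2 m1 m2) ^ m2 = 1 := by rw [← map_pow, e2, hz1]
  have hF2 : mkZ (wf2 m1 m2) * mkZ (wf2 m1 m2) = 1 := by rw [← map_mul, e4, map_one]
  have hRF2 : mkZ (wf2 m1 m2) * mkZ (wr2 m1 m2) * mkZ (wf2 m1 m2) = (mkZ (wr2 m1 m2))⁻¹ := by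
    rw [← map_mul, ← map_mul, ← map_inv, e6]
  have cRR : Commute (mkZ (wr1 m1 m2)) (mkZ (wr2 m1 m2)) := by
    rw [commute_iff_eq, ← map_mul, ← map_mul]; exact congrArg mkZ e7
  have cRF : Commute (mkZ (wr1 m1 m2)) (mkZ (wf2 m1 m2)) := by
    rw [commute_iff_eq, ← map_mul, ← map_mul]; exact congrArg mkZ e8
  have cFR : Commute (mkZ (wf1 m1 m2)) (mkZ (wr2 m1 m2)) := by
    rw [commute_iff_eq, ← map_mul, ← map_mul]; exact congrArg mkZ e9.symm
  have cFF : Commute (mkZ (wf1 m1 m2)) (mkZ (wf2 m1 m2)) := by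
    have h10 : (mkZ (wf1 m1 m2) * mkZ (wf2 m1 m2)) * (mkZ (wf1 m1 m2) * mkZ (wf2 m1 m2))
        = 1 := by
      rw [← map_mul, ← map_mul, ← pow_two, e10, hz1]
    have iF1 : (mkZ (wf1 m1 m2))⁻¹ = mkZ (wf1 m1 m2) := inv_eq_of_mul_eq_one_right hF1
    have iF2 : (mkZ (wf2 m1 m2))⁻¹ = mkZ (wf2 m1 m2) := inv_eq_of_mul_eq_one_right hF2
    rw [commute_iff_eq]
    calc mkZ (wf1 m1 m2) * mkZ (wf2 m1 m2)
        = (mkZ (wf1 m1 m2) * mkZ (wf2 m1 m2))⁻¹ := eq_inv_of_mul_eq_one_left h10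
    _ = (mkZ (wf2 m1 m2))⁻¹ * (mkZ (wf1 m1 m2))⁻¹ := mul_inv_rev _ _
    _ = mkZ (wf2 m1 m2) * mkZ (wf1 m1 m2) := by rw [iF1, iF2]
  have hcomm : ∀ (x : DihedralGroup m1) (y : DihedralGroup m2),
      Commute (dihedralLift _ _ hR1 hF1 hRF1 x) (dihedralLift _ _ hR2 hF2 hRF2 y) := by
    rintro (i | i) (j | j) <;>
      simp only [dihedralLift_r, dihedralLift_sr]
    · exact cRR.pow_pow _ _
    · exact (cRF.pow_left _).mul_right (cRR.pow_pow _ _)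
    · exact (cFR.pow_right _).mul_left (cRR.pow_pow _ _)
    · exact (cFF.mul_right (cFR.pow_right _)).mul_left
        ((cRF.pow_left _).mul_right (cRR.pow_pow _ _))
  set ψ : DihedralGroup m1 × DihedralGroup m2 →* Wt m1 m2 ⧸ Subgroup.zpowers (wz m1 m2) :=
    MonoidHom.noncommCoprod (dihedralLift _ _ hR1 hF1 hRF1) (dihedralLift _ _ hR2 hF2 hRF2)
      hcomm with hψdef
  have hpow1 : mkZ (wr1 m1 m2) ^ (1 : ZMod m1).val = mkZ (wr1 m1 m2) := by
    rw [show (1 : ZMod m1) = ((1 : ℕ) : ZMod m1) by norm_cast, ZMod.val_natCast,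
      ← pow_eq_pow_mod _ hR1, pow_one]
  have hpow2 : mkZ (wr2 m1 m2) ^ (1 : ZMod m2).val = mkZ (wr2 m1 m2) := by
    rw [show (1 : ZMod m2) = ((1 : ℕ) : ZMod m2) by norm_cast, ZMod.val_natCast,
      ← pow_eq_pow_mod _ hR2, pow_one]
  have hcomp : ψ.comp (piHom m1 m2) = mkZ := by
    apply PresentedGroup.ext
    intro g
    cases g
    · -- z
      rw [MonoidHom.comp_apply,
        show (PresentedGroup.of Gen.z : Wt m1 m2) = wz m1 m2 from rfl, piHom_z, map_one, hz1]
    · -- r1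
      rw [MonoidHom.comp_apply,
        show (PresentedGroup.of Gen.r1 : Wt m1 m2) = wr1 m1 m2 from rfl, piHom_r1, hψdef,
        MonoidHom.noncommCoprod_apply]
      show dihedralLift _ _ hR1 hF1 hRF1 (DihedralGroup.r 1)
          * dihedralLift _ _ hR2 hF2 hRF2 1 = mkZ (wr1 m1 m2)
      rw [map_one, mul_one, dihedralLift_r, hpow1]
    · -- f1
      rw [MonoidHom.comp_apply,
        show (PresentedGroup.of Gen.f1 : Wt m1 m2) = wf1 m1 m2 from rfl, piHom_f1, hψdef,
        MonoidHom.noncommCoprod_apply]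
      show dihedralLift _ _ hR1 hF1 hRF1 (DihedralGroup.sr 0)
          * dihedralLift _ _ hR2 hF2 hRF2 1 = mkZ (wf1 m1 m2)
      rw [map_one, mul_one, dihedralLift_sr, ZMod.val_zero, pow_zero, mul_one]
    · -- r2
      rw [MonoidHom.comp_apply,
        show (PresentedGroup.of Gen.r2 : Wt m1 m2) = wr2 m1 m2 from rfl, piHom_r2, hψdef,
        MonoidHom.noncommCoprod_apply]
      show dihedralLift _ _ hR1 hF1 hRF1 1
          * dihedralLift _ _ hR2 hF2 hRF2 (DihedralGroup.r 1) = mkZ (wr2 m1 m2)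
      rw [map_one, one_mul, dihedralLift_r, hpow2]
    · -- f2
      rw [MonoidHom.comp_apply,
        show (PresentedGroup.of Gen.f2 : Wt m1 m2) = wf2 m1 m2 from rfl, piHom_f2, hψdef,
        MonoidHom.noncommCoprod_apply]
      show dihedralLift _ _ hR1 hF1 hRF1 1
          * dihedralLift _ _ hR2 hF2 hRF2 (DihedralGroup.sr 0) = mkZ (wf2 m1 m2)
      rw [map_one, one_mul, dihedralLift_sr, ZMod.val_zero, pow_zero, mul_one]
  have key : ∀ x : Wt m1 m2, ψ (piHom m1 m2 x) = mkZ x := by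
    intro x
    have := DFunLike.congr_fun hcomp x
    simpa using this
  have hz2 : wz m1 m2 ^ (2 : ℤ) = 1 := by
    rw [show (2 : ℤ) = 1 + 1 from rfl, zpow_add, zpow_one, e11]
  have hkeriff : ∀ w : Wt m1 m2, piHom m1 m2 w = 1 ↔ w = 1 ∨ w = wz m1 m2 := by
    intro w
    constructor
    · intro hw
      have hmk : mkZ w = 1 := by rw [← key w, hw, map_one]
      have hmem : w ∈ Subgroup.zpowers (wz m1 m2) := (QuotientGroup.eq_one_iff _).1 hmk
      obtain ⟨k, hk⟩ := Subgroup.mem_zpowers_iff.1 hmem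
      rcases Int.even_or_odd k with ⟨t, rfl⟩ | ⟨t, rfl⟩
      · left
        rw [← hk, show t + t = 2 * t by ring, zpow_mul, hz2, one_zpow]
      · right
        rw [← hk, zpow_add, zpow_one, zpow_mul, hz2, one_zpow, one_mul]
    · rintro (rfl | rfl)
      · exact map_one _
      · exact piHom_z m1 m2
  have hsndset : ((piHom m1 m2).ker : Set (Wt m1 m2)) = {1, wz m1 m2} := by
    ext w
    simp only [SetLike.mem_coe, MonoidHom.mem_ker, Set.mem_insert_iff, Set.mem_singleton_iff]
    exact hkeriff w
  have hcard : Nat.card (piHom m1 m2).ker = 2 := by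
    calc Nat.card (piHom m1 m2).ker
        = Nat.card (((piHom m1 m2).ker : Set (Wt m1 m2))) := by rw [SetLike.coe_sort_coe]
    _ = (((piHom m1 m2).ker : Set (Wt m1 m2))).ncard := Nat.card_coe_set_eq _
    _ = ({1, wz m1 m2} : Set (Wt m1 m2)).ncard := by rw [hsndset]
    _ = 2 := Set.ncard_pair (Ne.symm hzne)
  exact ⟨piHom m1 m2, hsurj, piHom_r1 m1 m2, ⟨0, piHom_f1 m1 m2⟩, piHom_r2 m1 m2,
    ⟨0, piHom_f2 m1 m2⟩, piHom_z m1 m2, hkeriff, hzne, hcard⟩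


end Stmt1
end

section
/- Let W̃ = W̃(m1,m2). Then W̃ is a finite group of cardinality 8·m1·m2. -/
namespace Stmt2

/-- Generators of the double cover `W̃(m1, m2)`. -/
inductive Gen | z | r1 | f1 | r2 | f2

open FreeGroup in
/-- Defining relations of `W̃(m1, m2)`:
`r1^{m1} = z`, `r2^{m2} = z`, `f1^2 = 1`, `f2^2 = 1`, `(r1 f1)^2 = 1`, `(r2 f2)^2 = 1`,
`r1 r2 = r2 r1`, `r1 f2 = f2 r1`, `r2 f1 = f1 r2`, `(f1 f2)^2 = z`, `z^2 = 1`. -/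
def rels (m1 m2 : ℕ) : Set (FreeGroup Gen) :=
  { of Gen.r1 ^ m1 * (of Gen.z)⁻¹,
    of Gen.r2 ^ m2 * (of Gen.z)⁻¹,
    of Gen.f1 ^ 2,
    of Gen.f2 ^ 2,
    (of Gen.r1 * of Gen.f1) ^ 2,
    (of Gen.r2 * of Gen.f2) ^ 2,
    of Gen.r1 * of Gen.r2 * (of Gen.r2 * of Gen.r1)⁻¹,
    of Gen.r1 * of Gen.f2 * (of Gen.f2 * of Gen.r1)⁻¹,
    of Gen.r2 * of Gen.f1 * (of Gen.f1 * of Gen.r2)⁻¹,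
    (of Gen.f1 * of Gen.f2) ^ 2 * (of Gen.z)⁻¹,
    of Gen.z ^ 2 }

/-- The double cover `W̃(m1, m2)` of `D_{2m1} × D_{2m2}`, as a presented group. -/
abbrev Wt (m1 m2 : ℕ) := PresentedGroup (rels m1 m2)

def wz (m1 m2 : ℕ) : Wt m1 m2 := PresentedGroup.of Gen.z
def wr1 (m1 m2 : ℕ) : Wt m1 m2 := PresentedGroup.of Gen.r1
def wf1 (m1 m2 : ℕ) : Wt m1 m2 := PresentedGroup.of Gen.f1
def wr2 (m1 m2 : ℕ) : Wt m1 m2 := PresentedGroup.of Gen.r2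
def wf2 (m1 m2 : ℕ) : Wt m1 m2 := PresentedGroup.of Gen.f2


/-! ### Auxiliary general lemmas -/

section AuxGroup
variable {G : Type*} [Group G]

lemma swap_base {r f : G} (hrf : (r * f) ^ 2 = 1) : f * r = r⁻¹ * f⁻¹ := by
  have h : r * (f * r) * f = 1 := by
    rw [sq] at hrf
    rwa [show r * (f * r) * f = r * f * (r * f) by group]
  have h2 := congrArg (fun x => r⁻¹ * x * f⁻¹) h
  simpa [mul_assoc] using h2

lemma swap_pow {r f : G} (h : f * r = r⁻¹ * f) (k : ℕ) :
    f * r ^ k = (r ^ k)⁻¹ * f := by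
  induction k with
  | zero => simp
  | succ k ih =>
    rw [pow_succ, ← mul_assoc, ih, mul_assoc, h, ← mul_assoc, ← mul_inv_rev, ← pow_succ', ← pow_succ]

lemma inv_pow_eq_pow {g : G} {n : ℕ} (hn : 0 < n) (h : g ^ n = 1) (i : ℕ) :
    (g ^ i)⁻¹ = g ^ ((n - 1) * i) := by
  refine inv_eq_of_mul_eq_one_left ?_
  rw [← pow_add]
  have he : (n - 1) * i + i = n * i := by
    obtain ⟨m, rfl⟩ := Nat.exists_eq_add_of_le hn
    simp only [Nat.add_sub_cancel_left]
    ring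
  rw [he, pow_mul, h, one_pow]

end AuxGroup

instance i2m (m : ℕ) [NeZero m] : NeZero (2 * m) := ⟨by have := NeZero.ne m; omega⟩

section Main
variable (m1 m2 : ℕ) [NeZero m1] [NeZero m2]

/-- The carrier of the normal forms: `r1^a · z^carry · r2^b · f1^e1 · f2^e2`. -/
abbrev XX := ZMod (2 * m1) × ZMod m2 × Bool × Bool

lemma hm1m1 : (m1 : ZMod (2 * m1)) + m1 = 0 := by
  have h := ZMod.natCast_self (2 * m1)
  push_cast at h
  linear_combination h

/-! ### The model permutation action -/

@[simps] def permZ : Equiv.Perm (XX m1 m2) where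
  toFun x := (x.1 + m1, x.2)
  invFun x := (x.1 - m1, x.2)
  left_inv x := by simp
  right_inv x := by simp

@[simps] def permR1 : Equiv.Perm (XX m1 m2) where
  toFun x := (x.1 + 1, x.2)
  invFun x := (x.1 - 1, x.2)
  left_inv x := by simp
  right_inv x := by simp

@[simps] def permR2 : Equiv.Perm (XX m1 m2) where
  toFun x := (x.1 + if x.2.1 = -1 then (m1 : ZMod (2*m1)) else 0, x.2.1 + 1, x.2.2)
  invFun x := (x.1 - if x.2.1 = 0 then (m1 : ZMod (2*m1)) else 0, x.2.1 - 1, x.2.2)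
  left_inv x := by
    obtain ⟨a, b, e⟩ := x
    by_cases hb : b = -1 <;>
      simp [hb, add_eq_zero_iff_eq_neg]
  right_inv x := by
    obtain ⟨a, b, e⟩ := x
    by_cases hb : b = 0 <;>
      simp [hb, sub_eq_iff_eq_add, sub_add_cancel, sub_eq_neg_add, neg_add_eq_iff_eq_add]

@[simps] def permF1 : Equiv.Perm (XX m1 m2) where
  toFun x := (-x.1, x.2.1, !x.2.2.1, x.2.2.2)
  invFun x := (-x.1, x.2.1, !x.2.2.1, x.2.2.2)
  left_inv x := by simp
  right_inv x := by simp

def permF2 : Equiv.Perm (XX m1 m2) where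
  toFun x := (x.1 + ((if x.2.2.1 then (m1 : ZMod (2*m1)) else 0) + if x.2.1 = 0 then 0 else (m1 : ZMod (2*m1))),
    -x.2.1, x.2.2.1, !x.2.2.2)
  invFun x := (x.1 + ((if x.2.2.1 then (m1 : ZMod (2*m1)) else 0) + if x.2.1 = 0 then 0 else (m1 : ZMod (2*m1))),
    -x.2.1, x.2.2.1, !x.2.2.2)
  left_inv x := by
    obtain ⟨a, b, e1, e2⟩ := x
    have h := hm1m1 m1
    by_cases hb : b = 0 <;> by_cases he : e1 = true <;>
      simp [hb, he, neg_eq_zero] <;>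
      (first | linear_combination 2*h | linear_combination 3*h | linear_combination -2*h | linear_combination -3*h | linear_combination h | linear_combination -h)
  right_inv x := by
    obtain ⟨a, b, e1, e2⟩ := x
    have h := hm1m1 m1
    by_cases hb : b = 0 <;> by_cases he : e1 = true <;>
      simp [hb, he, neg_eq_zero] <;>
      (first | linear_combination 2*h | linear_combination 3*h | linear_combination -2*h | linear_combination -3*h | linear_combination h | linear_combination -h)

@[simp] lemma permF2_apply (x : XX m1 m2) :
    permF2 m1 m2 x = (x.1 + ((if x.2.2.1 then (m1 : ZMod (2*m1)) else 0) + if x.2.1 = 0 then 0 else (m1 : ZMod (2*m1))),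
      -x.2.1, x.2.2.1, !x.2.2.2) := rfl

def gmap : Gen → Equiv.Perm (XX m1 m2)
  | .z => permZ m1 m2
  | .r1 => permR1 m1 m2
  | .f1 => permF1 m1 m2
  | .r2 => permR2 m1 m2
  | .f2 => permF2 m1 m2

lemma permR1_pow (n : ℕ) (x : XX m1 m2) : (permR1 m1 m2 ^ n) x = (x.1 + n, x.2) := by
  induction n with
  | zero => simp
  | succ n ih =>
    rw [pow_succ', Equiv.Perm.mul_apply, ih]
    simp only [permR1_apply, Prod.mk.injEq]
    refine ⟨by push_cast; ring, trivial⟩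

lemma natCast_val_zmod {n : ℕ} [NeZero n] (b : ZMod n) : ((b.val : ℕ) : ZMod n) = b :=
  ZMod.natCast_rightInverse b

lemma neg_one_cond {n : ℕ} [NeZero n] (b : ZMod n) (k : ℕ) :
    (b + k = -1) ↔ n ∣ b.val + k + 1 := by
  rw [← ZMod.natCast_eq_zero_iff]
  push_cast
  rw [natCast_val_zmod]
  constructor
  · intro h; rw [h]; ring
  · intro h; linear_combination h

lemma permR2_pow (n : ℕ) (x : XX m1 m2) :
    (permR2 m1 m2 ^ n) x =
      (x.1 + ((m1 * ((x.2.1.val + n) / m2) : ℕ) : ZMod (2*m1)), x.2.1 + n, x.2.2) := by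
  induction n with
  | zero =>
    simp [Nat.div_eq_of_lt (ZMod.val_lt x.2.1)]
  | succ n ih =>
    rw [pow_succ', Equiv.Perm.mul_apply, ih]
    simp only [permR2_apply]
    have hsd := Nat.succ_div (a := x.2.1.val + n) (b := m2)
    rw [show x.2.1.val + (n+1) = x.2.1.val + n + 1 by ring]
    by_cases hc : x.2.1 + (n : ZMod m2) = -1
    · have hd : m2 ∣ x.2.1.val + n + 1 := (neg_one_cond _ n).mp hc
      rw [if_pos hc, hsd, if_pos hd]
      simp only [Prod.mk.injEq]
      refine ⟨by push_cast; ring, by push_cast; ring, trivial⟩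
    · have hd : ¬ m2 ∣ x.2.1.val + n + 1 := fun h => hc ((neg_one_cond _ n).mpr h)
      rw [if_neg hc, hsd, if_neg hd]
      simp only [Prod.mk.injEq]
      refine ⟨by push_cast; ring, by push_cast; ring, trivial⟩

set_option maxHeartbeats 1000000 in
lemma lift_rels : ∀ r ∈ rels m1 m2, FreeGroup.lift (gmap m1 m2) r = 1 := by
  have h := hm1m1 m1
  intro r hr
  simp only [rels, Set.mem_insert_iff, Set.mem_singleton_iff] at hr
  rcases hr with rfl|rfl|rfl|rfl|rfl|rfl|rfl|rfl|rfl|rfl|rfl <;>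
      simp only [map_mul, map_pow, map_inv, FreeGroup.lift_apply_of, gmap]
  · -- r1^m1 = z
    rw [mul_inv_eq_one]
    refine Equiv.ext fun x => ?_
    rw [permR1_pow]
    obtain ⟨a, b, e⟩ := x
    simp [permZ_apply]
  · -- r2^m2 = z
    rw [mul_inv_eq_one]
    refine Equiv.ext fun x => ?_
    rw [permR2_pow]
    obtain ⟨a, b, e⟩ := x
    simp [permZ_apply, ZMod.natCast_self, Nat.add_div_right _ (Nat.pos_of_ne_zero (NeZero.ne m2)),
      Nat.div_eq_of_lt (ZMod.val_lt b)]
  · -- f1^2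
    refine Equiv.ext fun x => ?_
    obtain ⟨a, b, e1, e2⟩ := x
    simp [sq, Equiv.Perm.mul_apply, permF1_apply]
  · -- f2^2
    refine Equiv.ext fun x => ?_
    obtain ⟨a, b, e1, e2⟩ := x
    cases e1 <;> by_cases hb : b = 0 <;>
      simp [sq, Equiv.Perm.mul_apply, permF2_apply, hb, neg_eq_zero] <;> (first | rfl | ring1 | linear_combination h | linear_combination -h | linear_combination 2*h | linear_combination -2*h | linear_combination 3*h | linear_combination -3*h | linear_combination 4*h | linear_combination -4*h)
  · -- (r1 f1)^2
    refine Equiv.ext fun x => ?_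
    obtain ⟨a, b, e1, e2⟩ := x
    simp [sq, Equiv.Perm.mul_apply, permR1_apply, permF1_apply] <;> (first | rfl | ring1 | linear_combination h | linear_combination -h | linear_combination 2*h | linear_combination -2*h | linear_combination 3*h | linear_combination -3*h | linear_combination 4*h | linear_combination -4*h)
  · -- (r2 f2)^2
    refine Equiv.ext fun x => ?_
    obtain ⟨a, b, e1, e2⟩ := x
    have c1 : ((-b : ZMod m2) = -1) ↔ b = 1 := by constructor <;> intro hh <;> linear_combination -hh
    have c2 : ((-b + 1 : ZMod m2) = 0) ↔ b = 1 := by constructor <;> intro hh <;> linear_combination -hh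
    have c3 : ((-(-b + 1) : ZMod m2) = -1) ↔ b = 0 := by constructor <;> intro hh <;> linear_combination hh
    have c4 : ((b - 1 : ZMod m2) = -1) ↔ b = 0 := by constructor <;> intro hh <;> linear_combination hh
    cases e1 <;> by_cases hb : b = 0 <;> by_cases hb1 : b = 1 <;>
      simp [sq, Equiv.Perm.mul_apply, permR2_apply, permF2_apply, c1, c2, c3, c4, hb, hb1, neg_eq_zero] <;>
      (try split_ifs) <;> (first | rfl | ring1 | linear_combination h | linear_combination -h | linear_combination 2*h | linear_combination -2*h | linear_combination 3*h | linear_combination -3*h | linear_combination 4*h | linear_combination -4*h)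
  · -- r1 r2 comm
    rw [mul_inv_eq_one]
    refine Equiv.ext fun x => ?_
    obtain ⟨a, b, e⟩ := x
    simp [Equiv.Perm.mul_apply, permR1_apply, permR2_apply] <;> (try split_ifs) <;> (first | rfl | ring1 | linear_combination h | linear_combination -h | linear_combination 2*h | linear_combination -2*h | linear_combination 3*h | linear_combination -3*h | linear_combination 4*h | linear_combination -4*h)
  · -- r1 f2 comm
    rw [mul_inv_eq_one]
    refine Equiv.ext fun x => ?_
    obtain ⟨a, b, e1, e2⟩ := x
    simp [Equiv.Perm.mul_apply, permR1_apply, permF2_apply] <;> (try split_ifs) <;> (first | rfl | ring1 | linear_combination h | linear_combination -h | linear_combination 2*h | linear_combination -2*h | linear_combination 3*h | linear_combination -3*h | linear_combination 4*h | linear_combination -4*h)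
  · -- r2 f1 comm
    rw [mul_inv_eq_one]
    refine Equiv.ext fun x => ?_
    obtain ⟨a, b, e1, e2⟩ := x
    simp [Equiv.Perm.mul_apply, permR2_apply, permF1_apply] <;> (try split_ifs) <;> (first | rfl | ring1 | linear_combination h | linear_combination -h | linear_combination 2*h | linear_combination -2*h | linear_combination 3*h | linear_combination -3*h | linear_combination 4*h | linear_combination -4*h)
  · -- (f1 f2)^2 = z
    rw [mul_inv_eq_one]
    refine Equiv.ext fun x => ?_
    obtain ⟨a, b, e1, e2⟩ := x
    cases e1 <;> by_cases hb : b = 0 <;>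
      simp [sq, Equiv.Perm.mul_apply, permF1_apply, permF2_apply, permZ_apply, hb, neg_eq_zero] <;>
      (try split_ifs) <;> (first | rfl | ring1 | linear_combination h | linear_combination -h | linear_combination 2*h | linear_combination -2*h | linear_combination 3*h | linear_combination -3*h | linear_combination 4*h | linear_combination -4*h)
  · -- z^2
    refine Equiv.ext fun x => ?_
    obtain ⟨a, b, e⟩ := x
    simp [sq, Equiv.Perm.mul_apply, permZ_apply] <;> (first | rfl | ring1 | linear_combination h | linear_combination -h | linear_combination 2*h | linear_combination -2*h | linear_combination 3*h | linear_combination -3*h | linear_combination 4*h | linear_combination -4*h)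

/-- The homomorphism from `W̃` to the permutations of `XX`, modelling left multiplication on
normal forms. -/
def piW : Wt m1 m2 →* Equiv.Perm (XX m1 m2) := PresentedGroup.toGroup (lift_rels m1 m2)

lemma piW_r1 : piW m1 m2 (wr1 m1 m2) = permR1 m1 m2 := PresentedGroup.toGroup.of _
lemma piW_r2 : piW m1 m2 (wr2 m1 m2) = permR2 m1 m2 := PresentedGroup.toGroup.of _
lemma piW_f1 : piW m1 m2 (wf1 m1 m2) = permF1 m1 m2 := PresentedGroup.toGroup.of _
lemma piW_f2 : piW m1 m2 (wf2 m1 m2) = permF2 m1 m2 := PresentedGroup.toGroup.of _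

/-! ### Relations inside `W̃` -/

lemma relw {r : FreeGroup Gen} (hr : r ∈ rels m1 m2) : PresentedGroup.mk (rels m1 m2) r = 1 :=
  (QuotientGroup.eq_one_iff r).mpr (Subgroup.subset_normalClosure hr)

lemma wt_r1 : wr1 m1 m2 ^ m1 = wz m1 m2 := by
  have h := relw m1 m2 (r := FreeGroup.of Gen.r1 ^ m1 * (FreeGroup.of Gen.z)⁻¹) (by simp [rels])
  rw [map_mul, map_pow, map_inv, mul_inv_eq_one] at h
  exact h

lemma wt_r2 : wr2 m1 m2 ^ m2 = wz m1 m2 := by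
  have h := relw m1 m2 (r := FreeGroup.of Gen.r2 ^ m2 * (FreeGroup.of Gen.z)⁻¹) (by simp [rels])
  rw [map_mul, map_pow, map_inv, mul_inv_eq_one] at h
  exact h

lemma wt_f1 : wf1 m1 m2 ^ 2 = 1 := by
  have h := relw m1 m2 (r := FreeGroup.of Gen.f1 ^ 2) (by simp [rels])
  rw [map_pow] at h
  exact h

lemma wt_f2 : wf2 m1 m2 ^ 2 = 1 := by
  have h := relw m1 m2 (r := FreeGroup.of Gen.f2 ^ 2) (by simp [rels])
  rw [map_pow] at h
  exact h

lemma wt_z2 : wz m1 m2 ^ 2 = 1 := by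
  have h := relw m1 m2 (r := FreeGroup.of Gen.z ^ 2) (by simp [rels])
  rw [map_pow] at h
  exact h

lemma wt_r1f1 : (wr1 m1 m2 * wf1 m1 m2) ^ 2 = 1 := by
  have h := relw m1 m2 (r := (FreeGroup.of Gen.r1 * FreeGroup.of Gen.f1) ^ 2) (by simp [rels])
  rw [map_pow, map_mul] at h
  exact h

lemma wt_r2f2 : (wr2 m1 m2 * wf2 m1 m2) ^ 2 = 1 := by
  have h := relw m1 m2 (r := (FreeGroup.of Gen.r2 * FreeGroup.of Gen.f2) ^ 2) (by simp [rels])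
  rw [map_pow, map_mul] at h
  exact h

lemma wt_c12 : wr1 m1 m2 * wr2 m1 m2 = wr2 m1 m2 * wr1 m1 m2 := by
  have h := relw m1 m2
    (r := FreeGroup.of Gen.r1 * FreeGroup.of Gen.r2 * (FreeGroup.of Gen.r2 * FreeGroup.of Gen.r1)⁻¹)
    (by simp [rels])
  rw [map_mul, map_mul, map_inv, map_mul, mul_inv_eq_one] at h
  exact h

lemma wt_c1f2 : wr1 m1 m2 * wf2 m1 m2 = wf2 m1 m2 * wr1 m1 m2 := by
  have h := relw m1 m2
    (r := FreeGroup.of Gen.r1 * FreeGroup.of Gen.f2 * (FreeGroup.of Gen.f2 * FreeGroup.of Gen.r1)⁻¹)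
    (by simp [rels])
  rw [map_mul, map_mul, map_inv, map_mul, mul_inv_eq_one] at h
  exact h

lemma wt_c2f1 : wr2 m1 m2 * wf1 m1 m2 = wf1 m1 m2 * wr2 m1 m2 := by
  have h := relw m1 m2
    (r := FreeGroup.of Gen.r2 * FreeGroup.of Gen.f1 * (FreeGroup.of Gen.f1 * FreeGroup.of Gen.r2)⁻¹)
    (by simp [rels])
  rw [map_mul, map_mul, map_inv, map_mul, mul_inv_eq_one] at h
  exact h

lemma wt_f1f2 : (wf1 m1 m2 * wf2 m1 m2) ^ 2 = wz m1 m2 := by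
  have h := relw m1 m2
    (r := (FreeGroup.of Gen.f1 * FreeGroup.of Gen.f2) ^ 2 * (FreeGroup.of Gen.z)⁻¹)
    (by simp [rels])
  rw [map_mul, map_pow, map_mul, map_inv, mul_inv_eq_one] at h
  exact h

/-! ### Derived relations -/

lemma r1_ord : wr1 m1 m2 ^ (2 * m1) = 1 := by
  rw [mul_comm, pow_mul, wt_r1, wt_z2]

lemma r2_ord : wr2 m1 m2 ^ (2 * m2) = 1 := by
  rw [mul_comm, pow_mul, wt_r2, wt_z2]

lemma f1_inv : (wf1 m1 m2)⁻¹ = wf1 m1 m2 :=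
  inv_eq_of_mul_eq_one_left (by rw [← sq, wt_f1])

lemma f2_inv : (wf2 m1 m2)⁻¹ = wf2 m1 m2 :=
  inv_eq_of_mul_eq_one_left (by rw [← sq, wt_f2])

lemma z_inv : (wz m1 m2)⁻¹ = wz m1 m2 :=
  inv_eq_of_mul_eq_one_left (by rw [← sq, wt_z2])

lemma f1_pow_r1 (i : ℕ) : wf1 m1 m2 * wr1 m1 m2 ^ i = wr1 m1 m2 ^ ((2*m1 - 1) * i) * wf1 m1 m2 := by
  have hs : wf1 m1 m2 * wr1 m1 m2 = (wr1 m1 m2)⁻¹ * wf1 m1 m2 := by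
    have := swap_base (wt_r1f1 m1 m2)
    rwa [f1_inv] at this
  rw [swap_pow hs, inv_pow_eq_pow (by have := NeZero.ne m1; omega) (r1_ord m1 m2)]

lemma f2_pow_r2 (j : ℕ) : wf2 m1 m2 * wr2 m1 m2 ^ j = wr2 m1 m2 ^ ((2*m2 - 1) * j) * wf2 m1 m2 := by
  have hs : wf2 m1 m2 * wr2 m1 m2 = (wr2 m1 m2)⁻¹ * wf2 m1 m2 := by
    have := swap_base (wt_r2f2 m1 m2)
    rwa [f2_inv] at this
  rw [swap_pow hs, inv_pow_eq_pow (by have := NeZero.ne m2; omega) (r2_ord m1 m2)]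

lemma z_f1 : wf1 m1 m2 * wz m1 m2 = wz m1 m2 * wf1 m1 m2 := by
  have hm : 0 < m1 := Nat.pos_of_ne_zero (NeZero.ne m1)
  have he : (2*m1 - 1) * m1 = 2*m1 * (m1 - 1) + m1 := by
    obtain ⟨m, rfl⟩ := Nat.exists_eq_add_of_le hm
    rw [show 2*(1+m) - 1 = 1 + 2*m from by omega, show (1+m) - 1 = m from by omega]
    ring
  rw [← wt_r1, f1_pow_r1, he, pow_add, pow_mul, r1_ord, one_pow, one_mul]

lemma f2f1 : wf2 m1 m2 * wf1 m1 m2 = wz m1 m2 * (wf1 m1 m2 * wf2 m1 m2) := by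
  have h : wf1 m1 m2 * wf2 m1 m2 * (wf1 m1 m2 * wf2 m1 m2) = wz m1 m2 := by
    rw [← sq, wt_f1f2]
  calc wf2 m1 m2 * wf1 m1 m2
      = (wf1 m1 m2)⁻¹ * (wf1 m1 m2 * wf2 m1 m2 * (wf1 m1 m2 * wf2 m1 m2) * (wf2 m1 m2)⁻¹) := by
        group
    _ = (wf1 m1 m2)⁻¹ * (wz m1 m2 * (wf2 m1 m2)⁻¹) := by rw [h]
    _ = wz m1 m2 * (wf1 m1 m2 * wf2 m1 m2) := by
        rw [f1_inv, f2_inv, ← mul_assoc, z_f1, mul_assoc]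

lemma f2_pow_f1 (k : ℕ) :
    wf2 m1 m2 * wf1 m1 m2 ^ k = wz m1 m2 ^ k * (wf1 m1 m2 ^ k * wf2 m1 m2) := by
  induction k with
  | zero => simp
  | succ k ih =>
    have hc : Commute (wf1 m1 m2 ^ k) (wz m1 m2) := Commute.pow_left (z_f1 m1 m2) k
    rw [pow_succ, ← mul_assoc, ih, mul_assoc, mul_assoc, f2f1, hc.left_comm, ← mul_assoc,
      ← pow_succ,
      show wf1 m1 m2 ^ k * (wf1 m1 m2 * wf2 m1 m2) = wf1 m1 m2 ^ (k+1) * wf2 m1 m2 from by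
        rw [← mul_assoc, ← pow_succ]]
    rw [← pow_succ]

/-! ### Words and normal forms in `W̃` -/

def word (i j k l : ℕ) : Wt m1 m2 :=
  wr1 m1 m2 ^ i * wr2 m1 m2 ^ j * wf1 m1 m2 ^ k * wf2 m1 m2 ^ l

lemma word_r1 (p i j k l : ℕ) :
    wr1 m1 m2 ^ p * word m1 m2 i j k l = word m1 m2 (p + i) j k l := by
  simp only [word, ← mul_assoc, ← pow_add]

lemma word_r2 (p i j k l : ℕ) :
    wr2 m1 m2 ^ p * word m1 m2 i j k l = word m1 m2 i (p + j) k l := by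
  have hc : Commute (wr2 m1 m2 ^ p) (wr1 m1 m2 ^ i) :=
    Commute.pow_pow ((wt_c12 m1 m2).symm) p i
  simp only [word, ← mul_assoc]
  rw [hc.eq, mul_assoc (wr1 m1 m2 ^ i), ← pow_add]

lemma word_f1 (i j k l : ℕ) :
    wf1 m1 m2 * word m1 m2 i j k l = word m1 m2 ((2*m1 - 1) * i) j (k + 1) l := by
  have hc : Commute (wf1 m1 m2) (wr2 m1 m2 ^ j) :=
    Commute.pow_right ((wt_c2f1 m1 m2).symm) j
  simp only [word, ← mul_assoc]
  rw [f1_pow_r1, mul_assoc _ (wf1 m1 m2) (wr2 m1 m2 ^ j), hc.eq, ← mul_assoc,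
    mul_assoc _ (wf1 m1 m2) (wf1 m1 m2 ^ k), ← pow_succ']

lemma word_f2 (i j k l : ℕ) :
    wf2 m1 m2 * word m1 m2 i j k l = word m1 m2 (i + m1 * k) ((2*m2 - 1) * j) k (l + 1) := by
  have hc1 : Commute (wf2 m1 m2) (wr1 m1 m2 ^ i) :=
    Commute.pow_right ((wt_c1f2 m1 m2).symm) i
  have hc2 : Commute (wr2 m1 m2 ^ ((2*m2 - 1) * j)) (wr1 m1 m2 ^ (m1 * k)) :=
    Commute.pow_pow ((wt_c12 m1 m2).symm) _ _
  simp only [word, ← mul_assoc]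
  rw [hc1.eq, mul_assoc _ (wf2 m1 m2) (wr2 m1 m2 ^ j), f2_pow_r2, ← mul_assoc,
    mul_assoc _ (wf2 m1 m2) (wf1 m1 m2 ^ k), f2_pow_f1, ← wt_r1, ← pow_mul,
    ← mul_assoc, mul_assoc (wr1 m1 m2 ^ i), hc2.eq, ← mul_assoc, ← mul_assoc, ← pow_add,
    mul_assoc _ (wf2 m1 m2) (wf2 m1 m2 ^ l), ← pow_succ']

lemma step_z (i j k l : ℕ) :
    wz m1 m2 * word m1 m2 i j k l = word m1 m2 (m1 + i) j k l := by
  rw [← wt_r1, word_r1]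

lemma step_r1 (i j k l : ℕ) :
    wr1 m1 m2 * word m1 m2 i j k l = word m1 m2 (1 + i) j k l := by
  rw [← pow_one (wr1 m1 m2), word_r1]

lemma step_r2 (i j k l : ℕ) :
    wr2 m1 m2 * word m1 m2 i j k l = word m1 m2 i (1 + j) k l := by
  rw [← pow_one (wr2 m1 m2), word_r2]

lemma inv_z (i j k l : ℕ) :
    (wz m1 m2)⁻¹ * word m1 m2 i j k l = word m1 m2 (m1 + i) j k l := by
  rw [z_inv, step_z]

lemma inv_r1 (i j k l : ℕ) :
    (wr1 m1 m2)⁻¹ * word m1 m2 i j k l = word m1 m2 ((2*m1 - 1) * 1 + i) j k l := by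
  rw [← pow_one (wr1 m1 m2), inv_pow_eq_pow (by have := NeZero.ne m1; omega) (r1_ord m1 m2),
    word_r1]

lemma inv_r2 (i j k l : ℕ) :
    (wr2 m1 m2)⁻¹ * word m1 m2 i j k l = word m1 m2 i ((2*m2 - 1) * 1 + j) k l := by
  rw [← pow_one (wr2 m1 m2), inv_pow_eq_pow (by have := NeZero.ne m2; omega) (r2_ord m1 m2),
    word_r2]

lemma inv_f1 (i j k l : ℕ) :
    (wf1 m1 m2)⁻¹ * word m1 m2 i j k l = word m1 m2 ((2*m1 - 1) * i) j (k + 1) l := by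
  rw [f1_inv, word_f1]

lemma inv_f2 (i j k l : ℕ) :
    (wf2 m1 m2)⁻¹ * word m1 m2 i j k l = word m1 m2 (i + m1 * k) ((2*m2 - 1) * j) k (l + 1) := by
  rw [f2_inv, word_f2]

/-! ### Every element of `W̃` is a word -/

def inM (w : Wt m1 m2) : Prop := ∃ i j k l, w = word m1 m2 i j k l

lemma inM_one : inM m1 m2 1 := ⟨0, 0, 0, 0, by simp [word]⟩

def stab : Subgroup (Wt m1 m2) where
  carrier := {w | ∀ u, inM m1 m2 u → inM m1 m2 (w * u) ∧ inM m1 m2 (w⁻¹ * u)}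
  one_mem' := by
    intro u hu
    constructor <;> simpa
  mul_mem' := by
    intro x y hx hy u hu
    constructor
    · have h2 := (hx _ (hy u hu).1).1
      rwa [← mul_assoc] at h2
    · have h2 := (hy _ (hx u hu).2).2
      rwa [← mul_assoc, ← mul_inv_rev] at h2
  inv_mem' := by
    intro x hx u hu
    refine ⟨(hx u hu).2, ?_⟩
    rw [inv_inv]
    exact (hx u hu).1

lemma gen_mem_stab : ∀ g : Gen, PresentedGroup.of (rels := rels m1 m2) g ∈ stab m1 m2 := by
  intro g
  have key : ∀ u, inM m1 m2 u →
      inM m1 m2 ((PresentedGroup.of (rels := rels m1 m2) g : Wt m1 m2) * u) ∧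
      inM m1 m2 ((PresentedGroup.of (rels := rels m1 m2) g : Wt m1 m2)⁻¹ * u) := by
    intro u hu
    obtain ⟨i, j, k, l, rfl⟩ := hu
    cases g with
    | z => exact ⟨⟨_, _, _, _, (step_z m1 m2 i j k l)⟩, ⟨_, _, _, _, (inv_z m1 m2 i j k l)⟩⟩
    | r1 => exact ⟨⟨_, _, _, _, (step_r1 m1 m2 i j k l)⟩, ⟨_, _, _, _, (inv_r1 m1 m2 i j k l)⟩⟩
    | f1 => exact ⟨⟨_, _, _, _, (word_f1 m1 m2 i j k l)⟩, ⟨_, _, _, _, (inv_f1 m1 m2 i j k l)⟩⟩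
    | r2 => exact ⟨⟨_, _, _, _, (step_r2 m1 m2 i j k l)⟩, ⟨_, _, _, _, (inv_r2 m1 m2 i j k l)⟩⟩
    | f2 => exact ⟨⟨_, _, _, _, (word_f2 m1 m2 i j k l)⟩, ⟨_, _, _, _, (inv_f2 m1 m2 i j k l)⟩⟩
  exact key

lemma all_inM (w : Wt m1 m2) : inM m1 m2 w := by
  have hw := PresentedGroup.generated_by (rels m1 m2) (stab m1 m2) (gen_mem_stab m1 m2) w
  have h1 := (hw 1 (inM_one m1 m2)).1
  rwa [mul_one] at h1

/-! ### The normal form map and surjectivity -/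

def nf (x : XX m1 m2) : Wt m1 m2 :=
  word m1 m2 x.1.val x.2.1.val (cond x.2.2.1 1 0) (cond x.2.2.2 1 0)

lemma r2_split (j : ℕ) :
    wr2 m1 m2 ^ j = wr1 m1 m2 ^ (m1 * (j / m2)) * wr2 m1 m2 ^ (j % m2) := by
  conv_lhs => rw [← Nat.div_add_mod j m2]
  rw [pow_add, pow_mul, wt_r2, ← wt_r1, ← pow_mul]

lemma word_reduce (i j k l : ℕ) :
    word m1 m2 i j k l = word m1 m2 (i + m1 * (j / m2)) (j % m2) (k % 2) (l % 2) := by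
  simp only [word]
  rw [r2_split, pow_eq_pow_mod k (wt_f1 m1 m2), pow_eq_pow_mod l (wt_f2 m1 m2),
    ← mul_assoc, ← pow_add]

lemma nf_surjective : Function.Surjective (nf m1 m2) := by
  intro w
  obtain ⟨i, j, k, l, rfl⟩ := all_inM m1 m2 w
  refine ⟨(((i + m1 * (j / m2) : ℕ) : ZMod (2*m1)), ((j : ℕ) : ZMod m2),
    decide (k % 2 = 1), decide (l % 2 = 1)), ?_⟩
  rw [word_reduce m1 m2 i j k l]
  have e3 : (cond (decide (k % 2 = 1)) 1 0 : ℕ) = k % 2 := by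
    rcases Nat.mod_two_eq_zero_or_one k with h | h <;> simp [h]
  have e4 : (cond (decide (l % 2 = 1)) 1 0 : ℕ) = l % 2 := by
    rcases Nat.mod_two_eq_zero_or_one l with h | h <;> simp [h]
  simp only [nf, e3, e4, ZMod.val_natCast]
  simp only [word]
  rw [← pow_eq_pow_mod _ (r1_ord m1 m2)]

/-! ### Injectivity of the normal form map -/

lemma piW_nf (x : XX m1 m2) :
    piW m1 m2 (nf m1 m2 x) ((0 : ZMod (2*m1)), (0 : ZMod m2), false, false) = x := by
  obtain ⟨a, b, e1, e2⟩ := x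
  simp only [nf, word, map_mul, map_pow, piW_r1, piW_r2, piW_f1, piW_f2, Equiv.Perm.mul_apply]
  cases e1 <;> cases e2 <;>
    simp [permR1_pow, permR2_pow, permF1_apply, permF2_apply, natCast_val_zmod,
      Nat.div_eq_of_lt (ZMod.val_lt b)]

lemma nf_injective : Function.Injective (nf m1 m2) := by
  intro x y hxy
  have h := congrArg
    (fun w => piW m1 m2 w ((0 : ZMod (2*m1)), (0 : ZMod m2), false, false)) hxy
  simpa only [piW_nf] using h

end Main

/-- `W̃(m1,m2)` is a finite group of cardinality `8 m1 m2`. -/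
theorem card_Wt (m1 m2 : ℕ) (h1 : 1 ≤ m1) (h2 : 1 ≤ m2) :
    Finite (Wt m1 m2) ∧ Nat.card (Wt m1 m2) = 8 * m1 * m2 := by
  haveI : NeZero m1 := ⟨by omega⟩
  haveI : NeZero m2 := ⟨by omega⟩
  have hbij : Function.Bijective (nf m1 m2) := ⟨nf_injective m1 m2, nf_surjective m1 m2⟩
  have hfin : Finite (Wt m1 m2) := Finite.of_surjective _ hbij.2
  refine ⟨hfin, ?_⟩
  rw [← Nat.card_eq_of_bijective _ hbij]
  simp [Nat.card_prod, Nat.card_zmod, Nat.card_eq_fintype_card, Fintype.card_bool, ZMod.card]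
  ring

end Stmt2
end

section
/- Let W̃ = W̃(m1,m2). The subgroup of W̃ generated by r1 and r2 is isomorphic to the quotient group (ZMod (2*m1) × ZMod (2*m2)) / H, where H is the subgroup generated by the element (m1, m2), via an isomorphism sending r1 to the class of (1,0) and r2 to the class of (0,1). In particular this subgroup is abelian of order 2·m1·m2. -/
namespace Stmt3

/-- Generators of the double cover `W̃(m1, m2)`. -/
inductive Gen | z | r1 | f1 | r2 | f2

open FreeGroup in
/-- Defining relations of `W̃(m1, m2)`:
`r1^{m1} = z`, `r2^{m2} = z`, `f1^2 = 1`, `f2^2 = 1`, `(r1 f1)^2 = 1`, `(r2 f2)^2 = 1`,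
`r1 r2 = r2 r1`, `r1 f2 = f2 r1`, `r2 f1 = f1 r2`, `(f1 f2)^2 = z`, `z^2 = 1`. -/
def rels (m1 m2 : ℕ) : Set (FreeGroup Gen) :=
  { of Gen.r1 ^ m1 * (of Gen.z)⁻¹,
    of Gen.r2 ^ m2 * (of Gen.z)⁻¹,
    of Gen.f1 ^ 2,
    of Gen.f2 ^ 2,
    (of Gen.r1 * of Gen.f1) ^ 2,
    (of Gen.r2 * of Gen.f2) ^ 2,
    of Gen.r1 * of Gen.r2 * (of Gen.r2 * of Gen.r1)⁻¹,
    of Gen.r1 * of Gen.f2 * (of Gen.f2 * of Gen.r1)⁻¹,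
    of Gen.r2 * of Gen.f1 * (of Gen.f1 * of Gen.r2)⁻¹,
    (of Gen.f1 * of Gen.f2) ^ 2 * (of Gen.z)⁻¹,
    of Gen.z ^ 2 }

/-- The double cover `W̃(m1, m2)` of `D_{2m1} × D_{2m2}`, as a presented group. -/
abbrev Wt (m1 m2 : ℕ) := PresentedGroup (rels m1 m2)

def wz (m1 m2 : ℕ) : Wt m1 m2 := PresentedGroup.of Gen.z
def wr1 (m1 m2 : ℕ) : Wt m1 m2 := PresentedGroup.of Gen.r1
def wf1 (m1 m2 : ℕ) : Wt m1 m2 := PresentedGroup.of Gen.f1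
def wr2 (m1 m2 : ℕ) : Wt m1 m2 := PresentedGroup.of Gen.r2
def wf2 (m1 m2 : ℕ) : Wt m1 m2 := PresentedGroup.of Gen.f2



variable (m1 m2 : ℕ)

abbrev Agrp := ZMod (2 * m1) × ZMod (2 * m2)

def zel : Agrp m1 m2 := ((m1 : ZMod (2 * m1)), (m2 : ZMod (2 * m2)))

abbrev Hsub : AddSubgroup (Agrp m1 m2) := AddSubgroup.zmultiples (zel m1 m2)

abbrev Qgrp := Agrp m1 m2 ⧸ Hsub m1 m2

lemma negm (k : ℕ) : -((k : ℕ) : ZMod (2 * k)) = k := by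
  have h : ((k : ℕ) : ZMod (2 * k)) + k = 0 := by
    rw [← Nat.cast_add, ← two_mul, ZMod.natCast_self]
  exact neg_eq_of_add_eq_zero_left h

/-- negation in the first coordinate, as an endomorphism of `A`. -/
def g1 : Agrp m1 m2 →+ Agrp m1 m2 where
  toFun p := (-p.1, p.2)
  map_zero' := by simp
  map_add' a b := by simp [Prod.ext_iff]; ring

def g2 : Agrp m1 m2 →+ Agrp m1 m2 where
  toFun p := (p.1, -p.2)
  map_zero' := by simp
  map_add' a b := by simp [Prod.ext_iff]; ring

lemma g1_zel : g1 m1 m2 (zel m1 m2) = zel m1 m2 := by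
  simp [g1, zel, Prod.ext_iff, negm]

lemma g2_zel : g2 m1 m2 (zel m1 m2) = zel m1 m2 := by
  simp [g2, zel, Prod.ext_iff, negm]

def n1 : AddMonoid.End (Qgrp m1 m2) :=
  QuotientAddGroup.map _ _ (g1 m1 m2) (by
    rw [AddSubgroup.zmultiples_le, AddSubgroup.mem_comap, g1_zel]
    exact AddSubgroup.mem_zmultiples _)

def n2 : AddMonoid.End (Qgrp m1 m2) :=
  QuotientAddGroup.map _ _ (g2 m1 m2) (by
    rw [AddSubgroup.zmultiples_le, AddSubgroup.mem_comap, g2_zel]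
    exact AddSubgroup.mem_zmultiples _)

lemma n1_mk (p : Agrp m1 m2) :
    n1 m1 m2 (QuotientAddGroup.mk p) = QuotientAddGroup.mk (g1 m1 m2 p) := rfl

lemma n2_mk (p : Agrp m1 m2) :
    n2 m1 m2 (QuotientAddGroup.mk p) = QuotientAddGroup.mk (g2 m1 m2 p) := rfl

lemma n1_sq : n1 m1 m2 ^ 2 = 1 := by
  refine AddMonoidHom.ext fun q => ?_
  induction q using QuotientAddGroup.induction_on with
  | H p =>
    show (n1 m1 m2) ((n1 m1 m2) (QuotientAddGroup.mk p)) = QuotientAddGroup.mk p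
    simp [n1_mk, g1]

lemma n2_sq : n2 m1 m2 ^ 2 = 1 := by
  refine AddMonoidHom.ext fun q => ?_
  induction q using QuotientAddGroup.induction_on with
  | H p =>
    show (n2 m1 m2) ((n2 m1 m2) (QuotientAddGroup.mk p)) = QuotientAddGroup.mk p
    simp [n2_mk, g2]

lemma n1_n2_comm : Commute (n1 m1 m2) (n2 m1 m2) := by
  refine AddMonoidHom.ext fun q => ?_
  induction q using QuotientAddGroup.induction_on with
  | H p =>
    show (n1 m1 m2) ((n2 m1 m2) (QuotientAddGroup.mk p)) = (n2 m1 m2) ((n1 m1 m2) (QuotientAddGroup.mk p))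
    simp [n1_mk, n2_mk, g1, g2]

def zbar : Qgrp m1 m2 := QuotientAddGroup.mk ((m1 : ZMod (2 * m1)), 0)

lemma zbar_add_zbar : zbar m1 m2 + zbar m1 m2 = 0 := by
  have : ((QuotientAddGroup.mk (((m1 : ℕ) : ZMod (2 * m1)) + m1, (0 : ZMod (2*m2)) + 0)) : Qgrp m1 m2)
      = QuotientAddGroup.mk 0 := by
    rw [← Nat.cast_add, ← two_mul, ZMod.natCast_self]
    norm_num
    exact zero_mem _
  simpa [zbar, ← QuotientAddGroup.mk_add] using this

lemma n1_zbar : n1 m1 m2 (zbar m1 m2) = zbar m1 m2 := by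
  simp [zbar, n1_mk, g1, negm]

lemma n2_zbar : n2 m1 m2 (zbar m1 m2) = zbar m1 m2 := by
  simp [zbar, n2_mk, g2]


variable (m1 m2 : ℕ)

/-- action of `(ZMod 2)²` on `Q` by sign flips. -/
def eact (v : ZMod 2 × ZMod 2) : AddMonoid.End (Qgrp m1 m2) :=
  n1 m1 m2 ^ v.1.val * n2 m1 m2 ^ v.2.val

lemma eact_zero : eact m1 m2 0 = 1 := by
  simp [eact]

lemma eact_add (v w : ZMod 2 × ZMod 2) :
    eact m1 m2 (v + w) = eact m1 m2 v * eact m1 m2 w := by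
  have h1 : ∀ a b : ZMod 2, n1 m1 m2 ^ (a + b).val = n1 m1 m2 ^ a.val * n1 m1 m2 ^ b.val := by
    intro a b
    rw [← pow_add, ZMod.val_add, ← pow_eq_pow_mod _ (n1_sq m1 m2)]
  have h2 : ∀ a b : ZMod 2, n2 m1 m2 ^ (a + b).val = n2 m1 m2 ^ a.val * n2 m1 m2 ^ b.val := by
    intro a b
    rw [← pow_add, ZMod.val_add, ← pow_eq_pow_mod _ (n2_sq m1 m2)]
  have hc : Commute (n2 m1 m2 ^ v.2.val) (n1 m1 m2 ^ w.1.val) :=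
    ((n1_n2_comm m1 m2).symm.pow_pow _ _)
  show eact m1 m2 (v.1 + w.1, v.2 + w.2) = _
  rw [eact, eact, eact, h1, h2]
  exact (hc.mul_mul_mul_comm _ _).symm

lemma eact_zbar (v : ZMod 2 × ZMod 2) : eact m1 m2 v (zbar m1 m2) = zbar m1 m2 := by
  have key : ∀ (f : AddMonoid.End (Qgrp m1 m2)), f (zbar m1 m2) = zbar m1 m2 →
      ∀ k : ℕ, (f ^ k) (zbar m1 m2) = zbar m1 m2 := by
    intro f hf k
    induction k with
    | zero => rfl
    | succ n ih =>
      rw [pow_succ]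
      show (f ^ n) (f (zbar m1 m2)) = zbar m1 m2
      rw [hf, ih]
  show (n1 m1 m2 ^ v.1.val) ((n2 m1 m2 ^ v.2.val) (zbar m1 m2)) = zbar m1 m2
  rw [key _ (n2_zbar m1 m2), key _ (n1_zbar m1 m2)]

/-- `ZMod 2`-multiples of `zbar`. -/
def mm : ZMod 2 → Qgrp m1 m2 := fun i => i.val • zbar m1 m2

lemma mm_add (i j : ZMod 2) : mm m1 m2 (i + j) = mm m1 m2 i + mm m1 m2 j := by
  have h : ∀ x : ZMod 2, x = 0 ∨ x = 1 := by decide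
  have h11 : (1 + 1 : ZMod 2) = 0 := by decide
  have hv1 : (1 : ZMod 2).val = 1 := rfl
  rcases h i with rfl | rfl <;> rcases h j with rfl | rfl <;>
    simp [mm, h11, hv1, zero_nsmul, one_nsmul, zbar_add_zbar]

lemma mm_zero : mm m1 m2 0 = 0 := by simp [mm, zero_nsmul]

lemma eact_mm (v : ZMod 2 × ZMod 2) (i : ZMod 2) :
    eact m1 m2 v (mm m1 m2 i) = mm m1 m2 i := by
  rw [mm, map_nsmul, eact_zbar]

/-- the 2-cocycle. -/
def coc (v w : ZMod 2 × ZMod 2) : Qgrp m1 m2 := mm m1 m2 (v.2 * w.1)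

structure K where
  a : Qgrp m1 m2
  v : ZMod 2 × ZMod 2

namespace K

variable {m1 m2}

instance : Mul (K m1 m2) :=
  ⟨fun x y => ⟨x.a + eact m1 m2 x.v y.a + coc m1 m2 x.v y.v, x.v + y.v⟩⟩

instance : One (K m1 m2) := ⟨⟨0, 0⟩⟩

instance : Inv (K m1 m2) :=
  ⟨fun x => ⟨-(eact m1 m2 x.v x.a) - coc m1 m2 x.v x.v, x.v⟩⟩

lemma mul_def (x y : K m1 m2) :
    x * y = ⟨x.a + eact m1 m2 x.v y.a + coc m1 m2 x.v y.v, x.v + y.v⟩ := rfl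

lemma one_def : (1 : K m1 m2) = ⟨0, 0⟩ := rfl

lemma ext' {x y : K m1 m2} (ha : x.a = y.a) (hv : x.v = y.v) : x = y := by
  cases x; cases y; cases ha; cases hv; rfl

instance : Group (K m1 m2) where
  mul_assoc x y z := by
    refine ext' ?_ ?_
    · show (x.a + eact m1 m2 x.v y.a + coc m1 m2 x.v y.v)
          + eact m1 m2 (x.v + y.v) z.a + coc m1 m2 (x.v + y.v) z.v
        = x.a + eact m1 m2 x.v (y.a + eact m1 m2 y.v z.a + coc m1 m2 y.v z.v)
          + coc m1 m2 x.v (y.v + z.v)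
      have h1 : eact m1 m2 (x.v + y.v) z.a = eact m1 m2 x.v (eact m1 m2 y.v z.a) := by
        rw [eact_add]; rfl
      have h2 : eact m1 m2 x.v (coc m1 m2 y.v z.v) = coc m1 m2 y.v z.v := eact_mm ..
      have h3 : coc m1 m2 x.v y.v + coc m1 m2 (x.v + y.v) z.v
          = coc m1 m2 y.v z.v + coc m1 m2 x.v (y.v + z.v) := by
        rw [coc, coc, coc, coc, ← mm_add, ← mm_add]
        congr 1
        simp only [Prod.fst_add, Prod.snd_add]
        ring
      have key : ∀ (a b ee c1 c2 c3 c4 : Qgrp m1 m2), c3 + c4 = c1 + c2 →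
          a + b + c3 + ee + c4 = a + (b + ee + c1) + c2 := by
        intro a b ee c1 c2 c3 c4 h
        have h5 : a + b + c3 + ee + c4 = a + b + ee + (c3 + c4) := by abel
        rw [h5, h]
        abel
      rw [map_add, map_add, h2, ← h1]
      exact key _ _ _ _ _ _ _ h3
    · show x.v + y.v + z.v = x.v + (y.v + z.v)
      exact add_assoc ..
  one_mul x := by
    refine ext' ?_ ?_
    · show (0 : Qgrp m1 m2) + eact m1 m2 0 x.a + coc m1 m2 0 x.v = x.a
      rw [eact_zero]
      show 0 + x.a + mm m1 m2 ((0 : ZMod 2 × ZMod 2).2 * x.v.1) = x.a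
      simp [mm, zero_nsmul]
    · show (0 : ZMod 2 × ZMod 2) + x.v = x.v
      exact zero_add _
  mul_one x := by
    refine ext' ?_ ?_
    · show x.a + eact m1 m2 x.v 0 + coc m1 m2 x.v 0 = x.a
      rw [map_zero]
      show x.a + 0 + mm m1 m2 (x.v.2 * (0 : ZMod 2 × ZMod 2).1) = x.a
      simp [mm, zero_nsmul]
    · exact add_zero _
  inv_mul_cancel x := by
    refine ext' ?_ ?_
    · show (-(eact m1 m2 x.v x.a) - coc m1 m2 x.v x.v)
          + eact m1 m2 x.v x.a + coc m1 m2 x.v x.v = 0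
      abel
    · show x.v + x.v = 0
      have : ∀ v : ZMod 2 × ZMod 2, v + v = 0 := by decide
      exact this _

end K


variable (m1 m2 : ℕ)

def kof (q : Qgrp m1 m2) : K m1 m2 := ⟨q, 0⟩

def kz : K m1 m2 := ⟨zbar m1 m2, 0⟩
def kr1 : K m1 m2 := ⟨QuotientAddGroup.mk (1, 0), 0⟩
def kr2 : K m1 m2 := ⟨QuotientAddGroup.mk (0, 1), 0⟩
def kf1 : K m1 m2 := ⟨0, (1, 0)⟩
def kf2 : K m1 m2 := ⟨0, (0, 1)⟩

lemma coc_zero_left (w : ZMod 2 × ZMod 2) : coc m1 m2 0 w = 0 := by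
  show mm m1 m2 ((0 : ZMod 2) * w.1) = 0
  rw [zero_mul, mm_zero]

lemma coc_zero_right (v : ZMod 2 × ZMod 2) : coc m1 m2 v 0 = 0 := by
  show mm m1 m2 (v.2 * (0 : ZMod 2)) = 0
  rw [mul_zero, mm_zero]

lemma mm_one : mm m1 m2 1 = zbar m1 m2 := by
  show (1 : ZMod 2).val • zbar m1 m2 = zbar m1 m2
  rw [show (1 : ZMod 2).val = 1 from rfl, one_nsmul]

lemma eact_10 : eact m1 m2 (1, 0) = n1 m1 m2 := by
  show n1 m1 m2 ^ (1 : ZMod 2).val * n2 m1 m2 ^ (0 : ZMod 2).val = n1 m1 m2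
  rw [show (1 : ZMod 2).val = 1 from rfl, show (0 : ZMod 2).val = 0 from rfl,
    pow_one, pow_zero, mul_one]

lemma eact_01 : eact m1 m2 (0, 1) = n2 m1 m2 := by
  show n1 m1 m2 ^ (0 : ZMod 2).val * n2 m1 m2 ^ (1 : ZMod 2).val = n2 m1 m2
  rw [show (1 : ZMod 2).val = 1 from rfl, show (0 : ZMod 2).val = 0 from rfl,
    pow_one, pow_zero, one_mul]

lemma kof_mul (q q' : Qgrp m1 m2) : kof m1 m2 q * kof m1 m2 q' = kof m1 m2 (q + q') := by
  refine K.ext' ?_ ?_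
  · show q + eact m1 m2 0 q' + coc m1 m2 0 0 = q + q'
    rw [eact_zero, coc_zero_left]
    show q + q' + 0 = q + q'
    rw [add_zero]
  · show (0 : ZMod 2 × ZMod 2) + 0 = 0
    rw [add_zero]

lemma kof_mul' (q : Qgrp m1 m2) (x : K m1 m2) : kof m1 m2 q * x = ⟨q + x.a, x.v⟩ := by
  refine K.ext' ?_ ?_
  · show q + eact m1 m2 0 x.a + coc m1 m2 0 x.v = q + x.a
    rw [eact_zero, coc_zero_left]
    show q + x.a + 0 = q + x.a
    rw [add_zero]
  · show (0 : ZMod 2 × ZMod 2) + x.v = x.v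
    rw [zero_add]

lemma kr1_pow (n : ℕ) :
    kr1 m1 m2 ^ n = kof m1 m2 (QuotientAddGroup.mk ((n : ZMod (2 * m1)), 0)) := by
  induction n with
  | zero =>
    rw [pow_zero]
    refine K.ext' ?_ rfl
    show (0 : Qgrp m1 m2) = QuotientAddGroup.mk (((0 : ℕ) : ZMod (2*m1)), (0 : ZMod (2*m2)))
    norm_num
    rfl
  | succ n ih =>
    rw [pow_succ, ih, show kr1 m1 m2 = kof m1 m2 (QuotientAddGroup.mk (1, 0)) from rfl,
      kof_mul, ← QuotientAddGroup.mk_add]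
    congr 1
    push_cast
    norm_num

lemma kr2_pow (n : ℕ) :
    kr2 m1 m2 ^ n = kof m1 m2 (QuotientAddGroup.mk (0, (n : ZMod (2 * m2)))) := by
  induction n with
  | zero =>
    rw [pow_zero]
    refine K.ext' ?_ rfl
    show (0 : Qgrp m1 m2) = QuotientAddGroup.mk ((0 : ZMod (2*m1)), ((0 : ℕ) : ZMod (2*m2)))
    norm_num
    rfl
  | succ n ih =>
    rw [pow_succ, ih, show kr2 m1 m2 = kof m1 m2 (QuotientAddGroup.mk (0, 1)) from rfl,
      kof_mul, ← QuotientAddGroup.mk_add]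
    congr 1
    push_cast
    norm_num

lemma kr1_pow_m1 : kr1 m1 m2 ^ m1 = kz m1 m2 := by
  rw [kr1_pow]; rfl

lemma mk_zel_eq : (QuotientAddGroup.mk (0, (m2 : ZMod (2 * m2))) : Qgrp m1 m2) = zbar m1 m2 := by
  rw [zbar, QuotientAddGroup.eq]
  have : -((0 : ZMod (2*m1)), (m2 : ZMod (2 * m2))) + ((m1 : ZMod (2*m1)), (0 : ZMod (2*m2)))
      = zel m1 m2 := by
    rw [zel, Prod.ext_iff]
    constructor
    · show -0 + (m1 : ZMod (2*m1)) = m1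
      rw [neg_zero, zero_add]
    · show -(m2 : ZMod (2*m2)) + 0 = m2
      rw [add_zero, negm]
  rw [this]
  exact AddSubgroup.mem_zmultiples _

lemma kr2_pow_m2 : kr2 m1 m2 ^ m2 = kz m1 m2 := by
  rw [kr2_pow, mk_zel_eq]; rfl

lemma kz_sq : kz m1 m2 ^ 2 = 1 := by
  rw [pow_two, show kz m1 m2 = kof m1 m2 (zbar m1 m2) from rfl, kof_mul, zbar_add_zbar]
  rfl

lemma kf1_sq : kf1 m1 m2 ^ 2 = 1 := by
  rw [pow_two]
  refine K.ext' ?_ ?_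
  · show (0 : Qgrp m1 m2) + eact m1 m2 (1,0) 0 + mm m1 m2 ((0 : ZMod 2) * 1) = 0
    rw [map_zero, zero_mul, mm_zero]
    norm_num
  · show ((1,0) + (1,0) : ZMod 2 × ZMod 2) = 0
    decide

lemma kf2_sq : kf2 m1 m2 ^ 2 = 1 := by
  rw [pow_two]
  refine K.ext' ?_ ?_
  · show (0 : Qgrp m1 m2) + eact m1 m2 (0,1) 0 + mm m1 m2 ((1 : ZMod 2) * 0) = 0
    rw [map_zero, mul_zero, mm_zero]
    norm_num
  · show ((0,1) + (0,1) : ZMod 2 × ZMod 2) = 0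
    decide

lemma kr1f1_sq : (kr1 m1 m2 * kf1 m1 m2) ^ 2 = 1 := by
  have h : kr1 m1 m2 * kf1 m1 m2 = ⟨QuotientAddGroup.mk (1, 0), (1, 0)⟩ := by
    rw [show kr1 m1 m2 = kof m1 m2 (QuotientAddGroup.mk (1, 0)) from rfl, kof_mul']
    exact K.ext' (add_zero _) rfl
  rw [pow_two, h]
  refine K.ext' ?_ ?_
  · show (QuotientAddGroup.mk (1, 0) : Qgrp m1 m2)
        + eact m1 m2 (1,0) (QuotientAddGroup.mk (1, 0)) + mm m1 m2 ((0 : ZMod 2) * 1) = 0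
    rw [zero_mul, mm_zero, eact_10, n1_mk, ← QuotientAddGroup.mk_add]
    show (QuotientAddGroup.mk ((1 + -1 : ZMod (2*m1)), (0 + 0 : ZMod (2*m2))) : Qgrp m1 m2) + 0 = 0
    norm_num
    exact zero_mem _
  · show ((1,0) + (1,0) : ZMod 2 × ZMod 2) = 0
    decide

lemma kr2f2_sq : (kr2 m1 m2 * kf2 m1 m2) ^ 2 = 1 := by
  have h : kr2 m1 m2 * kf2 m1 m2 = ⟨QuotientAddGroup.mk (0, 1), (0, 1)⟩ := by
    rw [show kr2 m1 m2 = kof m1 m2 (QuotientAddGroup.mk (0, 1)) from rfl, kof_mul']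
    exact K.ext' (add_zero _) rfl
  rw [pow_two, h]
  refine K.ext' ?_ ?_
  · show (QuotientAddGroup.mk (0, 1) : Qgrp m1 m2)
        + eact m1 m2 (0,1) (QuotientAddGroup.mk (0, 1)) + mm m1 m2 ((1 : ZMod 2) * 0) = 0
    rw [mul_zero, mm_zero, eact_01, n2_mk, ← QuotientAddGroup.mk_add]
    show (QuotientAddGroup.mk ((0 + 0 : ZMod (2*m1)), (1 + -1 : ZMod (2*m2))) : Qgrp m1 m2) + 0 = 0
    norm_num
    exact zero_mem _
  · show ((0,1) + (0,1) : ZMod 2 × ZMod 2) = 0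
    decide

lemma kr1_kr2_comm : kr1 m1 m2 * kr2 m1 m2 = kr2 m1 m2 * kr1 m1 m2 := by
  rw [show kr1 m1 m2 = kof m1 m2 (QuotientAddGroup.mk (1, 0)) from rfl,
    show kr2 m1 m2 = kof m1 m2 (QuotientAddGroup.mk (0, 1)) from rfl, kof_mul, kof_mul, add_comm]

lemma kr1_kf2_comm : kr1 m1 m2 * kf2 m1 m2 = kf2 m1 m2 * kr1 m1 m2 := by
  have h1 : kr1 m1 m2 * kf2 m1 m2 = ⟨QuotientAddGroup.mk (1, 0), (0, 1)⟩ := by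
    rw [show kr1 m1 m2 = kof m1 m2 (QuotientAddGroup.mk (1, 0)) from rfl, kof_mul']
    exact K.ext' (add_zero _) rfl
  have h2 : kf2 m1 m2 * kr1 m1 m2 = ⟨QuotientAddGroup.mk (1, 0), (0, 1)⟩ := by
    refine K.ext' ?_ ?_
    · show (0 : Qgrp m1 m2) + eact m1 m2 (0,1) (QuotientAddGroup.mk (1, 0))
          + coc m1 m2 (0,1) 0 = QuotientAddGroup.mk (1, 0)
      rw [coc_zero_right, eact_01, n2_mk]
      show (0 : Qgrp m1 m2) + QuotientAddGroup.mk ((1 : ZMod (2*m1)), (-0 : ZMod (2*m2))) + 0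
          = QuotientAddGroup.mk (1, 0)
      norm_num
    · show ((0,1) + (0,0) : ZMod 2 × ZMod 2) = (0,1)
      decide
  rw [h1, h2]

lemma kr2_kf1_comm : kr2 m1 m2 * kf1 m1 m2 = kf1 m1 m2 * kr2 m1 m2 := by
  have h1 : kr2 m1 m2 * kf1 m1 m2 = ⟨QuotientAddGroup.mk (0, 1), (1, 0)⟩ := by
    rw [show kr2 m1 m2 = kof m1 m2 (QuotientAddGroup.mk (0, 1)) from rfl, kof_mul']
    exact K.ext' (add_zero _) rfl
  have h2 : kf1 m1 m2 * kr2 m1 m2 = ⟨QuotientAddGroup.mk (0, 1), (1, 0)⟩ := by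
    refine K.ext' ?_ ?_
    · show (0 : Qgrp m1 m2) + eact m1 m2 (1,0) (QuotientAddGroup.mk (0, 1))
          + coc m1 m2 (1,0) 0 = QuotientAddGroup.mk (0, 1)
      rw [coc_zero_right, eact_10, n1_mk]
      show (0 : Qgrp m1 m2) + QuotientAddGroup.mk ((-0 : ZMod (2*m1)), (1 : ZMod (2*m2))) + 0
          = QuotientAddGroup.mk (0, 1)
      norm_num
    · show ((1,0) + (0,0) : ZMod 2 × ZMod 2) = (1,0)
      decide
  rw [h1, h2]

lemma kf1f2_sq : (kf1 m1 m2 * kf2 m1 m2) ^ 2 = kz m1 m2 := by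
  have h : kf1 m1 m2 * kf2 m1 m2 = ⟨0, (1, 1)⟩ := by
    refine K.ext' ?_ ?_
    · show (0 : Qgrp m1 m2) + eact m1 m2 (1,0) 0 + mm m1 m2 ((0 : ZMod 2) * 0) = 0
      rw [map_zero, zero_mul, mm_zero]
      norm_num
    · show ((1,0) + (0,1) : ZMod 2 × ZMod 2) = (1,1)
      decide
  rw [pow_two, h]
  refine K.ext' ?_ ?_
  · show (0 : Qgrp m1 m2) + eact m1 m2 (1,1) 0 + mm m1 m2 ((1 : ZMod 2) * 1) = zbar m1 m2
    rw [map_zero, one_mul, mm_one]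
    norm_num
  · show ((1,1) + (1,1) : ZMod 2 × ZMod 2) = 0
    decide

def fgen : Gen → K m1 m2
  | Gen.z => kz m1 m2
  | Gen.r1 => kr1 m1 m2
  | Gen.f1 => kf1 m1 m2
  | Gen.r2 => kr2 m1 m2
  | Gen.f2 => kf2 m1 m2

lemma lift_rels : ∀ r ∈ rels m1 m2, FreeGroup.lift (fgen m1 m2) r = 1 := by
  intro r hr
  simp only [rels, Set.mem_insert_iff, Set.mem_singleton_iff] at hr
  rcases hr with rfl|rfl|rfl|rfl|rfl|rfl|rfl|rfl|rfl|rfl|rfl <;>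
    simp only [map_mul, map_pow, map_inv, FreeGroup.lift_apply_of] <;>
    show _ = (1 : K m1 m2)
  · rw [show fgen m1 m2 Gen.r1 = kr1 m1 m2 from rfl,
      show fgen m1 m2 Gen.z = kz m1 m2 from rfl, kr1_pow_m1, mul_inv_cancel]
  · rw [show fgen m1 m2 Gen.r2 = kr2 m1 m2 from rfl,
      show fgen m1 m2 Gen.z = kz m1 m2 from rfl, kr2_pow_m2, mul_inv_cancel]
  · exact kf1_sq m1 m2
  · exact kf2_sq m1 m2
  · exact kr1f1_sq m1 m2
  · exact kr2f2_sq m1 m2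
  · rw [show fgen m1 m2 Gen.r1 = kr1 m1 m2 from rfl,
      show fgen m1 m2 Gen.r2 = kr2 m1 m2 from rfl, kr1_kr2_comm, mul_inv_cancel]
  · rw [show fgen m1 m2 Gen.r1 = kr1 m1 m2 from rfl,
      show fgen m1 m2 Gen.f2 = kf2 m1 m2 from rfl, kr1_kf2_comm, mul_inv_cancel]
  · rw [show fgen m1 m2 Gen.r2 = kr2 m1 m2 from rfl,
      show fgen m1 m2 Gen.f1 = kf1 m1 m2 from rfl, kr2_kf1_comm, mul_inv_cancel]
  · rw [show fgen m1 m2 Gen.f1 = kf1 m1 m2 from rfl,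
      show fgen m1 m2 Gen.f2 = kf2 m1 m2 from rfl,
      show fgen m1 m2 Gen.z = kz m1 m2 from rfl, kf1f2_sq, mul_inv_cancel]
  · rw [show fgen m1 m2 Gen.z = kz m1 m2 from rfl]
    exact kz_sq m1 m2

def piK : Wt m1 m2 →* K m1 m2 := PresentedGroup.toGroup (lift_rels m1 m2)

lemma piK_r1 : piK m1 m2 (wr1 m1 m2) = kr1 m1 m2 := PresentedGroup.toGroup.of _
lemma piK_r2 : piK m1 m2 (wr2 m1 m2) = kr2 m1 m2 := PresentedGroup.toGroup.of _


variable (m1 m2 : ℕ)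

lemma rel_one {r : FreeGroup Gen} (h : r ∈ rels m1 m2) :
    (QuotientGroup.mk r : Wt m1 m2) = 1 := by
  rw [QuotientGroup.eq_one_iff]
  exact Subgroup.subset_normalClosure h

lemma mk_gen (x : Gen) :
    (QuotientGroup.mk (FreeGroup.of x) : Wt m1 m2) = PresentedGroup.of x := rfl

lemma w_r1z : wr1 m1 m2 ^ m1 = wz m1 m2 := by
  have h := rel_one m1 m2 (show FreeGroup.of Gen.r1 ^ m1 * (FreeGroup.of Gen.z)⁻¹ ∈ rels m1 m2
    from Set.mem_insert _ _)
  rw [QuotientGroup.mk_mul, QuotientGroup.mk_pow, QuotientGroup.mk_inv, mk_gen, mk_gen,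
    ] at h
  exact mul_inv_eq_one.mp h

lemma w_r2z : wr2 m1 m2 ^ m2 = wz m1 m2 := by
  have h := rel_one m1 m2 (show FreeGroup.of Gen.r2 ^ m2 * (FreeGroup.of Gen.z)⁻¹ ∈ rels m1 m2
    from Set.mem_insert_of_mem _ (Set.mem_insert _ _))
  rw [QuotientGroup.mk_mul, QuotientGroup.mk_pow, QuotientGroup.mk_inv, mk_gen, mk_gen,
    ] at h
  exact mul_inv_eq_one.mp h

lemma w_z2 : wz m1 m2 ^ 2 = 1 := by
  have h := rel_one m1 m2 (show FreeGroup.of Gen.z ^ 2 ∈ rels m1 m2 by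
    simp [rels, Set.mem_insert_iff])
  rw [QuotientGroup.mk_pow, mk_gen] at h
  exact h

lemma w_comm : Commute (wr1 m1 m2) (wr2 m1 m2) := by
  have h := rel_one m1 m2 (show FreeGroup.of Gen.r1 * FreeGroup.of Gen.r2
      * (FreeGroup.of Gen.r2 * FreeGroup.of Gen.r1)⁻¹ ∈ rels m1 m2 by
    simp [rels, Set.mem_insert_iff])
  rw [QuotientGroup.mk_mul, QuotientGroup.mk_inv, QuotientGroup.mk_mul, QuotientGroup.mk_mul,
    mk_gen, mk_gen, mul_inv_eq_one] at h
  exact h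

lemma w_r1_order : wr1 m1 m2 ^ (2 * m1) = 1 := by
  rw [mul_comm, pow_mul, w_r1z, w_z2]

lemma w_r2_order : wr2 m1 m2 ^ (2 * m2) = 1 := by
  rw [mul_comm, pow_mul, w_r2z, w_z2]

def grp1 : ZMod (2 * m1) →+ Additive (Wt m1 m2) :=
  ZMod.lift (2 * m1) ⟨zmultiplesHom (Additive (Wt m1 m2)) (Additive.ofMul (wr1 m1 m2)), by
    show ((2 * m1 : ℕ) : ℤ) • Additive.ofMul (wr1 m1 m2) = 0
    rw [← ofMul_zpow, zpow_natCast, w_r1_order]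
    rfl⟩

def grp2 : ZMod (2 * m2) →+ Additive (Wt m1 m2) :=
  ZMod.lift (2 * m2) ⟨zmultiplesHom (Additive (Wt m1 m2)) (Additive.ofMul (wr2 m1 m2)), by
    show ((2 * m2 : ℕ) : ℤ) • Additive.ofMul (wr2 m1 m2) = 0
    rw [← ofMul_zpow, zpow_natCast, w_r2_order]
    rfl⟩

lemma grp1_apply (i : ℤ) :
    grp1 m1 m2 ((i : ℤ) : ZMod (2 * m1)) = Additive.ofMul (wr1 m1 m2 ^ i) := by
  rw [grp1, ZMod.lift_coe]
  show i • Additive.ofMul (wr1 m1 m2) = _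
  rw [← ofMul_zpow]

lemma grp2_apply (i : ℤ) :
    grp2 m1 m2 ((i : ℤ) : ZMod (2 * m2)) = Additive.ofMul (wr2 m1 m2 ^ i) := by
  rw [grp2, ZMod.lift_coe]
  show i • Additive.ofMul (wr2 m1 m2) = _
  rw [← ofMul_zpow]

lemma grp_commute (a : ZMod (2 * m1)) (b : ZMod (2 * m2)) :
    AddCommute (grp1 m1 m2 a) (grp2 m1 m2 b) := by
  obtain ⟨i, rfl⟩ := ZMod.intCast_surjective a
  obtain ⟨j, rfl⟩ := ZMod.intCast_surjective b
  rw [grp1_apply, grp2_apply]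
  have h := ((w_comm m1 m2).zpow_zpow i j).eq
  show Additive.ofMul _ + Additive.ofMul _ = Additive.ofMul _ + Additive.ofMul _
  rw [← ofMul_mul, ← ofMul_mul, h]

def fA : Agrp m1 m2 →+ Additive (Wt m1 m2) :=
  AddMonoidHom.noncommCoprod (grp1 m1 m2) (grp2 m1 m2) (grp_commute m1 m2)

lemma fA_apply (a : ZMod (2 * m1)) (b : ZMod (2 * m2)) :
    fA m1 m2 (a, b) = grp1 m1 m2 a + grp2 m1 m2 b := rfl

lemma fA_kills : ∀ x ∈ AddSubgroup.zmultiples (zel m1 m2), fA m1 m2 x = 0 := by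
  intro x hx
  obtain ⟨k, rfl⟩ := AddSubgroup.mem_zmultiples_iff.mp hx
  rw [map_zsmul]
  have hz : fA m1 m2 (zel m1 m2) = 0 := by
    rw [zel, fA_apply]
    rw [show ((m1 : ℕ) : ZMod (2 * m1)) = (((m1 : ℕ) : ℤ) : ZMod (2 * m1)) by push_cast; ring,
      show ((m2 : ℕ) : ZMod (2 * m2)) = (((m2 : ℕ) : ℤ) : ZMod (2 * m2)) by push_cast; ring,
      grp1_apply, grp2_apply, zpow_natCast, zpow_natCast, w_r1z, w_r2z, ← ofMul_mul,
      ← pow_two, w_z2]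
    rfl
  rw [hz, smul_zero]

def psiAdd : Qgrp m1 m2 →+ Additive (Wt m1 m2) :=
  QuotientAddGroup.lift (AddSubgroup.zmultiples (zel m1 m2)) (fA m1 m2)
    (fun x hx => AddMonoidHom.mem_ker.mpr (fA_kills m1 m2 x hx))

def psi : Multiplicative (Qgrp m1 m2) →* Wt m1 m2 :=
  AddMonoidHom.toMultiplicativeLeft (psiAdd m1 m2)

lemma psi_apply_int (i j : ℤ) :
    psi m1 m2 (Multiplicative.ofAdd (QuotientAddGroup.mk
        (((i : ℤ) : ZMod (2 * m1)), ((j : ℤ) : ZMod (2 * m2)))))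
      = wr1 m1 m2 ^ i * wr2 m1 m2 ^ j := by
  show Additive.toMul (psiAdd m1 m2 (QuotientAddGroup.mk _)) = _
  rw [psiAdd, QuotientAddGroup.lift_mk, fA_apply, grp1_apply, grp2_apply, ← ofMul_mul]
  rfl

lemma psi_apply_nat (a b : ℕ) :
    psi m1 m2 (Multiplicative.ofAdd (QuotientAddGroup.mk
        (((a : ℕ) : ZMod (2 * m1)), ((b : ℕ) : ZMod (2 * m2)))))
      = wr1 m1 m2 ^ a * wr2 m1 m2 ^ b := by
  have := psi_apply_int m1 m2 (a : ℤ) (b : ℤ)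
  rw [zpow_natCast, zpow_natCast] at this
  rw [← this]
  norm_num

lemma psi_r1 : psi m1 m2 (Multiplicative.ofAdd (QuotientAddGroup.mk
    ((1 : ZMod (2 * m1)), (0 : ZMod (2 * m2))))) = wr1 m1 m2 := by
  have := psi_apply_int m1 m2 1 0
  rw [zpow_one, zpow_zero, mul_one] at this
  rw [← this]
  norm_num

lemma psi_r2 : psi m1 m2 (Multiplicative.ofAdd (QuotientAddGroup.mk
    ((0 : ZMod (2 * m1)), (1 : ZMod (2 * m2))))) = wr2 m1 m2 := by
  have := psi_apply_int m1 m2 0 1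
  rw [zpow_one, zpow_zero, one_mul] at this
  rw [← this]
  norm_num

lemma kof_eq_one {q : Qgrp m1 m2} (h : kof m1 m2 q = 1) : q = 0 := congrArg K.a h

lemma psi_injective : Function.Injective (psi m1 m2) := by
  rw [injective_iff_map_eq_one]
  intro q hq
  obtain ⟨p, hp⟩ : ∃ p : Agrp m1 m2,
      Multiplicative.ofAdd (QuotientAddGroup.mk p) = q := by
    obtain ⟨p, hp⟩ := QuotientAddGroup.mk_surjective (Multiplicative.toAdd q)
    exact ⟨p, by rw [hp]; rfl⟩
  obtain ⟨i, hi⟩ := ZMod.intCast_surjective p.1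
  obtain ⟨j, hj⟩ := ZMod.intCast_surjective p.2
  have hp2 : p = (((i : ℤ) : ZMod (2 * m1)), ((j : ℤ) : ZMod (2 * m2))) := by
    rw [Prod.ext_iff]; exact ⟨hi.symm, hj.symm⟩
  rw [← hp, hp2, psi_apply_int] at hq
  have h2 := congrArg (piK m1 m2) hq
  rw [map_one, map_mul, map_zpow, map_zpow, piK_r1, piK_r2] at h2
  -- compute kr1 ^ i * kr2 ^ j in K
  have hk1 : ∀ k : ℤ, kr1 m1 m2 ^ k
      = kof m1 m2 (QuotientAddGroup.mk (((k : ℤ) : ZMod (2 * m1)), 0)) := by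
    intro k
    induction k using Int.induction_on with
    | zero =>
      rw [zpow_zero]
      symm
      refine K.ext' ?_ rfl
      show (QuotientAddGroup.mk (((0 : ℤ) : ZMod (2*m1)), (0 : ZMod (2*m2))) : Qgrp m1 m2) = 0
      norm_num
      exact zero_mem _
    | succ n ih =>
      rw [zpow_add_one, ih, show kr1 m1 m2 = kof m1 m2 (QuotientAddGroup.mk (1, 0)) from rfl,
        kof_mul, ← QuotientAddGroup.mk_add]
      congr 2
      simp only [Prod.mk_add_mk, Prod.mk.injEq]
      constructor <;> (push_cast; ring)
    | pred n ih =>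
      rw [zpow_sub_one, ih]
      have hinv : (kof m1 m2 (QuotientAddGroup.mk (1, 0)))⁻¹
          = kof m1 m2 (QuotientAddGroup.mk (-1, 0)) := by
        refine K.ext' ?_ rfl
        show -(eact m1 m2 0 (QuotientAddGroup.mk (1, 0))) - coc m1 m2 0 0
            = QuotientAddGroup.mk ((-1 : ZMod (2*m1)), (0 : ZMod (2*m2)))
        rw [eact_zero, coc_zero_left]
        show -(QuotientAddGroup.mk ((1 : ZMod (2*m1)), (0 : ZMod (2*m2))) : Qgrp m1 m2) - 0 = _
        rw [sub_zero, ← QuotientAddGroup.mk_neg]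
        norm_num
      rw [show kr1 m1 m2 = kof m1 m2 (QuotientAddGroup.mk (1, 0)) from rfl, hinv,
        kof_mul, ← QuotientAddGroup.mk_add]
      congr 2
      simp only [Prod.mk_add_mk, Prod.mk.injEq]
      constructor <;> (push_cast; ring)
  have hk2 : ∀ k : ℤ, kr2 m1 m2 ^ k
      = kof m1 m2 (QuotientAddGroup.mk (0, ((k : ℤ) : ZMod (2 * m2)))) := by
    intro k
    induction k using Int.induction_on with
    | zero =>
      rw [zpow_zero]
      symm
      refine K.ext' ?_ rfl
      show (QuotientAddGroup.mk ((0 : ZMod (2*m1)), ((0 : ℤ) : ZMod (2*m2))) : Qgrp m1 m2) = 0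
      norm_num
      exact zero_mem _
    | succ n ih =>
      rw [zpow_add_one, ih, show kr2 m1 m2 = kof m1 m2 (QuotientAddGroup.mk (0, 1)) from rfl,
        kof_mul, ← QuotientAddGroup.mk_add]
      congr 2
      simp only [Prod.mk_add_mk, Prod.mk.injEq]
      constructor <;> (push_cast; ring)
    | pred n ih =>
      rw [zpow_sub_one, ih]
      have hinv : (kof m1 m2 (QuotientAddGroup.mk (0, 1)))⁻¹
          = kof m1 m2 (QuotientAddGroup.mk (0, -1)) := by
        refine K.ext' ?_ rfl
        show -(eact m1 m2 0 (QuotientAddGroup.mk (0, 1))) - coc m1 m2 0 0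
            = QuotientAddGroup.mk ((0 : ZMod (2*m1)), (-1 : ZMod (2*m2)))
        rw [eact_zero, coc_zero_left]
        show -(QuotientAddGroup.mk ((0 : ZMod (2*m1)), (1 : ZMod (2*m2))) : Qgrp m1 m2) - 0 = _
        rw [sub_zero, ← QuotientAddGroup.mk_neg]
        norm_num
      rw [show kr2 m1 m2 = kof m1 m2 (QuotientAddGroup.mk (0, 1)) from rfl, hinv,
        kof_mul, ← QuotientAddGroup.mk_add]
      congr 2
      simp only [Prod.mk_add_mk, Prod.mk.injEq]
      constructor <;> (push_cast; ring)
  rw [hk1, hk2, kof_mul, ← QuotientAddGroup.mk_add] at h2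
  have h3 := kof_eq_one m1 m2 h2
  have h4 : (QuotientAddGroup.mk p : Qgrp m1 m2) = 0 := by
    rw [hp2, ← h3]
    congr 1
    norm_num
  rw [← hp, h4]
  rfl

lemma psi_mem_closure (q : Multiplicative (Qgrp m1 m2)) :
    psi m1 m2 q ∈ Subgroup.closure {wr1 m1 m2, wr2 m1 m2} := by
  obtain ⟨p, hp⟩ : ∃ p : Agrp m1 m2,
      Multiplicative.ofAdd (QuotientAddGroup.mk p) = q := by
    obtain ⟨p, hp⟩ := QuotientAddGroup.mk_surjective (Multiplicative.toAdd q)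
    exact ⟨p, by rw [hp]; rfl⟩
  obtain ⟨i, hi⟩ := ZMod.intCast_surjective p.1
  obtain ⟨j, hj⟩ := ZMod.intCast_surjective p.2
  have hp2 : p = (((i : ℤ) : ZMod (2 * m1)), ((j : ℤ) : ZMod (2 * m2))) := by
    rw [Prod.ext_iff]; exact ⟨hi.symm, hj.symm⟩
  rw [← hp, hp2, psi_apply_int]
  have hmem1 : wr1 m1 m2 ∈ Subgroup.closure {wr1 m1 m2, wr2 m1 m2} :=
    Subgroup.subset_closure (Set.mem_insert _ _)
  have hmem2 : wr2 m1 m2 ∈ Subgroup.closure {wr1 m1 m2, wr2 m1 m2} :=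
    Subgroup.subset_closure (Set.mem_insert_of_mem _ rfl)
  exact mul_mem (Subgroup.zpow_mem _ hmem1 i) (Subgroup.zpow_mem _ hmem2 j)

lemma psi_range : (psi m1 m2).range = Subgroup.closure {wr1 m1 m2, wr2 m1 m2} := by
  apply le_antisymm
  · rintro x ⟨q, rfl⟩
    exact psi_mem_closure m1 m2 q
  · rw [Subgroup.closure_le]
    rintro x (rfl | rfl)
    · exact ⟨_, psi_r1 m1 m2⟩
    · exact ⟨_, psi_r2 m1 m2⟩


/-- The subgroup of `W̃(m1,m2)` generated by `r1` and `r2` is isomorphic to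
`(ZMod (2 m1) × ZMod (2 m2)) / ⟨(m1, m2)⟩`, via an isomorphism sending `r1` to the
class of `(1,0)` and `r2` to the class of `(0,1)`; in particular it is abelian of
order `2 m1 m2`. -/
theorem even_subgroup_iso (m1 m2 : ℕ) (h1 : 1 ≤ m1) (h2 : 1 ≤ m2) :
    (∃ φ : (Subgroup.closure {wr1 m1 m2, wr2 m1 m2} : Subgroup (Wt m1 m2)) ≃*
        Multiplicative ((ZMod (2 * m1) × ZMod (2 * m2)) ⧸
          AddSubgroup.zmultiples ((m1 : ZMod (2 * m1)), (m2 : ZMod (2 * m2)))),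
      φ ⟨wr1 m1 m2, Subgroup.subset_closure (Set.mem_insert _ _)⟩ =
        Multiplicative.ofAdd
          (QuotientAddGroup.mk ((1 : ZMod (2 * m1)), (0 : ZMod (2 * m2)))) ∧
      φ ⟨wr2 m1 m2, Subgroup.subset_closure (Set.mem_insert_of_mem _ rfl)⟩ =
        Multiplicative.ofAdd
          (QuotientAddGroup.mk ((0 : ZMod (2 * m1)), (1 : ZMod (2 * m2))))) ∧
    (∀ a b : (Subgroup.closure {wr1 m1 m2, wr2 m1 m2} : Subgroup (Wt m1 m2)),
      a * b = b * a) ∧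
    Nat.card (Subgroup.closure {wr1 m1 m2, wr2 m1 m2} : Subgroup (Wt m1 m2))
      = 2 * m1 * m2 := by
  haveI : NeZero (2 * m1) := ⟨by omega⟩
  haveI : NeZero (2 * m2) := ⟨by omega⟩
  have hinj := psi_injective m1 m2
  have hrange := psi_range m1 m2
  let e1 : (Subgroup.closure {wr1 m1 m2, wr2 m1 m2} : Subgroup (Wt m1 m2)) ≃*
      (psi m1 m2).range := MulEquiv.subgroupCongr hrange.symm
  let e2 : Multiplicative (Qgrp m1 m2) ≃* (psi m1 m2).range := MonoidHom.ofInjective hinj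
  refine ⟨⟨e1.trans e2.symm, ?_, ?_⟩, ?_, ?_⟩
  · have key : MonoidHom.ofInjective hinj (Multiplicative.ofAdd (QuotientAddGroup.mk
        ((1 : ZMod (2 * m1)), (0 : ZMod (2 * m2)))))
        = e1 ⟨wr1 m1 m2, Subgroup.subset_closure (Set.mem_insert _ _)⟩ := by
      apply Subtype.ext
      rw [MonoidHom.ofInjective_apply]
      exact psi_r1 m1 m2
    show e2.symm (e1 _) = _
    rw [show e2 = MonoidHom.ofInjective hinj from rfl, ← key, MulEquiv.symm_apply_apply]
    rfl
  · have key : MonoidHom.ofInjective hinj (Multiplicative.ofAdd (QuotientAddGroup.mk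
        ((0 : ZMod (2 * m1)), (1 : ZMod (2 * m2)))))
        = e1 ⟨wr2 m1 m2, Subgroup.subset_closure (Set.mem_insert_of_mem _ rfl)⟩ := by
      apply Subtype.ext
      rw [MonoidHom.ofInjective_apply]
      exact psi_r2 m1 m2
    show e2.symm (e1 _) = _
    rw [show e2 = MonoidHom.ofInjective hinj from rfl, ← key, MulEquiv.symm_apply_apply]
    rfl
  · intro a b
    have ha : (a : Wt m1 m2) ∈ (psi m1 m2).range := by rw [hrange]; exact a.2
    have hb : (b : Wt m1 m2) ∈ (psi m1 m2).range := by rw [hrange]; exact b.2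
    obtain ⟨qa, hqa⟩ := ha
    obtain ⟨qb, hqb⟩ := hb
    apply Subtype.ext
    show (a : Wt m1 m2) * b = (b : Wt m1 m2) * a
    rw [← hqa, ← hqb, ← map_mul, ← map_mul]
    exact congrArg (psi m1 m2) (mul_comm qa qb)
  · have hc1 : Nat.card (Subgroup.closure {wr1 m1 m2, wr2 m1 m2} : Subgroup (Wt m1 m2))
        = Nat.card (Multiplicative (Qgrp m1 m2)) :=
      Nat.card_congr (e1.trans e2.symm).toEquiv
    have hc2 : Nat.card (Multiplicative (Qgrp m1 m2)) = Nat.card (Qgrp m1 m2) :=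
      Nat.card_congr Multiplicative.toAdd
    have hA : Nat.card (Agrp m1 m2) = 2 * m1 * (2 * m2) := by
      rw [Nat.card_prod, Nat.card_zmod, Nat.card_zmod]
    have hgcd1 : Nat.gcd (2 * m1) m1 = m1 := by
      have h := Nat.gcd_mul_left m1 2 1
      rw [mul_one, Nat.mul_comm m1 2] at h
      simpa using h
    have hgcd2 : Nat.gcd (2 * m2) m2 = m2 := by
      have h := Nat.gcd_mul_left m2 2 1
      rw [mul_one, Nat.mul_comm m2 2] at h
      simpa using h
    have hdiv1 : 2 * m1 / m1 = 2 := by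
      rw [Nat.mul_div_assoc 2 dvd_rfl, Nat.div_self (by omega : 0 < m1), mul_one]
    have hdiv2 : 2 * m2 / m2 = 2 := by
      rw [Nat.mul_div_assoc 2 dvd_rfl, Nat.div_self (by omega : 0 < m2), mul_one]
    have hord : addOrderOf (zel m1 m2) = 2 := by
      rw [zel, Prod.addOrderOf]
      show Nat.lcm (addOrderOf ((m1 : ℕ) : ZMod (2 * m1)))
          (addOrderOf ((m2 : ℕ) : ZMod (2 * m2))) = 2
      rw [ZMod.addOrderOf_coe _ (by omega : 2 * m1 ≠ 0),
        ZMod.addOrderOf_coe _ (by omega : 2 * m2 ≠ 0), hgcd1, hgcd2, hdiv1, hdiv2,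
        Nat.lcm_self]
    have hH2 : Nat.card (AddSubgroup.zmultiples (zel m1 m2)) = 2 := by
      rw [Nat.card_zmultiples, hord]
    have hquot := AddSubgroup.card_eq_card_quotient_mul_card_addSubgroup
      (AddSubgroup.zmultiples (zel m1 m2))
    rw [hA, hH2] at hquot
    rw [hc1, hc2]
    have h4 : Nat.card (Qgrp m1 m2) * 2 = (2 * m1 * m2) * 2 := by
      rw [← hquot]; ring
    exact Nat.eq_of_mul_eq_mul_right (by norm_num) h4


end Stmt3
end

section
/- Let W̃ = W̃(m1,m2) and let ℓ1, ℓ2 be odd integers. The assignments defining U(ℓ1,ℓ2) respect all defining relations of W̃ and hence define a group representation U(ℓ1,ℓ2) : W̃ → GL(ℂ⁴) in which z acts as −Id (a spin representation). Moreover, if in addition 0 < ℓ1 < m1 and 0 < ℓ2 < m2, then U(ℓ1,ℓ2) is irreducible, i.e., the only subspaces of ℂ⁴ invariant under all U(ℓ1,ℓ2)(w), w ∈ W̃, are 0 and ℂ⁴. -/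
namespace Stmt5

/-- Generators of the double cover `W̃(m1, m2)`. -/
inductive Gen | z | r1 | f1 | r2 | f2

open FreeGroup in
/-- Defining relations of `W̃(m1, m2)`:
`r1^{m1} = z`, `r2^{m2} = z`, `f1^2 = 1`, `f2^2 = 1`, `(r1 f1)^2 = 1`, `(r2 f2)^2 = 1`,
`r1 r2 = r2 r1`, `r1 f2 = f2 r1`, `r2 f1 = f1 r2`, `(f1 f2)^2 = z`, `z^2 = 1`. -/
def rels (m1 m2 : ℕ) : Set (FreeGroup Gen) :=
  { of Gen.r1 ^ m1 * (of Gen.z)⁻¹,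
    of Gen.r2 ^ m2 * (of Gen.z)⁻¹,
    of Gen.f1 ^ 2,
    of Gen.f2 ^ 2,
    (of Gen.r1 * of Gen.f1) ^ 2,
    (of Gen.r2 * of Gen.f2) ^ 2,
    of Gen.r1 * of Gen.r2 * (of Gen.r2 * of Gen.r1)⁻¹,
    of Gen.r1 * of Gen.f2 * (of Gen.f2 * of Gen.r1)⁻¹,
    of Gen.r2 * of Gen.f1 * (of Gen.f1 * of Gen.r2)⁻¹,
    (of Gen.f1 * of Gen.f2) ^ 2 * (of Gen.z)⁻¹,
    of Gen.z ^ 2 }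

/-- The double cover `W̃(m1, m2)` of `D_{2m1} × D_{2m2}`, as a presented group. -/
abbrev Wt (m1 m2 : ℕ) := PresentedGroup (rels m1 m2)

def wz (m1 m2 : ℕ) : Wt m1 m2 := PresentedGroup.of Gen.z
def wr1 (m1 m2 : ℕ) : Wt m1 m2 := PresentedGroup.of Gen.r1
def wf1 (m1 m2 : ℕ) : Wt m1 m2 := PresentedGroup.of Gen.f1
def wr2 (m1 m2 : ℕ) : Wt m1 m2 := PresentedGroup.of Gen.r2
def wf2 (m1 m2 : ℕ) : Wt m1 m2 := PresentedGroup.of Gen.f2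

/-- `ζ m = exp(i π / m)`. -/
noncomputable def ζ (m : ℕ) : ℂ := Complex.exp (Real.pi * Complex.I / m)

/-- The matrix by which `f1` acts in `U(ℓ1,ℓ2)`. -/
def F1 : Matrix (Fin 4) (Fin 4) ℂ :=
  !![0, 1, 0, 0; 1, 0, 0, 0; 0, 0, 0, 1; 0, 0, 1, 0]

/-- The matrix by which `f2` acts in `U(ℓ1,ℓ2)`. -/
def F2 : Matrix (Fin 4) (Fin 4) ℂ :=
  !![0, 0, 1, 0; 0, 0, 0, -1; 1, 0, 0, 0; 0, -1, 0, 0]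

/-- The matrix `diag(ζ1^{ℓ1}, ζ1^{-ℓ1}, ζ1^{ℓ1}, ζ1^{-ℓ1})` by which `r1` acts. -/
noncomputable def R1 (m1 : ℕ) (ℓ1 : ℤ) : Matrix (Fin 4) (Fin 4) ℂ :=
  Matrix.diagonal ![ζ m1 ^ ℓ1, ζ m1 ^ (-ℓ1), ζ m1 ^ ℓ1, ζ m1 ^ (-ℓ1)]

/-- The matrix `diag(ζ2^{ℓ2}, ζ2^{ℓ2}, ζ2^{-ℓ2}, ζ2^{-ℓ2})` by which `r2` acts. -/
noncomputable def R2 (m2 : ℕ) (ℓ2 : ℤ) : Matrix (Fin 4) (Fin 4) ℂ :=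
  Matrix.diagonal ![ζ m2 ^ ℓ2, ζ m2 ^ ℓ2, ζ m2 ^ (-ℓ2), ζ m2 ^ (-ℓ2)]

/-- `ρ` is the representation `U(ℓ1,ℓ2)` of `W̃(m1,m2)`: the generators act by the
prescribed matrices (and `z` by `-Id`). -/
def IsU4 (m1 m2 : ℕ) (ℓ1 ℓ2 : ℤ) (ρ : Wt m1 m2 →* GL (Fin 4) ℂ) : Prop :=
  (ρ (wf1 m1 m2) : Matrix (Fin 4) (Fin 4) ℂ) = F1 ∧
  (ρ (wf2 m1 m2) : Matrix (Fin 4) (Fin 4) ℂ) = F2 ∧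
  (ρ (wr1 m1 m2) : Matrix (Fin 4) (Fin 4) ℂ) = R1 m1 ℓ1 ∧
  (ρ (wr2 m1 m2) : Matrix (Fin 4) (Fin 4) ℂ) = R2 m2 ℓ2 ∧
  (ρ (wz m1 m2) : Matrix (Fin 4) (Fin 4) ℂ) = -1

/-- Irreducibility of a matrix representation: the only invariant subspaces of `ℂ⁴`
are `0` and `ℂ⁴`. -/
def Irreducible4 {m1 m2 : ℕ} (ρ : Wt m1 m2 →* GL (Fin 4) ℂ) : Prop :=
  ∀ p : Submodule ℂ (Fin 4 → ℂ),
    (∀ w : Wt m1 m2, ∀ v ∈ p, Matrix.mulVec (ρ w : Matrix (Fin 4) (Fin 4) ℂ) v ∈ p) →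
    p = ⊥ ∨ p = ⊤

/-- Two matrix representations of `W̃(m1,m2)` on `ℂ⁴` are isomorphic: there is an
invertible intertwining linear map `ℂ⁴ → ℂ⁴`. -/
def Equiv4 {m1 m2 : ℕ} (ρ ρ' : Wt m1 m2 →* GL (Fin 4) ℂ) : Prop :=
  ∃ T : (Fin 4 → ℂ) ≃ₗ[ℂ] (Fin 4 → ℂ), ∀ (w : Wt m1 m2) (v : Fin 4 → ℂ),
    T (Matrix.mulVec (ρ w : Matrix (Fin 4) (Fin 4) ℂ) v)
      = Matrix.mulVec (ρ' w : Matrix (Fin 4) (Fin 4) ℂ) (T v)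


section Aux

open Matrix

lemma zeta_ne_zero (m : ℕ) : ζ m ≠ 0 := Complex.exp_ne_zero _

lemma zeta_zpow_ne_zero (m : ℕ) (ℓ : ℤ) : ζ m ^ ℓ ≠ 0 := zpow_ne_zero _ (zeta_ne_zero m)

lemma zeta_pow_m (m : ℕ) (h : 1 ≤ m) : ζ m ^ m = -1 := by
  rw [ζ, ← Complex.exp_nat_mul]
  have hm : (m : ℂ) ≠ 0 := Nat.cast_ne_zero.mpr (by omega)
  rw [mul_div_assoc', mul_comm, mul_div_assoc, div_self hm, mul_one, Complex.exp_mul_I]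
  simp [Real.cos_pi, Real.sin_pi]

lemma zpow_pow_comm (a : ℂ) (ha : a ≠ 0) (ℓ : ℤ) (m : ℕ) : (a ^ ℓ) ^ m = (a ^ m) ^ ℓ := by
  lift a to ℂˣ using Ne.isUnit ha
  rw [← Units.val_pow_eq_pow_val, ← Units.val_zpow_eq_zpow_val, ← Units.val_zpow_eq_zpow_val,
    ← Units.val_pow_eq_pow_val, ← zpow_natCast, ← _root_.zpow_mul, ← zpow_natCast a m, ← _root_.zpow_mul,
    mul_comm]

lemma zeta_zpow_pow (m : ℕ) (h : 1 ≤ m) (ℓ : ℤ) (hℓ : Odd ℓ) : (ζ m ^ ℓ) ^ m = -1 := by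
  rw [zpow_pow_comm _ (zeta_ne_zero m), zeta_pow_m m h, Odd.neg_one_zpow hℓ]

lemma zeta_mul_inv (m : ℕ) (ℓ : ℤ) : ζ m ^ ℓ * ζ m ^ (-ℓ) = 1 := by
  rw [_root_.zpow_neg, mul_inv_cancel₀ (zeta_zpow_ne_zero m ℓ)]

lemma zeta_inv_mul (m : ℕ) (ℓ : ℤ) : ζ m ^ (-ℓ) * ζ m ^ ℓ = 1 := by
  rw [mul_comm, zeta_mul_inv]

lemma F1_mul_F1 : F1 * F1 = 1 := by
  ext i j
  fin_cases i <;> fin_cases j <;>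
    simp [F1, Matrix.mul_apply, Fin.sum_univ_four, Matrix.one_apply, Matrix.vecHead, Matrix.vecTail]

lemma F2_mul_F2 : F2 * F2 = 1 := by
  ext i j
  fin_cases i <;> fin_cases j <;>
    simp [F2, Matrix.mul_apply, Fin.sum_univ_four, Matrix.one_apply, Matrix.vecHead, Matrix.vecTail]

lemma R1_mul_R1_neg (m : ℕ) (ℓ : ℤ) : R1 m ℓ * R1 m (-ℓ) = 1 := by
  have h := zeta_zpow_ne_zero m ℓ
  ext i j
  rw [R1, R1, Matrix.diagonal_mul_diagonal]
  fin_cases i <;> fin_cases j <;>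
    simp [Matrix.diagonal, Matrix.one_apply, _root_.zpow_neg, mul_inv_cancel₀ h,
      inv_mul_cancel₀ h, Matrix.vecHead, Matrix.vecTail]

lemma R1_neg_mul_R1 (m : ℕ) (ℓ : ℤ) : R1 m (-ℓ) * R1 m ℓ = 1 := by
  have := R1_mul_R1_neg m (-ℓ); rwa [neg_neg] at this

lemma R2_mul_R2_neg (m : ℕ) (ℓ : ℤ) : R2 m ℓ * R2 m (-ℓ) = 1 := by
  have h := zeta_zpow_ne_zero m ℓ
  ext i j
  rw [R2, R2, Matrix.diagonal_mul_diagonal]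
  fin_cases i <;> fin_cases j <;>
    simp [Matrix.diagonal, Matrix.one_apply, _root_.zpow_neg, mul_inv_cancel₀ h,
      inv_mul_cancel₀ h, Matrix.vecHead, Matrix.vecTail]

lemma R2_neg_mul_R2 (m : ℕ) (ℓ : ℤ) : R2 m (-ℓ) * R2 m ℓ = 1 := by
  have := R2_mul_R2_neg m (-ℓ); rwa [neg_neg] at this

lemma R1_pow (m : ℕ) (h : 1 ≤ m) (ℓ : ℤ) (hℓ : Odd ℓ) : R1 m ℓ ^ m = (-1 : Matrix (Fin 4) (Fin 4) ℂ) := by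
  rw [R1, Matrix.diagonal_pow]
  ext i j
  have h1 := zeta_zpow_pow m h ℓ hℓ
  have h2 : (ζ m ^ (-ℓ)) ^ m = -1 := by
    rw [_root_.zpow_neg, inv_pow, h1]; norm_num
  fin_cases i <;> fin_cases j <;>
    simp [Matrix.diagonal, Matrix.one_apply, h1, h2, inv_neg, inv_one]

lemma R2_pow (m : ℕ) (h : 1 ≤ m) (ℓ : ℤ) (hℓ : Odd ℓ) : R2 m ℓ ^ m = (-1 : Matrix (Fin 4) (Fin 4) ℂ) := by
  rw [R2, Matrix.diagonal_pow]
  ext i j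
  have h1 := zeta_zpow_pow m h ℓ hℓ
  have h2 : (ζ m ^ (-ℓ)) ^ m = -1 := by
    rw [_root_.zpow_neg, inv_pow, h1]; norm_num
  fin_cases i <;> fin_cases j <;>
    simp [Matrix.diagonal, Matrix.one_apply, h1, h2, inv_neg, inv_one]

lemma R1F1_sq (m : ℕ) (ℓ : ℤ) : (R1 m ℓ * F1) * (R1 m ℓ * F1) = 1 := by
  have h := zeta_zpow_ne_zero m ℓ
  ext i j
  fin_cases i <;> fin_cases j <;>
    simp [R1, F1, Matrix.mul_apply, Fin.sum_univ_four, Matrix.diagonal, Matrix.one_apply,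
      mul_inv_cancel₀ h, inv_mul_cancel₀ h, Matrix.vecHead, Matrix.vecTail]

lemma R2F2_sq (m : ℕ) (ℓ : ℤ) : (R2 m ℓ * F2) * (R2 m ℓ * F2) = 1 := by
  have h := zeta_zpow_ne_zero m ℓ
  ext i j
  fin_cases i <;> fin_cases j <;>
    simp [R2, F2, Matrix.mul_apply, Fin.sum_univ_four, Matrix.diagonal, Matrix.one_apply,
      mul_inv_cancel₀ h, inv_mul_cancel₀ h, Matrix.vecHead, Matrix.vecTail]

lemma R1R2_comm (m1 m2 : ℕ) (ℓ1 ℓ2 : ℤ) : R1 m1 ℓ1 * R2 m2 ℓ2 = R2 m2 ℓ2 * R1 m1 ℓ1 := by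
  ext i j
  rw [R1, R2, Matrix.diagonal_mul_diagonal, Matrix.diagonal_mul_diagonal]
  fin_cases i <;> fin_cases j <;>
    simp [Matrix.diagonal, Matrix.vecHead, Matrix.vecTail, mul_comm]

lemma R1F2_comm (m : ℕ) (ℓ : ℤ) : R1 m ℓ * F2 = F2 * R1 m ℓ := by
  ext i j
  fin_cases i <;> fin_cases j <;>
    simp [R1, F2, Matrix.mul_apply, Fin.sum_univ_four, Matrix.diagonal,
      Matrix.vecHead, Matrix.vecTail, mul_comm]

lemma R2F1_comm (m : ℕ) (ℓ : ℤ) : R2 m ℓ * F1 = F1 * R2 m ℓ := by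
  ext i j
  fin_cases i <;> fin_cases j <;>
    simp [R2, F1, Matrix.mul_apply, Fin.sum_univ_four, Matrix.diagonal,
      Matrix.vecHead, Matrix.vecTail, mul_comm]

lemma F1F2_sq : (F1 * F2) * (F1 * F2) = (-1 : Matrix (Fin 4) (Fin 4) ℂ) := by
  ext i j
  fin_cases i <;> fin_cases j <;>
    simp [F1, F2, Matrix.mul_apply, Fin.sum_univ_four, Matrix.one_apply, Matrix.vecHead, Matrix.vecTail]

/-- The images of the generators, as invertible matrices. -/
noncomputable def genMap (m1 m2 : ℕ) (ℓ1 ℓ2 : ℤ) : Gen → GL (Fin 4) ℂ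
  | Gen.z => -1
  | Gen.r1 => ⟨R1 m1 ℓ1, R1 m1 (-ℓ1), R1_mul_R1_neg m1 ℓ1, R1_neg_mul_R1 m1 ℓ1⟩
  | Gen.f1 => ⟨F1, F1, F1_mul_F1, F1_mul_F1⟩
  | Gen.r2 => ⟨R2 m2 ℓ2, R2 m2 (-ℓ2), R2_mul_R2_neg m2 ℓ2, R2_neg_mul_R2 m2 ℓ2⟩
  | Gen.f2 => ⟨F2, F2, F2_mul_F2, F2_mul_F2⟩

lemma genMap_rels (m1 m2 : ℕ) (h1 : 1 ≤ m1) (h2 : 1 ≤ m2) (ℓ1 ℓ2 : ℤ)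
    (hodd1 : Odd ℓ1) (hodd2 : Odd ℓ2) :
    ∀ r ∈ rels m1 m2, FreeGroup.lift (genMap m1 m2 ℓ1 ℓ2) r = 1 := by
  intro r hr
  simp only [rels, Set.mem_insert_iff, Set.mem_singleton_iff] at hr
  rcases hr with rfl | rfl | rfl | rfl | rfl | rfl | rfl | rfl | rfl | rfl | rfl <;>
    simp only [_root_.map_mul, _root_.map_pow, _root_.map_inv, FreeGroup.lift_apply_of]
  · rw [mul_inv_eq_one]
    exact Units.ext (by simp [genMap, R1_pow m1 h1 ℓ1 hodd1])
  · rw [mul_inv_eq_one]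
    exact Units.ext (by simp [genMap, R2_pow m2 h2 ℓ2 hodd2])
  · exact Units.ext (by simp [genMap, pow_two, F1_mul_F1])
  · exact Units.ext (by simp [genMap, pow_two, F2_mul_F2])
  · exact Units.ext (by simp [genMap, pow_two, R1F1_sq])
  · exact Units.ext (by simp [genMap, pow_two, R2F2_sq])
  · rw [mul_inv_eq_one]
    exact Units.ext (by simp [genMap, R1R2_comm])
  · rw [mul_inv_eq_one]
    exact Units.ext (by simp [genMap, R1F2_comm])
  · rw [mul_inv_eq_one]
    exact Units.ext (by simp [genMap, R2F1_comm])
  · rw [mul_inv_eq_one]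
    exact Units.ext (by simp [genMap, pow_two, F1F2_sq])
  · exact Units.ext (by simp [genMap, pow_two])

lemma zeta_sq_ne_one (m : ℕ) (ℓ : ℤ) (h0 : 0 < ℓ) (hm : ℓ < m) :
    ζ m ^ ℓ * ζ m ^ ℓ ≠ 1 := by
  have hm0 : 0 < m := by exact_mod_cast h0.trans hm
  have hmC : (m : ℂ) ≠ 0 := Nat.cast_ne_zero.mpr hm0.ne'
  have hπ : (Real.pi : ℂ) ≠ 0 := by exact_mod_cast Real.pi_ne_zero
  have hI := Complex.I_ne_zero
  intro h
  rw [ζ, ← Complex.exp_int_mul, ← Complex.exp_add, Complex.exp_eq_one_iff] at h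
  obtain ⟨n, hn⟩ := h
  field_simp at hn
  have key : ((ℓ : ℤ) : ℂ) * (2 * (Real.pi : ℂ) * Complex.I) =
      ((n * m : ℤ) : ℂ) * (2 * (Real.pi : ℂ) * Complex.I) := by
    push_cast
    linear_combination (Real.pi : ℂ) * Complex.I * hn
  have key2 : ((ℓ : ℤ) : ℂ) = ((n * m : ℤ) : ℂ) :=
    mul_right_cancel₀ (mul_ne_zero (mul_ne_zero two_ne_zero hπ) hI) key
  have hℓ : ℓ = n * m := by exact_mod_cast key2
  rcases le_or_gt n 0 with hn0 | hn0
  · have hnm : n * (m : ℤ) ≤ 0 := mul_nonpos_of_nonpos_of_nonneg hn0 (by positivity)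
    linarith
  · have hnm : (m : ℤ) ≤ n * m := le_mul_of_one_le_left (by positivity) hn0
    linarith

lemma split_mem (α β : ℂ) (hα0 : α ≠ 0) (hβ0 : β ≠ 0) (hα : α * α ≠ 1) (hβ : β * β ≠ 1)
    (p : Submodule ℂ (Fin 4 → ℂ))
    (hp1 : ∀ v ∈ p, (Matrix.diagonal ![α, α⁻¹, α, α⁻¹]).mulVec v ∈ p)
    (hp2 : ∀ v ∈ p, (Matrix.diagonal ![β, β, β⁻¹, β⁻¹]).mulVec v ∈ p)
    (v : Fin 4 → ℂ) (hv : v ∈ p) : ∀ i : Fin 4, Pi.single i (v i) ∈ p := by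
  have hαne : α - α⁻¹ ≠ 0 := by
    intro h
    apply hα
    have h' : α = α⁻¹ := sub_eq_zero.mp h
    nth_rewrite 2 [h']
    exact mul_inv_cancel₀ hα0
  have hβne : β - β⁻¹ ≠ 0 := by
    intro h
    apply hβ
    have h' : β = β⁻¹ := sub_eq_zero.mp h
    nth_rewrite 2 [h']
    exact mul_inv_cancel₀ hβ0
  have hαne' : α⁻¹ - α ≠ 0 := by
    intro h; exact hαne (by rw [← neg_sub, h, neg_zero])
  have hβne' : β⁻¹ - β ≠ 0 := by
    intro h; exact hβne (by rw [← neg_sub, h, neg_zero])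
  have h02 : (![v 0, 0, v 2, 0] : Fin 4 → ℂ) ∈ p := by
    have hm := p.smul_mem (α - α⁻¹)⁻¹
      (p.sub_mem (hp1 v hv) (p.smul_mem α⁻¹ hv))
    have he : (α - α⁻¹)⁻¹ • ((Matrix.diagonal ![α, α⁻¹, α, α⁻¹]).mulVec v - α⁻¹ • v)
        = ![v 0, 0, v 2, 0] := by
      funext j
      fin_cases j <;>
        simp [Matrix.mulVec_diagonal, Matrix.vecHead, Matrix.vecTail, smul_eq_mul] <;>
      · rw [show ∀ x : ℂ, α * x - α⁻¹ * x = (α - α⁻¹) * x from fun x => by ring,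
          inv_mul_cancel_left₀ hαne]
    rwa [he] at hm
  have h13 : (![0, v 1, 0, v 3] : Fin 4 → ℂ) ∈ p := by
    have hm := p.smul_mem (α⁻¹ - α)⁻¹
      (p.sub_mem (hp1 v hv) (p.smul_mem α hv))
    have he : (α⁻¹ - α)⁻¹ • ((Matrix.diagonal ![α, α⁻¹, α, α⁻¹]).mulVec v - α • v)
        = ![0, v 1, 0, v 3] := by
      funext j
      fin_cases j <;>
        simp [Matrix.mulVec_diagonal, Matrix.vecHead, Matrix.vecTail, smul_eq_mul] <;>
      · rw [show ∀ x : ℂ, α⁻¹ * x - α * x = (α⁻¹ - α) * x from fun x => by ring,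
          inv_mul_cancel_left₀ hαne']
    rwa [he] at hm
  intro i
  fin_cases i
  · have hm := p.smul_mem (β - β⁻¹)⁻¹
      (p.sub_mem (hp2 _ h02) (p.smul_mem β⁻¹ h02))
    have he : (β - β⁻¹)⁻¹ • ((Matrix.diagonal ![β, β, β⁻¹, β⁻¹]).mulVec ![v 0, 0, v 2, 0]
        - β⁻¹ • ![v 0, 0, v 2, 0]) = Pi.single (0 : Fin 4) (v 0) := by
      funext j
      fin_cases j <;>
        simp [Matrix.mulVec_diagonal, Matrix.vecHead, Matrix.vecTail, smul_eq_mul,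
          Pi.single_apply] <;>
      · rw [show ∀ x : ℂ, β * x - β⁻¹ * x = (β - β⁻¹) * x from fun x => by ring,
          inv_mul_cancel_left₀ hβne]
    rwa [he] at hm
  · have hm := p.smul_mem (β - β⁻¹)⁻¹
      (p.sub_mem (hp2 _ h13) (p.smul_mem β⁻¹ h13))
    have he : (β - β⁻¹)⁻¹ • ((Matrix.diagonal ![β, β, β⁻¹, β⁻¹]).mulVec ![0, v 1, 0, v 3]
        - β⁻¹ • ![0, v 1, 0, v 3]) = Pi.single (1 : Fin 4) (v 1) := by
      funext j
      fin_cases j <;>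
        simp [Matrix.mulVec_diagonal, Matrix.vecHead, Matrix.vecTail, smul_eq_mul,
          Pi.single_apply] <;>
      · rw [show ∀ x : ℂ, β * x - β⁻¹ * x = (β - β⁻¹) * x from fun x => by ring,
          inv_mul_cancel_left₀ hβne]
    rwa [he] at hm
  · have hm := p.smul_mem (β⁻¹ - β)⁻¹
      (p.sub_mem (hp2 _ h02) (p.smul_mem β h02))
    have he : (β⁻¹ - β)⁻¹ • ((Matrix.diagonal ![β, β, β⁻¹, β⁻¹]).mulVec ![v 0, 0, v 2, 0]
        - β • ![v 0, 0, v 2, 0]) = Pi.single (2 : Fin 4) (v 2) := by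
      funext j
      fin_cases j <;>
        simp [Matrix.mulVec_diagonal, Matrix.vecHead, Matrix.vecTail, smul_eq_mul,
          Pi.single_apply] <;>
      · rw [show ∀ x : ℂ, β⁻¹ * x - β * x = (β⁻¹ - β) * x from fun x => by ring,
          inv_mul_cancel_left₀ hβne']
    rwa [he] at hm
  · have hm := p.smul_mem (β⁻¹ - β)⁻¹
      (p.sub_mem (hp2 _ h13) (p.smul_mem β h13))
    have he : (β⁻¹ - β)⁻¹ • ((Matrix.diagonal ![β, β, β⁻¹, β⁻¹]).mulVec ![0, v 1, 0, v 3]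
        - β • ![0, v 1, 0, v 3]) = Pi.single (3 : Fin 4) (v 3) := by
      funext j
      fin_cases j <;>
        simp [Matrix.mulVec_diagonal, Matrix.vecHead, Matrix.vecTail, smul_eq_mul,
          Pi.single_apply] <;>
      · rw [show ∀ x : ℂ, β⁻¹ * x - β * x = (β⁻¹ - β) * x from fun x => by ring,
          inv_mul_cancel_left₀ hβne']
    rwa [he] at hm

end Aux

/-- For odd integers `ℓ1, ℓ2`, the matrix assignments of `U(ℓ1,ℓ2)` respect the defining
relations of `W̃(m1,m2)` and hence define a representation `W̃(m1,m2) → GL(ℂ⁴)` in which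
`z` acts as `-Id`; moreover if `0 < ℓ1 < m1` and `0 < ℓ2 < m2` this representation is
irreducible. -/
theorem U4_exists_and_irreducible (m1 m2 : ℕ) (h1 : 1 ≤ m1) (h2 : 1 ≤ m2)
    (ℓ1 ℓ2 : ℤ) (hodd1 : Odd ℓ1) (hodd2 : Odd ℓ2) :
    ∃ ρ : Wt m1 m2 →* GL (Fin 4) ℂ, IsU4 m1 m2 ℓ1 ℓ2 ρ ∧
      ((0 < ℓ1 ∧ ℓ1 < m1 ∧ 0 < ℓ2 ∧ ℓ2 < m2) → Irreducible4 ρ) := by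
  refine ⟨PresentedGroup.toGroup (genMap_rels m1 m2 h1 h2 ℓ1 ℓ2 hodd1 hodd2), ?_, ?_⟩
  · refine ⟨?_, ?_, ?_, ?_, ?_⟩ <;>
      simp [wf1, wf2, wr1, wr2, wz, PresentedGroup.toGroup.of, genMap]
  rintro ⟨hl1, hl1m, hl2, hl2m⟩ p hp
  by_cases hbot : p = ⊥
  · exact Or.inl hbot
  right
  have hf1 : ((PresentedGroup.toGroup (genMap_rels m1 m2 h1 h2 ℓ1 ℓ2 hodd1 hodd2))
      (wf1 m1 m2) : Matrix (Fin 4) (Fin 4) ℂ) = F1 := by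
    simp [wf1, PresentedGroup.toGroup.of, genMap]
  have hf2 : ((PresentedGroup.toGroup (genMap_rels m1 m2 h1 h2 ℓ1 ℓ2 hodd1 hodd2))
      (wf2 m1 m2) : Matrix (Fin 4) (Fin 4) ℂ) = F2 := by
    simp [wf2, PresentedGroup.toGroup.of, genMap]
  have hr1 : ((PresentedGroup.toGroup (genMap_rels m1 m2 h1 h2 ℓ1 ℓ2 hodd1 hodd2))
      (wr1 m1 m2) : Matrix (Fin 4) (Fin 4) ℂ) = R1 m1 ℓ1 := by
    simp [wr1, PresentedGroup.toGroup.of, genMap]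
  have hr2 : ((PresentedGroup.toGroup (genMap_rels m1 m2 h1 h2 ℓ1 ℓ2 hodd1 hodd2))
      (wr2 m1 m2) : Matrix (Fin 4) (Fin 4) ℂ) = R2 m2 ℓ2 := by
    simp [wr2, PresentedGroup.toGroup.of, genMap]
  obtain ⟨v, hv, hvne⟩ : ∃ v ∈ p, v ≠ (0 : Fin 4 → ℂ) := by
    by_contra hcon
    push_neg at hcon
    exact hbot ((Submodule.eq_bot_iff p).mpr hcon)
  obtain ⟨i, hi⟩ : ∃ i, v i ≠ 0 := by
    by_contra hcon
    push_neg at hcon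
    exact hvne (funext hcon)
  have hα0 : ζ m1 ^ ℓ1 ≠ 0 := zeta_zpow_ne_zero m1 ℓ1
  have hβ0 : ζ m2 ^ ℓ2 ≠ 0 := zeta_zpow_ne_zero m2 ℓ2
  have hαsq := zeta_sq_ne_one m1 ℓ1 hl1 hl1m
  have hβsq := zeta_sq_ne_one m2 ℓ2 hl2 hl2m
  have hp1 : ∀ w ∈ p, (Matrix.diagonal
      ![ζ m1 ^ ℓ1, (ζ m1 ^ ℓ1)⁻¹, ζ m1 ^ ℓ1, (ζ m1 ^ ℓ1)⁻¹]).mulVec w ∈ p := by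
    intro w hw
    have hmem := hp (wr1 m1 m2) w hw
    rw [hr1, R1] at hmem
    simpa [_root_.zpow_neg] using hmem
  have hp2 : ∀ w ∈ p, (Matrix.diagonal
      ![ζ m2 ^ ℓ2, ζ m2 ^ ℓ2, (ζ m2 ^ ℓ2)⁻¹, (ζ m2 ^ ℓ2)⁻¹]).mulVec w ∈ p := by
    intro w hw
    have hmem := hp (wr2 m1 m2) w hw
    rw [hr2, R2] at hmem
    simpa [_root_.zpow_neg] using hmem
  have hsingle := split_mem _ _ hα0 hβ0 hαsq hβsq p hp1 hp2 v hv
  have hF1m : ∀ w ∈ p, F1.mulVec w ∈ p := by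
    intro w hw
    have hmem := hp (wf1 m1 m2) w hw
    rwa [hf1] at hmem
  have hF2m : ∀ w ∈ p, F2.mulVec w ∈ p := by
    intro w hw
    have hmem := hp (wf2 m1 m2) w hw
    rwa [hf2] at hmem
  have hEi : Pi.single i (1 : ℂ) ∈ p := by
    have hmem := p.smul_mem (v i)⁻¹ (hsingle i)
    have he : (v i)⁻¹ • (Pi.single i (v i) : Fin 4 → ℂ) = Pi.single i (1 : ℂ) := by
      funext j
      by_cases hj : j = i
      · subst hj; simp [inv_mul_cancel₀ hi]
      · simp [Pi.single_eq_of_ne hj]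
    rwa [he] at hmem
  have mA : F1.mulVec (Pi.single (1 : Fin 4) (1 : ℂ)) = Pi.single (0 : Fin 4) (1 : ℂ) := by
    rw [Matrix.mulVec_single]
    funext j; fin_cases j <;> simp [F1, Pi.single_apply, Matrix.vecHead, Matrix.vecTail]
  have mB : F2.mulVec (Pi.single (2 : Fin 4) (1 : ℂ)) = Pi.single (0 : Fin 4) (1 : ℂ) := by
    rw [Matrix.mulVec_single]
    funext j; fin_cases j <;> simp [F2, Pi.single_apply, Matrix.vecHead, Matrix.vecTail]
  have mC : F2.mulVec (Pi.single (3 : Fin 4) (1 : ℂ)) = -Pi.single (1 : Fin 4) (1 : ℂ) := by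
    rw [Matrix.mulVec_single]
    funext j; fin_cases j <;> simp [F2, Pi.single_apply, Matrix.vecHead, Matrix.vecTail]
  have mD : F1.mulVec (Pi.single (0 : Fin 4) (1 : ℂ)) = Pi.single (1 : Fin 4) (1 : ℂ) := by
    rw [Matrix.mulVec_single]
    funext j; fin_cases j <;> simp [F1, Pi.single_apply, Matrix.vecHead, Matrix.vecTail]
  have mE : F2.mulVec (Pi.single (0 : Fin 4) (1 : ℂ)) = Pi.single (2 : Fin 4) (1 : ℂ) := by
    rw [Matrix.mulVec_single]
    funext j; fin_cases j <;> simp [F2, Pi.single_apply, Matrix.vecHead, Matrix.vecTail]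
  have mF : F1.mulVec (Pi.single (2 : Fin 4) (1 : ℂ)) = Pi.single (3 : Fin 4) (1 : ℂ) := by
    rw [Matrix.mulVec_single]
    funext j; fin_cases j <;> simp [F1, Pi.single_apply, Matrix.vecHead, Matrix.vecTail]
  have hi4 : i = 0 ∨ i = 1 ∨ i = 2 ∨ i = 3 := by
    rcases (by decide : ∀ k : Fin 4, k = 0 ∨ k = 1 ∨ k = 2 ∨ k = 3) i with h | h | h | h <;> tauto
  have hE0 : Pi.single (0 : Fin 4) (1 : ℂ) ∈ p := by
    rcases hi4 with rfl | rfl | rfl | rfl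
    · exact hEi
    · have hmem := hF1m _ hEi; rwa [mA] at hmem
    · have hmem := hF2m _ hEi; rwa [mB] at hmem
    · have h3 := hF2m _ hEi
      rw [mC] at h3
      have h1' := p.neg_mem h3
      rw [neg_neg] at h1'
      have hmem := hF1m _ h1'
      rwa [mA] at hmem
  have hE1 : Pi.single (1 : Fin 4) (1 : ℂ) ∈ p := by
    have hmem := hF1m _ hE0; rwa [mD] at hmem
  have hE2 : Pi.single (2 : Fin 4) (1 : ℂ) ∈ p := by
    have hmem := hF2m _ hE0; rwa [mE] at hmem
  have hE3 : Pi.single (3 : Fin 4) (1 : ℂ) ∈ p := by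
    have hmem := hF1m _ hE2; rwa [mF] at hmem
  rw [Submodule.eq_top_iff']
  intro x
  have hx : x = x 0 • (Pi.single (0 : Fin 4) (1 : ℂ) : Fin 4 → ℂ)
      + x 1 • (Pi.single (1 : Fin 4) (1 : ℂ) : Fin 4 → ℂ)
      + x 2 • (Pi.single (2 : Fin 4) (1 : ℂ) : Fin 4 → ℂ)
      + x 3 • (Pi.single (3 : Fin 4) (1 : ℂ) : Fin 4 → ℂ) := by
    funext j
    fin_cases j <;> simp [Pi.single_apply]
  rw [hx]
  exact p.add_mem (p.add_mem (p.add_mem (p.smul_mem _ hE0) (p.smul_mem _ hE1))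
    (p.smul_mem _ hE2)) (p.smul_mem _ hE3)

end Stmt5
end

section
/- Let W̃ = W̃(m1,m2) with m2 odd, and let ℓ1 be an odd integer with 0 < ℓ1 < 2m1. The assignments f1 ↦ [[0,1],[1,0]], f2 ↦ diag(1,−1), r1 ↦ diag(ζ1^{ℓ1}, ζ1^{−ℓ1}), r2 ↦ −Id₂, z ↦ −Id₂ respect all defining relations of W̃ and hence define a 2-dimensional representation U(ℓ1, m2) : W̃ → GL(ℂ²) on which z acts as −Id; moreover this representation is irreducible. -/
namespace Stmt9

/-- Generators of the double cover `W̃(m1, m2)`. -/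
inductive Gen | z | r1 | f1 | r2 | f2

open FreeGroup in
/-- Defining relations of `W̃(m1, m2)`:
`r1^{m1} = z`, `r2^{m2} = z`, `f1^2 = 1`, `f2^2 = 1`, `(r1 f1)^2 = 1`, `(r2 f2)^2 = 1`,
`r1 r2 = r2 r1`, `r1 f2 = f2 r1`, `r2 f1 = f1 r2`, `(f1 f2)^2 = z`, `z^2 = 1`. -/
def rels (m1 m2 : ℕ) : Set (FreeGroup Gen) :=
  { of Gen.r1 ^ m1 * (of Gen.z)⁻¹,
    of Gen.r2 ^ m2 * (of Gen.z)⁻¹,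
    of Gen.f1 ^ 2,
    of Gen.f2 ^ 2,
    (of Gen.r1 * of Gen.f1) ^ 2,
    (of Gen.r2 * of Gen.f2) ^ 2,
    of Gen.r1 * of Gen.r2 * (of Gen.r2 * of Gen.r1)⁻¹,
    of Gen.r1 * of Gen.f2 * (of Gen.f2 * of Gen.r1)⁻¹,
    of Gen.r2 * of Gen.f1 * (of Gen.f1 * of Gen.r2)⁻¹,
    (of Gen.f1 * of Gen.f2) ^ 2 * (of Gen.z)⁻¹,
    of Gen.z ^ 2 }

/-- The double cover `W̃(m1, m2)` of `D_{2m1} × D_{2m2}`, as a presented group. -/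
abbrev Wt (m1 m2 : ℕ) := PresentedGroup (rels m1 m2)

def wz (m1 m2 : ℕ) : Wt m1 m2 := PresentedGroup.of Gen.z
def wr1 (m1 m2 : ℕ) : Wt m1 m2 := PresentedGroup.of Gen.r1
def wf1 (m1 m2 : ℕ) : Wt m1 m2 := PresentedGroup.of Gen.f1
def wr2 (m1 m2 : ℕ) : Wt m1 m2 := PresentedGroup.of Gen.r2
def wf2 (m1 m2 : ℕ) : Wt m1 m2 := PresentedGroup.of Gen.f2

/-- `ζ m = exp(i π / m)`. -/
noncomputable def ζ (m : ℕ) : ℂ := Complex.exp (Real.pi * Complex.I / m)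

/-- Irreducibility of a 2-dimensional matrix representation of `W̃(m1,m2)`. -/
def Irreducible2 {m1 m2 : ℕ} (ρ : Wt m1 m2 →* GL (Fin 2) ℂ) : Prop :=
  ∀ p : Submodule ℂ (Fin 2 → ℂ),
    (∀ w : Wt m1 m2, ∀ v ∈ p, Matrix.mulVec (ρ w : Matrix (Fin 2) (Fin 2) ℂ) v ∈ p) →
    p = ⊥ ∨ p = ⊤

lemma zeta_ne (m : ℕ) : ζ m ≠ 0 := Complex.exp_ne_zero _

lemma zeta_pow (m : ℕ) (h : 1 ≤ m) : ζ m ^ m = -1 := by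
  rw [ζ, ← Complex.exp_nat_mul]
  have hm : (m:ℂ) ≠ 0 := Nat.cast_ne_zero.2 (by omega)
  rw [show (m:ℂ) * (Real.pi * Complex.I / m) = Real.pi * Complex.I by field_simp]
  exact Complex.exp_pi_mul_I

lemma zeta_zpow_pow (m : ℕ) (h : 1 ≤ m) (ℓ : ℤ) (hodd : Odd ℓ) :
    (ζ m ^ ℓ) ^ m = -1 := by
  rw [← zpow_natCast (ζ m ^ ℓ) m, ← zpow_mul, mul_comm, zpow_mul, zpow_natCast,
    zeta_pow m h, hodd.neg_one_zpow]

lemma diag2 (x y : ℂ) : Matrix.diagonal ![x, y] = !![x,0;0,y] := by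
  ext i j; fin_cases i <;> fin_cases j <;> simp [Matrix.diagonal]

lemma mulVec_F1 (v : Fin 2 → ℂ) : Matrix.mulVec !![(0:ℂ),1;1,0] v = ![v 1, v 0] := by
  ext i; fin_cases i <;> simp [Matrix.mulVec, dotProduct, Fin.sum_univ_two]

lemma mulVec_F2 (v : Fin 2 → ℂ) : Matrix.mulVec !![(1:ℂ),0;0,-1] v = ![v 0, -v 1] := by
  ext i; fin_cases i <;> simp [Matrix.mulVec, dotProduct, Fin.sum_univ_two]


lemma diagPow (x y : ℂ) (n : ℕ) : (!![x,0;0,y]) ^ n = !![x^n,0;0,y^n] := by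
  induction n with
  | zero => simp [Matrix.one_fin_two]
  | succ n ih => rw [pow_succ, ih, Matrix.mul_fin_two]; simp [pow_succ]

lemma negOne2 : (-1 : Matrix (Fin 2) (Fin 2) ℂ) = !![-1,0;0,-1] := by
  simp [Matrix.one_fin_two]

def F1u : (Matrix (Fin 2) (Fin 2) ℂ)ˣ :=
  ⟨!![0,1;1,0], !![0,1;1,0],
    by simp [Matrix.mul_fin_two, Matrix.one_fin_two],
    by simp [Matrix.mul_fin_two, Matrix.one_fin_two]⟩

def F2u : (Matrix (Fin 2) (Fin 2) ℂ)ˣ :=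
  ⟨!![1,0;0,-1], !![1,0;0,-1],
    by simp [Matrix.mul_fin_two, Matrix.one_fin_two],
    by simp [Matrix.mul_fin_two, Matrix.one_fin_two]⟩

def Zu : (Matrix (Fin 2) (Fin 2) ℂ)ˣ := ⟨-1, -1, by simp, by simp⟩

noncomputable def R1u (a : ℂ) (ha : a ≠ 0) : (Matrix (Fin 2) (Fin 2) ℂ)ˣ :=
  ⟨!![a,0;0,a⁻¹], !![a⁻¹,0;0,a],
    by simp [Matrix.mul_fin_two, Matrix.one_fin_two, mul_inv_cancel₀ ha, inv_mul_cancel₀ ha],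
    by simp [Matrix.mul_fin_two, Matrix.one_fin_two, mul_inv_cancel₀ ha, inv_mul_cancel₀ ha]⟩

variable (a : ℂ) (ha : a ≠ 0)

lemma L1 (m1 : ℕ) (hapow : a ^ m1 = -1) : R1u a ha ^ m1 = Zu := by
  apply Units.ext
  rw [Units.val_pow_eq_pow_val]
  show (!![a,0;0,a⁻¹]) ^ m1 = -1
  rw [diagPow, hapow, inv_pow, hapow, negOne2]
  norm_num

lemma L2 (m2 : ℕ) (hm2 : Odd m2) : Zu ^ m2 = Zu := by
  apply Units.ext
  rw [Units.val_pow_eq_pow_val]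
  show (-1 : Matrix (Fin 2) (Fin 2) ℂ) ^ m2 = -1
  exact hm2.neg_one_pow

lemma LF1 : F1u ^ 2 = 1 := by
  apply Units.ext
  rw [Units.val_pow_eq_pow_val]
  show (!![(0:ℂ),1;1,0]) ^ 2 = 1
  rw [sq, Matrix.mul_fin_two, Matrix.one_fin_two]; norm_num

lemma LF2 : F2u ^ 2 = 1 := by
  apply Units.ext
  rw [Units.val_pow_eq_pow_val]
  show (!![(1:ℂ),0;0,-1]) ^ 2 = 1
  rw [sq, Matrix.mul_fin_two, Matrix.one_fin_two]; norm_num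

lemma LZ2 : Zu ^ 2 = 1 := by
  apply Units.ext
  rw [Units.val_pow_eq_pow_val]
  show (-1 : Matrix (Fin 2) (Fin 2) ℂ) ^ 2 = 1
  rw [neg_one_sq]

lemma LRF1 : (R1u a ha * F1u) ^ 2 = 1 := by
  apply Units.ext
  rw [Units.val_pow_eq_pow_val, Units.val_mul]
  show (!![a,0;0,a⁻¹] * !![0,1;1,0]) ^ 2 = 1
  rw [Matrix.mul_fin_two, sq, Matrix.mul_fin_two, Matrix.one_fin_two]
  norm_num [mul_inv_cancel₀ ha, inv_mul_cancel₀ ha]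

lemma LRF2 : (Zu * F2u) ^ 2 = 1 := by
  apply Units.ext
  rw [Units.val_pow_eq_pow_val, Units.val_mul]
  show ((-1 : Matrix (Fin 2) (Fin 2) ℂ) * !![1,0;0,-1]) ^ 2 = 1
  rw [neg_one_mul, neg_sq, sq, Matrix.mul_fin_two, Matrix.one_fin_two]
  norm_num

lemma Lc1 : R1u a ha * Zu = Zu * R1u a ha := by
  apply Units.ext
  rw [Units.val_mul, Units.val_mul]
  show (!![a,0;0,a⁻¹] : Matrix (Fin 2) (Fin 2) ℂ) * (-1) = -1 * !![a,0;0,a⁻¹]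
  rw [mul_neg_one, neg_one_mul]

lemma Lc2 : R1u a ha * F2u = F2u * R1u a ha := by
  apply Units.ext
  rw [Units.val_mul, Units.val_mul]
  show !![a,0;0,a⁻¹] * !![(1:ℂ),0;0,-1] = !![(1:ℂ),0;0,-1] * !![a,0;0,a⁻¹]
  rw [Matrix.mul_fin_two, Matrix.mul_fin_two]; ring_nf

lemma Lc3 : Zu * F1u = F1u * Zu := by
  apply Units.ext
  rw [Units.val_mul, Units.val_mul]
  show (-1 : Matrix (Fin 2) (Fin 2) ℂ) * !![0,1;1,0] = !![(0:ℂ),1;1,0] * (-1)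
  rw [mul_neg_one, neg_one_mul]

lemma LFF : (F1u * F2u) ^ 2 = Zu := by
  apply Units.ext
  rw [Units.val_pow_eq_pow_val, Units.val_mul]
  show (!![(0:ℂ),1;1,0] * !![1,0;0,-1]) ^ 2 = -1
  rw [Matrix.mul_fin_two, sq, Matrix.mul_fin_two, negOne2]
  norm_num

noncomputable def fgen (a : ℂ) (ha : a ≠ 0) : Gen → GL (Fin 2) ℂ
  | Gen.z => Zu
  | Gen.r1 => R1u a ha
  | Gen.f1 => F1u
  | Gen.r2 => Zu
  | Gen.f2 => F2u

/-- For `m2` odd and `ℓ1` odd with `0 < ℓ1 < 2 m1`, the assignments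
`f1 ↦ [[0,1],[1,0]]`, `f2 ↦ diag(1,−1)`, `r1 ↦ diag(ζ1^{ℓ1}, ζ1^{−ℓ1})`, `r2 ↦ −Id`,
`z ↦ −Id` respect the defining relations of `W̃(m1,m2)` and define a 2-dimensional
representation `U(ℓ1, m2)` on which `z` acts as `−Id`; moreover it is irreducible. -/
theorem U2_second_exists_and_irreducible (m1 m2 : ℕ) (h1 : 1 ≤ m1) (h2 : 1 ≤ m2)
    (hm2 : Odd m2) (ℓ1 : ℤ) (hodd1 : Odd ℓ1) (hr1 : 0 < ℓ1) (hr1m : ℓ1 < 2 * m1) :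
    ∃ ρ : Wt m1 m2 →* GL (Fin 2) ℂ,
      (ρ (wf1 m1 m2) : Matrix (Fin 2) (Fin 2) ℂ) = !![0, 1; 1, 0] ∧
      (ρ (wf2 m1 m2) : Matrix (Fin 2) (Fin 2) ℂ) = !![1, 0; 0, -1] ∧
      (ρ (wr1 m1 m2) : Matrix (Fin 2) (Fin 2) ℂ)
        = Matrix.diagonal ![ζ m1 ^ ℓ1, ζ m1 ^ (-ℓ1)] ∧
      (ρ (wr2 m1 m2) : Matrix (Fin 2) (Fin 2) ℂ) = -1 ∧
      (ρ (wz m1 m2) : Matrix (Fin 2) (Fin 2) ℂ) = -1 ∧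
      Irreducible2 ρ := by
  have ha : ζ m1 ^ ℓ1 ≠ 0 := zpow_ne_zero _ (zeta_ne m1)
  have hapow : (ζ m1 ^ ℓ1) ^ m1 = -1 := zeta_zpow_pow m1 h1 ℓ1 hodd1
  have hrel : ∀ r ∈ rels m1 m2, FreeGroup.lift (fgen (ζ m1 ^ ℓ1) ha) r = 1 := by
    intro r hr
    simp only [rels, Set.mem_insert_iff, Set.mem_singleton_iff] at hr
    rcases hr with h | h | h | h | h | h | h | h | h | h | h <;> subst h <;>
      simp only [map_mul, map_pow, map_inv, FreeGroup.lift_apply_of, fgen]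
    · rw [mul_inv_eq_one]; exact L1 _ ha m1 hapow
    · rw [mul_inv_eq_one]; exact L2 m2 hm2
    · exact LF1
    · exact LF2
    · exact LRF1 _ ha
    · exact LRF2
    · rw [mul_inv_eq_one]; exact Lc1 _ ha
    · rw [mul_inv_eq_one]; exact Lc2 _ ha
    · rw [mul_inv_eq_one]; exact (Lc3).symm ▸ rfl
    · rw [mul_inv_eq_one]; exact LFF
    · exact LZ2
  set ρ : Wt m1 m2 →* GL (Fin 2) ℂ := PresentedGroup.toGroup hrel with hρ
  have hmf1 : (ρ (wf1 m1 m2) : Matrix (Fin 2) (Fin 2) ℂ) = !![0,1;1,0] := by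
    rw [hρ, wf1, PresentedGroup.toGroup.of]; rfl
  have hmf2 : (ρ (wf2 m1 m2) : Matrix (Fin 2) (Fin 2) ℂ) = !![1,0;0,-1] := by
    rw [hρ, wf2, PresentedGroup.toGroup.of]; rfl
  refine ⟨ρ, hmf1, hmf2, ?_, ?_, ?_, ?_⟩
  · rw [hρ, wr1, PresentedGroup.toGroup.of]
    show (R1u (ζ m1 ^ ℓ1) ha : Matrix (Fin 2) (Fin 2) ℂ) = _
    rw [diag2, zpow_neg]; rfl
  · rw [hρ, wr2, PresentedGroup.toGroup.of]; rfl
  · rw [hρ, wz, PresentedGroup.toGroup.of]; rfl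
  · intro p hp
    by_cases hbot : p = ⊥
    · exact Or.inl hbot
    right
    obtain ⟨v, hv, hv0⟩ := (Submodule.ne_bot_iff p).mp hbot
    have hF1 : ∀ u ∈ p, Matrix.mulVec !![(0:ℂ),1;1,0] u ∈ p := by
      intro u hu
      have := hp (wf1 m1 m2) u hu
      rwa [hmf1] at this
    have hF2 : ∀ u ∈ p, Matrix.mulVec !![(1:ℂ),0;0,-1] u ∈ p := by
      intro u hu
      have := hp (wf2 m1 m2) u hu
      rwa [hmf2] at this
    have he : (![1,0] : Fin 2 → ℂ) ∈ p ∧ (![0,1] : Fin 2 → ℂ) ∈ p := by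
      have hw1 : v + Matrix.mulVec !![(1:ℂ),0;0,-1] v ∈ p := p.add_mem hv (hF2 v hv)
      have hw2 : v - Matrix.mulVec !![(1:ℂ),0;0,-1] v ∈ p := p.sub_mem hv (hF2 v hv)
      rw [mulVec_F2] at hw1 hw2
      have he1 : v + ![v 0, -v 1] = (2 * v 0) • ![1,0] := by
        funext i; fin_cases i <;> simp <;> ring
      have he2 : v - ![v 0, -v 1] = (2 * v 1) • ![0,1] := by
        funext i; fin_cases i <;> simp <;> ring
      rw [he1] at hw1; rw [he2] at hw2
      have hcase : v 0 ≠ 0 ∨ v 1 ≠ 0 := by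
        by_contra hcon
        push_neg at hcon
        exact hv0 (funext fun i => by fin_cases i <;> simp [hcon.1, hcon.2])
      rcases hcase with h0 | h0
      · have hne : (2 * v 0) ≠ 0 := by simp [h0]
        have hb : (![1,0] : Fin 2 → ℂ) ∈ p := by
          have := p.smul_mem (2 * v 0)⁻¹ hw1
          rwa [smul_smul, inv_mul_cancel₀ hne, one_smul] at this
        refine ⟨hb, ?_⟩
        have := hF1 _ hb
        rwa [mulVec_F1] at this
      · have hne : (2 * v 1) ≠ 0 := by simp [h0]
        have hb : (![0,1] : Fin 2 → ℂ) ∈ p := by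
          have := p.smul_mem (2 * v 1)⁻¹ hw2
          rwa [smul_smul, inv_mul_cancel₀ hne, one_smul] at this
        refine ⟨?_, hb⟩
        have := hF1 _ hb
        rwa [mulVec_F1] at this
    rw [eq_top_iff]
    intro x _
    have hx : x = x 0 • ![1,0] + x 1 • ![0,1] := by
      funext i; fin_cases i <;> simp
    rw [hx]
    exact p.add_mem (p.smul_mem _ he.1) (p.smul_mem _ he.2)

end Stmt9
end
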